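/- arXiv:1604.04936 — 5 statements merged into one kernel-verified Lean document; each statement's English description precedes it below -/
import Mathlib

section
/- Let β ∈ [0,1), λ = 1−β, and let n satisfy Assumption 1 with δ* = 0 (subexponential wild-type growth). Then for every integer k ≥ 1, lim_{t→∞} (1/n_t)·∫_0^t n_τ·P(Z_{t−τ} = k) dτ = 1/k; equivalently P(Y_t = k) ∼ n_t/(a_t·k) as t → ∞. -/
open Filter Real intervalIntegral MeasureTheory Set Topology

set_option maxHeartbeats 1000000

/-- Assumption 1 on the wild-type growth function `n`. -/
def Assumption1 (n : ℝ → ℝ) : Prop :=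
  (∀ τ : ℝ, τ < 0 → n τ = 0) ∧
  ContinuousOn n (Set.Ioi 0) ∧
  Filter.Tendsto n (nhdsWithin 0 (Set.Ioi 0)) (nhds (n 0)) ∧
  (∀ τ : ℝ, 0 < τ → 0 < n τ) ∧
  MonotoneOn n (Set.Ioi 0) ∧
  (∀ x : ℝ, 0 ≤ x → ∃ L : ℝ, 0 < L ∧
    Filter.Tendsto (fun t : ℝ => n (t - x) / n t) Filter.atTop (nhds L))

/-- `S u = (1 - β e^{-λu})/(1 - e^{-λu})` with `λ = 1 - β`. -/
noncomputable def birthDeathS (β u : ℝ) : ℝ :=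
  (1 - β * Real.exp (-(1 - β) * u)) / (1 - Real.exp (-(1 - β) * u))

/-- `P(Z_u = k) = (1 - β/S_u)(S_u - 1) S_u^{-k}` for `k ≥ 1`. -/
noncomputable def birthDeathPMF (β u : ℝ) (k : ℕ) : ℝ :=
  (1 - β / birthDeathS β u) * (birthDeathS β u - 1) * ((birthDeathS β u)⁻¹) ^ k

namespace CloneAux

noncomputable def sfun (β u : ℝ) : ℝ :=
  (1 - Real.exp (-(1 - β) * u)) / (1 - β * Real.exp (-(1 - β) * u))

lemma pmf_eq {β : ℝ} (hβ0 : 0 ≤ β) (hβ1 : β < 1) {u : ℝ} (hu : 0 < u) (m : ℕ) :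
    birthDeathPMF β u (m + 1) =
      (1 - β) ^ 2 * Real.exp (-(1 - β) * u) * (1 - Real.exp (-(1 - β) * u)) ^ m
        / (1 - β * Real.exp (-(1 - β) * u)) ^ (m + 2) := by
  set X := Real.exp (-(1 - β) * u) with hXdef
  have hX0 : 0 < X := Real.exp_pos _
  have hX1 : X < 1 := by
    rw [hXdef, Real.exp_lt_one_iff]
    nlinarith
  have hf : (0:ℝ) < 1 - X := by linarith
  have hg : (0:ℝ) < 1 - β * X := by nlinarith
  have hS : birthDeathS β u = (1 - β * X) / (1 - X) := rfl
  unfold birthDeathPMF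
  rw [hS]
  rw [inv_div, div_pow]
  field_simp
  ring

lemma pmf_nonneg {β : ℝ} (hβ0 : 0 ≤ β) (hβ1 : β < 1) {u : ℝ} (hu : 0 < u) (m : ℕ) :
    0 ≤ birthDeathPMF β u (m + 1) := by
  rw [pmf_eq hβ0 hβ1 hu m]
  have hX0 : 0 < Real.exp (-(1 - β) * u) := Real.exp_pos _
  have hX1 : Real.exp (-(1 - β) * u) < 1 := by
    rw [Real.exp_lt_one_iff]; nlinarith
  have hg : (0:ℝ) < 1 - β * Real.exp (-(1 - β) * u) := by nlinarith
  apply div_nonneg _ (le_of_lt (by positivity))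
  have : (0:ℝ) ≤ 1 - Real.exp (-(1 - β) * u) := by linarith
  positivity

lemma hasDerivAt_sfun {β : ℝ} (hβ0 : 0 ≤ β) (hβ1 : β < 1) {u : ℝ} (hu : 0 < u) :
    HasDerivAt (sfun β)
      ((1 - β) ^ 2 * Real.exp (-(1 - β) * u) / (1 - β * Real.exp (-(1 - β) * u)) ^ 2) u := by
  have hX0 : 0 < Real.exp (-(1 - β) * u) := Real.exp_pos _
  have hX1 : Real.exp (-(1 - β) * u) < 1 := by
    rw [Real.exp_lt_one_iff]; nlinarith
  have hg : (0:ℝ) < 1 - β * Real.exp (-(1 - β) * u) := by nlinarith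
  have h1 : HasDerivAt (fun v : ℝ => -(1 - β) * v) (-(1 - β)) u := by
    simpa using (hasDerivAt_id u).const_mul (-(1 - β))
  have hexp : HasDerivAt (fun v : ℝ => Real.exp (-(1 - β) * v))
      (Real.exp (-(1 - β) * u) * -(1 - β)) u := h1.exp
  have hnum : HasDerivAt (fun v : ℝ => 1 - Real.exp (-(1 - β) * v))
      ((1 - β) * Real.exp (-(1 - β) * u)) u := by
    have := (hasDerivAt_const u (1:ℝ)).sub hexp
    exact this.congr_deriv (by ring)
  have hden : HasDerivAt (fun v : ℝ => 1 - β * Real.exp (-(1 - β) * v))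
      (β * (1 - β) * Real.exp (-(1 - β) * u)) u := by
    have := (hasDerivAt_const u (1:ℝ)).sub (hexp.const_mul β)
    exact this.congr_deriv (by ring)
  have := hnum.div hden (ne_of_gt hg)
  refine this.congr_deriv ?_
  field_simp
  ring

lemma tendsto_X {β : ℝ} (hβ1 : β < 1) :
    Tendsto (fun u : ℝ => Real.exp (-(1 - β) * u)) atTop (𝓝 0) := by
  have h1 : Tendsto (fun u : ℝ => (1 - β) * u) atTop atTop :=
    Tendsto.const_mul_atTop (by linarith) tendsto_id
  exact (Real.tendsto_exp_neg_atTop_nhds_zero.comp h1).congr fun u => by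
    simp only [Function.comp_apply]
    congr 1
    ring

lemma tendsto_sfun {β : ℝ} (hβ1 : β < 1) : Tendsto (sfun β) atTop (𝓝 1) := by
  have hX := tendsto_X hβ1
  have hnum : Tendsto (fun u : ℝ => 1 - Real.exp (-(1 - β) * u)) atTop (𝓝 1) := by
    simpa using tendsto_const_nhds.sub hX
  have hden : Tendsto (fun u : ℝ => 1 - β * Real.exp (-(1 - β) * u)) atTop (𝓝 1) := by
    simpa using tendsto_const_nhds.sub (hX.const_mul β)
  have := hnum.div hden one_ne_zero
  have h2 : Tendsto (sfun β) atTop (𝓝 (1 / 1)) := this.congr fun u => rfl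
  simpa using h2

lemma continuousAt_sfun {β : ℝ} (hβ1 : β < 1) : ContinuousAt (sfun β) 0 := by
  have hden : (1 : ℝ) - β * Real.exp (-(1 - β) * 0) ≠ 0 := by
    simp; linarith
  exact ContinuousAt.div
    (by fun_prop) (by fun_prop) hden

lemma sfun_zero (β : ℝ) : sfun β 0 = 0 := by simp [sfun]

lemma aux_alg (c A B D : ℝ) (hc : c ≠ 0) (hB : B ≠ 0) (m : ℕ) :
    c⁻¹ * (c * (A / B) ^ m * (D / B ^ 2)) = D * A ^ m / B ^ (m + 2) := by
  rw [div_pow]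
  field_simp
  ring

lemma hasDerivAt_G {β : ℝ} (hβ0 : 0 ≤ β) (hβ1 : β < 1) (m : ℕ) {u : ℝ} (hu : 0 < u) :
    HasDerivAt (fun v => ((m : ℝ) + 1)⁻¹ * sfun β v ^ (m + 1)) (birthDeathPMF β u (m + 1)) u := by
  have hX0 : 0 < Real.exp (-(1 - β) * u) := Real.exp_pos _
  have hX1 : Real.exp (-(1 - β) * u) < 1 := by
    rw [Real.exp_lt_one_iff]; nlinarith
  have hg : (0:ℝ) < 1 - β * Real.exp (-(1 - β) * u) := by nlinarith
  have hpow := ((hasDerivAt_sfun hβ0 hβ1 hu).pow (m + 1)).const_mul ((m : ℝ) + 1)⁻¹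
  refine hpow.congr_deriv ?_
  symm
  rw [pmf_eq hβ0 hβ1 hu m]
  have hm : ((m : ℝ) + 1) ≠ 0 := by positivity
  simp only [Nat.add_sub_cancel, sfun, Nat.cast_add, Nat.cast_one]
  rw [aux_alg ((m : ℝ) + 1) (1 - Real.exp (-(1 - β) * u)) (1 - β * Real.exp (-(1 - β) * u))
    ((1 - β) ^ 2 * Real.exp (-(1 - β) * u)) hm (ne_of_gt hg) m]

lemma integrableOn_pmf {β : ℝ} (hβ0 : 0 ≤ β) (hβ1 : β < 1) (m : ℕ) :
    IntegrableOn (fun u => birthDeathPMF β u (m + 1)) (Ioi 0) := by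
  apply integrableOn_Ioi_deriv_of_nonneg
    (g := fun v => ((m : ℝ) + 1)⁻¹ * sfun β v ^ (m + 1))
    (l := ((m : ℝ) + 1)⁻¹)
  · exact (continuousAt_const.mul ((continuousAt_sfun hβ1).pow (m + 1))).continuousWithinAt
  · exact fun x hx => hasDerivAt_G hβ0 hβ1 m hx
  · exact fun x hx => pmf_nonneg hβ0 hβ1 hx m
  · have := ((tendsto_sfun hβ1).pow (m + 1)).const_mul ((m : ℝ) + 1)⁻¹
    simpa using this

lemma integral_pmf {β : ℝ} (hβ0 : 0 ≤ β) (hβ1 : β < 1) (m : ℕ) :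
    ∫ u in Ioi (0:ℝ), birthDeathPMF β u (m + 1) = ((m : ℝ) + 1)⁻¹ := by
  have h := integral_Ioi_of_hasDerivAt_of_nonneg
    (g := fun v => ((m : ℝ) + 1)⁻¹ * sfun β v ^ (m + 1))
    (g' := fun u => birthDeathPMF β u (m + 1))
    (l := ((m : ℝ) + 1)⁻¹) (a := 0)
    ((continuousAt_const.mul ((continuousAt_sfun hβ1).pow (m + 1))).continuousWithinAt)
    (fun x hx => hasDerivAt_G hβ0 hβ1 m hx)
    (fun x hx => pmf_nonneg hβ0 hβ1 hx m)
    (by simpa using ((tendsto_sfun hβ1).pow (m + 1)).const_mul ((m : ℝ) + 1)⁻¹)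
  rw [h]
  simp [sfun_zero]

lemma measurable_pmf {β : ℝ} (k : ℕ) : Measurable (fun u => birthDeathPMF β u k) := by
  unfold birthDeathPMF birthDeathS
  fun_prop

section NLemmas

variable {n : ℝ → ℝ}

lemma n_mono (hn : Assumption1 n) {s t : ℝ} (hs : 0 ≤ s) (hst : s ≤ t) : n s ≤ n t := by
  rcases eq_or_lt_of_le hst with rfl | hlt
  · exact le_rfl
  rcases eq_or_lt_of_le hs with rfl | hs'
  · -- n 0 ≤ n t via right-continuity
    refine le_of_tendsto hn.2.2.1 ?_
    have hmem : Set.Ioo (0:ℝ) t ∈ nhdsWithin (0:ℝ) (Set.Ioi 0) :=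
      Ioo_mem_nhdsGT_of_mem ⟨le_rfl, hlt⟩
    filter_upwards [hmem] with x hx
    rcases eq_or_lt_of_le (le_of_lt hx.2) with rfl | hxlt
    · exact le_refl _
    · exact hn.2.2.2.2.1 (Set.mem_Ioi.mpr hx.1) (Set.mem_Ioi.mpr (hx.1.trans hx.2)) (le_of_lt hx.2)
  · exact hn.2.2.2.2.1 (Set.mem_Ioi.mpr hs') (Set.mem_Ioi.mpr (hs'.trans hlt)) hst

lemma n_nonneg (hn : Assumption1 n) (τ : ℝ) : 0 ≤ n τ := by
  rcases lt_trichotomy τ 0 with h | rfl | h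
  · exact le_of_eq (hn.1 τ h).symm
  · refine ge_of_tendsto hn.2.2.1 ?_
    filter_upwards [self_mem_nhdsWithin] with x hx
    exact le_of_lt (hn.2.2.2.1 x hx)
  · exact le_of_lt (hn.2.2.2.1 τ h)

lemma ratio_le_one (hn : Assumption1 n) {x L : ℝ} (hx : 0 ≤ x)
    (hL : Tendsto (fun t : ℝ => n (t - x) / n t) atTop (𝓝 L)) : L ≤ 1 := by
  refine le_of_tendsto hL ?_
  filter_upwards [eventually_ge_atTop (x + 1)] with t ht
  have h0 : (0:ℝ) < t := by linarith
  have h1 : 0 ≤ t - x := by linarith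
  exact div_le_one_of_le₀ (n_mono hn h1 (by linarith)) (n_nonneg hn t)

lemma ratio_compare (hn : Assumption1 n) {x y L M : ℝ} (hx : 0 ≤ x) (hxy : x ≤ y)
    (hL : Tendsto (fun t : ℝ => n (t - x) / n t) atTop (𝓝 L))
    (hM : Tendsto (fun t : ℝ => n (t - y) / n t) atTop (𝓝 M)) : M ≤ L := by
  refine le_of_tendsto_of_tendsto hM hL ?_
  filter_upwards [eventually_ge_atTop (y + 1)] with t ht
  have h0 : (0:ℝ) < t := by linarith
  have h1 : 0 ≤ t - y := by linarith
  have hnt : 0 < n t := hn.2.2.2.1 t h0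
  have hmono : n (t - y) ≤ n (t - x) := n_mono hn h1 (by linarith)
  gcongr

lemma ratio_mul (hn : Assumption1 n) {x y Lx Ly : ℝ} (hx : 0 ≤ x) (hy : 0 ≤ y)
    (hLx : Tendsto (fun t : ℝ => n (t - x) / n t) atTop (𝓝 Lx))
    (hLy : Tendsto (fun t : ℝ => n (t - y) / n t) atTop (𝓝 Ly)) :
    Tendsto (fun t : ℝ => n (t - (x + y)) / n t) atTop (𝓝 (Lx * Ly)) := by
  have hshift : Tendsto (fun t : ℝ => t + -y) atTop atTop :=
    tendsto_atTop_add_const_right atTop (-y) tendsto_id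
  have h1 : Tendsto (fun t : ℝ => n (t + -y - x) / n (t + -y)) atTop (𝓝 Lx) :=
    hLx.comp hshift
  have h2 := h1.mul hLy
  apply h2.congr'
  filter_upwards [eventually_ge_atTop (x + y + 1)] with t ht
  have hny : 0 < n (t - y) := hn.2.2.2.1 _ (by linarith)
  show n (t + -y - x) / n (t + -y) * (n (t - y) / n t) = n (t - (x + y)) / n t
  have e2 : t + -y - x = t - (x + y) := by ring
  have e1 : t + -y = t - y := by ring
  rw [e2, e1, div_mul_div_comm, mul_comm (n (t - (x + y))) (n (t - y)),
    mul_div_mul_left _ _ (ne_of_gt hny)]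

lemma ratio_one_eq_one (hn : Assumption1 n)
    (hδlim : Tendsto (fun t : ℝ => Real.log (n t) / t) atTop (𝓝 0))
    {c : ℝ} (hc0 : 0 < c)
    (hct : Tendsto (fun t : ℝ => n (t - 1) / n t) atTop (𝓝 c)) : c = 1 := by
  -- log of the ratio converges
  have hlog : Tendsto (fun t : ℝ => Real.log (n (t - 1)) - Real.log (n t)) atTop
      (𝓝 (Real.log c)) := by
    have h1 := (Real.continuousAt_log (ne_of_gt hc0)).tendsto.comp hct
    apply h1.congr'
    filter_upwards [eventually_gt_atTop 1] with t ht
    have h2 : 0 < n (t - 1) := hn.2.2.2.1 _ (by linarith)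
    have h3 : 0 < n t := hn.2.2.2.1 _ (by linarith)
    simp only [Function.comp_apply]
    rw [Real.log_div (ne_of_gt h2) (ne_of_gt h3)]
  -- increments of log n along integers
  set b : ℕ → ℝ := fun m => Real.log (n ((m : ℝ) + 2)) - Real.log (n ((m : ℝ) + 1)) with hbdef
  have hb : Tendsto b atTop (𝓝 (-Real.log c)) := by
    have hcomp : Tendsto (fun m : ℕ => (m : ℝ) + 2) atTop atTop :=
      tendsto_atTop_add_const_right atTop 2 tendsto_natCast_atTop_atTop
    have h4 := (hlog.comp hcomp).neg
    apply h4.congr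
    intro m
    simp only [Function.comp_apply, hbdef]
    have e : (m : ℝ) + 2 - 1 = (m : ℝ) + 1 := by ring
    rw [e]
    ring
  have hces := hb.cesaro
  -- telescoping sum
  have hsum : ∀ M : ℕ, ∑ i ∈ Finset.range M, b i
      = Real.log (n ((M : ℝ) + 1)) - Real.log (n 1) := by
    intro M
    have h5 := Finset.sum_range_sub (fun i : ℕ => Real.log (n ((i : ℝ) + 1))) M
    have h6 : ∀ i : ℕ, b i = Real.log (n ((↑(i + 1) : ℝ) + 1)) - Real.log (n ((i : ℝ) + 1)) := by
      intro i
      simp only [hbdef]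
      push_cast
      ring_nf
    rw [Finset.sum_congr rfl fun i _ => h6 i, h5]
    simp
  -- the Cesàro mean must also converge to 0
  have hA : Tendsto (fun M : ℕ => Real.log (n ((M : ℝ) + 1)) / ((M : ℝ) + 1)) atTop (𝓝 0) :=
    hδlim.comp (tendsto_atTop_add_const_right atTop 1 tendsto_natCast_atTop_atTop)
  have hB : Tendsto (fun M : ℕ => ((M : ℝ) + 1) / (M : ℝ)) atTop (𝓝 1) := by
    have h7 : Tendsto (fun M : ℕ => 1 + ((M : ℝ))⁻¹) atTop (𝓝 (1 + 0)) :=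
      tendsto_const_nhds.add (tendsto_inv_atTop_zero.comp tendsto_natCast_atTop_atTop)
    rw [add_zero] at h7
    apply h7.congr'
    filter_upwards [eventually_ge_atTop 1] with M hM
    have : (M : ℝ) ≠ 0 := by positivity
    field_simp
  have hAB : Tendsto (fun M : ℕ => Real.log (n ((M : ℝ) + 1)) / (M : ℝ)) atTop (𝓝 0) := by
    have h8 := hA.mul hB
    rw [mul_one] at h8
    apply h8.congr'
    filter_upwards [eventually_ge_atTop 1] with M hM
    have hM0 : (M : ℝ) ≠ 0 := by positivity
    have hM1 : (M : ℝ) + 1 ≠ 0 := by positivity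
    field_simp
  have hC : Tendsto (fun M : ℕ => ((M : ℝ))⁻¹ * Real.log (n 1)) atTop (𝓝 0) := by
    have := (tendsto_inv_atTop_zero.comp tendsto_natCast_atTop_atTop).mul_const (Real.log (n 1))
    simpa using this
  have hzero : Tendsto (fun M : ℕ => ((M : ℝ))⁻¹ * ∑ i ∈ Finset.range M, b i) atTop (𝓝 0) := by
    have h9 := hAB.sub hC
    rw [sub_zero] at h9
    apply h9.congr
    intro M
    rw [hsum M]
    rw [mul_sub]
    congr 1
    rw [inv_mul_eq_div]
  have : -Real.log c = 0 := tendsto_nhds_unique hces hzero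
  have hlogc : Real.log c = 0 := by linarith
  rcases (Real.log_eq_zero).mp hlogc with h | h | h
  · exact absurd h (ne_of_gt hc0)
  · exact h
  · linarith

lemma ratio_all (hn : Assumption1 n)
    (hδlim : Tendsto (fun t : ℝ => Real.log (n t) / t) atTop (𝓝 0))
    {x : ℝ} (hx : 0 ≤ x) :
    Tendsto (fun t : ℝ => n (t - x) / n t) atTop (𝓝 1) := by
  have hone : Tendsto (fun t : ℝ => n (t - 1) / n t) atTop (𝓝 1) := by
    obtain ⟨c, hc0, hct⟩ := hn.2.2.2.2.2 1 zero_le_one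
    rwa [ratio_one_eq_one hn hδlim hc0 hct] at hct
  have hzero : Tendsto (fun t : ℝ => n (t - 0) / n t) atTop (𝓝 1) := by
    apply tendsto_const_nhds.congr'
    filter_upwards [eventually_gt_atTop 0] with t ht
    rw [sub_zero, div_self (ne_of_gt (hn.2.2.2.1 t ht))]
  have hnat : ∀ m : ℕ, Tendsto (fun t : ℝ => n (t - (m : ℝ)) / n t) atTop (𝓝 1) := by
    intro m
    induction m with
    | zero => simpa using hzero
    | succ m ih =>
      have := ratio_mul hn (Nat.cast_nonneg m) zero_le_one ih hone
      rw [mul_one] at this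
      have e : ((m : ℝ) + 1) = ((m + 1 : ℕ) : ℝ) := by push_cast; ring
      rwa [e] at this
  obtain ⟨L, hL0, hLt⟩ := hn.2.2.2.2.2 x hx
  obtain ⟨m, hm⟩ := exists_nat_ge x
  have h1 : L ≤ 1 := ratio_le_one hn hx hLt
  have h2 : 1 ≤ L := ratio_compare hn hx hm hLt (hnat m)
  rwa [le_antisymm h1 h2] at hLt

end NLemmas

lemma n_aesm (hn : Assumption1 n) : AEStronglyMeasurable n (volume : Measure ℝ) := by
  have hconIci : ContinuousOn n (Set.Ici 0) := by
    intro x hx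
    rcases eq_or_lt_of_le (mem_Ici.mp hx) with rfl | hx'
    · exact continuousWithinAt_Ioi_iff_Ici.mp hn.2.2.1
    · exact (hn.2.1.continuousAt (Ioi_mem_nhds hx')).continuousWithinAt
  have h1 : AEStronglyMeasurable n (volume.restrict (Set.Ici 0)) :=
    hconIci.aestronglyMeasurable measurableSet_Ici
  have h2 := (aestronglyMeasurable_indicator_iff measurableSet_Ici).mpr h1
  have heq : Set.indicator (Set.Ici 0) n = n := by
    funext τ
    by_cases h : (0:ℝ) ≤ τ
    · exact Set.indicator_of_mem h n
    · simp [Set.indicator_apply, Set.mem_Ici, h, hn.1 τ (lt_of_not_ge h)]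

  rwa [heq] at h2

lemma n_shift_aesm (hn : Assumption1 n) (t : ℝ) :
    AEStronglyMeasurable (fun u => n (t - u)) (volume : Measure ℝ) :=
  by
  have h1 : MeasurePreserving (fun x : ℝ => -x) volume volume :=
    Measure.measurePreserving_neg volume
  have h2 : MeasurePreserving (fun x : ℝ => x + t) volume volume :=
    measurePreserving_add_right volume t
  have e : (fun x : ℝ => t - x) = (fun x : ℝ => x + t) ∘ (fun x : ℝ => -x) := by
    funext x
    simp [Function.comp]
    ring
  have hmp : MeasurePreserving (fun x : ℝ => t - x) volume volume := by
    rw [e]; exact h2.comp h1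
  exact (n_aesm hn).comp_quasiMeasurePreserving hmp.quasiMeasurePreserving

end CloneAux

open CloneAux in
/-- For subexponential wild-type growth (`δ* = 0`), the rescaled clone size probabilities
satisfy `lim_{t→∞} (1/n_t)∫_0^t n_τ P(Z_{t−τ}=k) dτ = 1/k` for every `k ≥ 1`. -/
theorem subexponential_clone_size_limit
    (β : ℝ) (hβ : β ∈ Set.Ico (0 : ℝ) 1)
    (n : ℝ → ℝ) (hn : Assumption1 n)
    (hδlim : Filter.Tendsto (fun t : ℝ => Real.log (n t) / t) Filter.atTop (nhds 0)) :
    ∀ k : ℕ, 1 ≤ k →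
      Filter.Tendsto
        (fun t : ℝ => (1 / n t) * ∫ τ in (0:ℝ)..t, n τ * birthDeathPMF β (t - τ) k)
        Filter.atTop (nhds (1 / (k : ℝ))) := by
  obtain ⟨hβ0, hβ1⟩ := hβ
  intro k hk
  obtain ⟨m, rfl⟩ : ∃ m, k = m + 1 := ⟨k - 1, (Nat.succ_pred_eq_of_pos hk).symm⟩
  set F : ℝ → ℝ → ℝ := fun t u => n (t - u) / n t * birthDeathPMF β u (m + 1) with hF
  -- uniform bound
  have hbd : ∀ t : ℝ, 1 ≤ t → ∀ u : ℝ, u ∈ Ioi (0:ℝ) →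
      ‖F t u‖ ≤ birthDeathPMF β u (m + 1) := by
    intro t ht u hu
    have hu0 : 0 < u := hu
    have hppos : 0 ≤ birthDeathPMF β u (m + 1) := pmf_nonneg hβ0 hβ1 hu0 m
    have hnt : 0 < n t := hn.2.2.2.1 t (by linarith)
    rcases le_or_gt u t with hut | hut
    · have hr0 : 0 ≤ n (t - u) / n t := div_nonneg (n_nonneg hn _) (n_nonneg hn _)
      have hr1 : n (t - u) / n t ≤ 1 :=
        div_le_one_of_le₀ (n_mono hn (by linarith) (by linarith)) (n_nonneg hn t)
      rw [hF]
      rw [Real.norm_eq_abs, abs_of_nonneg (mul_nonneg hr0 hppos)]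
      calc n (t - u) / n t * birthDeathPMF β u (m + 1)
          ≤ 1 * birthDeathPMF β u (m + 1) := mul_le_mul_of_nonneg_right hr1 hppos
        _ = birthDeathPMF β u (m + 1) := one_mul _
    · have hz : n (t - u) = 0 := hn.1 _ (by linarith)
      rw [hF]
      simp [hz, hppos]
  -- global measurability
  have hFmeasG : ∀ t : ℝ, AEStronglyMeasurable (F t) (volume : Measure ℝ) := by
    intro t
    have h0 : AEStronglyMeasurable
        (fun u => n (t - u) * (n t)⁻¹ * birthDeathPMF β u (m + 1)) (volume : Measure ℝ) :=
      ((n_shift_aesm hn t).mul aestronglyMeasurable_const).mul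
        (measurable_pmf (m + 1)).aestronglyMeasurable
    refine h0.congr (Eventually.of_forall fun u => ?_)
    show n (t - u) * (n t)⁻¹ * birthDeathPMF β u (m + 1)
      = n (t - u) / n t * birthDeathPMF β u (m + 1)
    rw [div_eq_mul_inv]
  have hpint : IntegrableOn (fun u => birthDeathPMF β u (m + 1)) (Ioi (0:ℝ)) :=
    integrableOn_pmf hβ0 hβ1 m
  -- dominated convergence
  have key : Tendsto (fun t => ∫ u in Ioi (0:ℝ), F t u) atTop
      (𝓝 (∫ u in Ioi (0:ℝ), birthDeathPMF β u (m + 1))) := by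
    apply MeasureTheory.tendsto_integral_filter_of_dominated_convergence
      (fun u => birthDeathPMF β u (m + 1))
    · exact Eventually.of_forall fun t => (hFmeasG t).restrict
    · filter_upwards [eventually_ge_atTop (1:ℝ)] with t ht
      rw [ae_restrict_iff' measurableSet_Ioi]
      exact Eventually.of_forall fun u hu => hbd t ht u hu
    · exact hpint
    · rw [ae_restrict_iff' measurableSet_Ioi]
      refine Eventually.of_forall fun u hu => ?_
      have h1 := (ratio_all hn hδlim (le_of_lt (mem_Ioi.mp hu))).mul_const
        (birthDeathPMF β u (m + 1))
      rw [one_mul] at h1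
      exact h1
  rw [integral_pmf hβ0 hβ1 m] at key
  -- rewrite the original expression
  have hfinal : ∀ᶠ t in atTop,
      (fun t : ℝ => ∫ u in Ioi (0:ℝ), F t u) t
        = (1 / n t) * ∫ τ in (0:ℝ)..t, n τ * birthDeathPMF β (t - τ) (m + 1) := by
    filter_upwards [eventually_ge_atTop (1:ℝ)] with t ht
    have ht0 : (0:ℝ) ≤ t := by linarith
    have h := intervalIntegral.integral_comp_sub_left (a := 0) (b := t)
      (fun τ => n τ * birthDeathPMF β (t - τ) (m + 1)) t
    simp only [sub_sub_cancel, sub_self, sub_zero] at h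
    rw [← h, ← intervalIntegral.integral_const_mul]
    have h2 : ∫ u in (0:ℝ)..t, (1 / n t) * (n (t - u) * birthDeathPMF β u (m + 1))
        = ∫ u in (0:ℝ)..t, F t u := by
      apply intervalIntegral.integral_congr
      intro u _
      rw [hF]
      ring
    rw [h2, intervalIntegral.integral_of_le ht0]
    have hz : EqOn (F t) (fun _ => (0:ℝ)) (Ioi t) := by
      intro u hu
      have h3 : n (t - u) = 0 := hn.1 _ (by simpa using sub_neg.mpr (mem_Ioi.mp hu))
      rw [hF]
      simp [h3]
    have hint2 : IntegrableOn (F t) (Ioi t) :=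
      integrableOn_zero.congr_fun (fun u hu => (hz hu).symm) measurableSet_Ioi
    have hint1 : IntegrableOn (F t) (Ioc 0 t) := by
      apply Integrable.mono (hpint.mono_set Ioc_subset_Ioi_self) ((hFmeasG t).restrict)
      rw [ae_restrict_iff' measurableSet_Ioc]
      refine Eventually.of_forall fun u hu => ?_
      exact le_trans (hbd t ht u hu.1) (le_abs_self _)
    rw [show (Ioi (0:ℝ)) = Ioc 0 t ∪ Ioi t from (Ioc_union_Ioi_eq_Ioi ht0).symm,
      setIntegral_union (Ioc_disjoint_Ioi le_rfl) measurableSet_Ioi hint1 hint2]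
    have h4 : ∫ u in Ioi t, F t u = 0 := by
      rw [setIntegral_congr_fun measurableSet_Ioi hz]
      simp
    rw [h4, add_zero]
  have hres := Tendsto.congr' hfinal key
  have hcast : ((m : ℝ) + 1)⁻¹ = 1 / ((m + 1 : ℕ) : ℝ) := by
    push_cast
    rw [one_div]
  rwa [hcast] at hres
end

section
/- Let β = 0 (immortal mutants, so λ = 1) and let n satisfy Assumption 1 with δ* > 0. Then for every integer k ≥ 1, lim_{t→∞} (1/a_t)·∫_0^t n_τ · e^{−(t−τ)}(1 − e^{−(t−τ)})^{k−1} dτ = δ*·(k−1)!/((δ*+1)(δ*+2)⋯(δ*+k)); that is, the clone size distribution converges to the Yule–Simon distribution with parameter δ*. -/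
open Filter Real intervalIntegral MeasureTheory Set Topology

lemma ys_integral_exp (c : ℝ) (hc : 0 < c) :
    ∫ u in Set.Ioi (0:ℝ), Real.exp (-c * u) = 1 / c := by
  have hder : ∀ x ∈ Set.Ici (0:ℝ),
      HasDerivAt (fun u => -Real.exp (-c * u) / c) (Real.exp (-c * x)) x := by
    intro x _
    have h1 : HasDerivAt (fun u : ℝ => -c * u) (-c) x := by
      simpa using (hasDerivAt_id x).const_mul (-c)
    have h2 := (h1.exp.neg.div_const c)
    refine h2.congr_deriv ?_
    field_simp [ne_of_gt hc]
  have hint : IntegrableOn (fun x : ℝ => Real.exp (-c * x)) (Set.Ioi 0) :=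
    exp_neg_integrableOn_Ioi 0 hc
  have hten : Tendsto (fun u : ℝ => -Real.exp (-c * u) / c) atTop (𝓝 0) := by
    have h0 : Tendsto (fun u : ℝ => Real.exp (-(c * u))) atTop (𝓝 0) :=
      tendsto_exp_neg_atTop_nhds_zero.comp (tendsto_id.const_mul_atTop hc)
    have := (h0.neg.div_const c)
    simpa [neg_mul] using this
  have := integral_Ioi_of_hasDerivAt_of_tendsto' hder hint hten
  rw [this]
  simp [Real.exp_zero]
  ring

lemma ys_integrable_aux (c : ℝ) (hc : 0 < c) (m : ℕ) :
    IntegrableOn (fun u : ℝ => Real.exp (-c * u) * (1 - Real.exp (-u)) ^ m) (Set.Ioi 0) := by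
  refine Integrable.mono' (exp_neg_integrableOn_Ioi 0 hc) ?_ ?_
  · exact ((Real.continuous_exp.comp (continuous_const.mul continuous_id)).mul
      ((continuous_const.sub (Real.continuous_exp.comp continuous_neg)).pow m)).aestronglyMeasurable.restrict
  · refine (ae_restrict_iff' measurableSet_Ioi).2 (ae_of_all _ fun x hx => ?_)
    have hx0 : (0:ℝ) < x := hx
    have h1 : 0 ≤ 1 - Real.exp (-x) := by
      have : Real.exp (-x) ≤ 1 := Real.exp_le_one_iff.mpr (by linarith)
      linarith
    have h2 : 1 - Real.exp (-x) ≤ 1 := by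
      have := Real.exp_pos (-x); linarith
    have h3 : (1 - Real.exp (-x)) ^ m ≤ 1 := pow_le_one₀ h1 h2
    have h4 : 0 ≤ (1 - Real.exp (-x)) ^ m := pow_nonneg h1 m
    rw [Real.norm_eq_abs, abs_of_nonneg (by positivity)]
    calc Real.exp (-c * x) * (1 - Real.exp (-x)) ^ m ≤ Real.exp (-c * x) * 1 := by
          exact mul_le_mul_of_nonneg_left h3 (Real.exp_pos _).le
      _ = Real.exp (-c * x) := mul_one _

lemma ys_beta (m : ℕ) : ∀ c : ℝ, 0 < c →
    (∫ u in Set.Ioi (0:ℝ), Real.exp (-c * u) * (1 - Real.exp (-u)) ^ m)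
      = (Nat.factorial m : ℝ) / ∏ j ∈ Finset.range (m + 1), (c + j) := by
  induction m with
  | zero =>
    intro c hc
    simp only [pow_zero, mul_one, Finset.range_one, Finset.prod_singleton, Nat.cast_zero,
      add_zero, Nat.factorial_zero, Nat.cast_one]
    rw [ys_integral_exp c hc]
    norm_num
  | succ m ih =>
    intro c hc
    -- integration by parts identity
    have hder : ∀ x ∈ Set.Ici (0:ℝ),
        HasDerivAt (fun u => Real.exp (-c * u) * (1 - Real.exp (-u)) ^ (m + 1))
          (((m:ℝ) + 1) * (Real.exp (-(c+1) * x) * (1 - Real.exp (-x)) ^ m)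
            - c * (Real.exp (-c * x) * (1 - Real.exp (-x)) ^ (m + 1))) x := by
      intro x _
      have h1 : HasDerivAt (fun u : ℝ => Real.exp (-c * u)) (Real.exp (-c * x) * (-c)) x := by
        have : HasDerivAt (fun u : ℝ => -c * u) (-c) x := by
          simpa using (hasDerivAt_id x).const_mul (-c)
        exact this.exp
      have h2 : HasDerivAt (fun u : ℝ => 1 - Real.exp (-u)) (Real.exp (-x)) x := by
        have : HasDerivAt (fun u : ℝ => Real.exp (-u)) (Real.exp (-x) * (-1)) x :=
          ((hasDerivAt_id x).neg.exp)
        simpa using this.const_sub 1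
      have h3 := h2.fun_pow (m + 1)
      have h4 := h1.fun_mul h3
      refine h4.congr_deriv ?_
      have hexp : Real.exp (-(c+1) * x) = Real.exp (-c * x) * Real.exp (-x) := by
        rw [← Real.exp_add]; ring_nf
      rw [hexp]
      push_cast
      ring
    have hint1 : IntegrableOn (fun x : ℝ =>
        ((m:ℝ) + 1) * (Real.exp (-(c+1) * x) * (1 - Real.exp (-x)) ^ m)) (Set.Ioi 0) :=
      (ys_integrable_aux (c+1) (by linarith) m).const_mul _
    have hint2 : IntegrableOn (fun x : ℝ =>
        c * (Real.exp (-c * x) * (1 - Real.exp (-x)) ^ (m+1))) (Set.Ioi 0) :=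
      (ys_integrable_aux c hc (m+1)).const_mul _
    have hten : Tendsto (fun u : ℝ => Real.exp (-c * u) * (1 - Real.exp (-u)) ^ (m + 1))
        atTop (𝓝 0) := by
      have h0 : Tendsto (fun u : ℝ => Real.exp (-(c * u))) atTop (𝓝 0) :=
        tendsto_exp_neg_atTop_nhds_zero.comp (tendsto_id.const_mul_atTop hc)
      have h1 : Tendsto (fun u : ℝ => (1 - Real.exp (-u)) ^ (m+1)) atTop (𝓝 1) := by
        have : Tendsto (fun u : ℝ => 1 - Real.exp (-u)) atTop (𝓝 1) := by
          simpa using (tendsto_exp_neg_atTop_nhds_zero.const_sub 1)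
        simpa using this.pow (m+1)
      have := h0.mul h1
      simpa [neg_mul] using this
    have hibp := integral_Ioi_of_hasDerivAt_of_tendsto' hder (hint1.sub hint2) hten
    simp only [Real.exp_zero, neg_zero, sub_self] at hibp
    rw [MeasureTheory.integral_sub hint1 hint2, MeasureTheory.integral_const_mul,
      MeasureTheory.integral_const_mul,
      show (0:ℝ) - Real.exp (-c * 0) * 0 ^ (m + 1) = 0 by simp] at hibp
    have key : c * ∫ u in Set.Ioi (0:ℝ), Real.exp (-c * u) * (1 - Real.exp (-u)) ^ (m+1)
        = ((m:ℝ) + 1) * ∫ u in Set.Ioi (0:ℝ), Real.exp (-(c+1) * u) * (1 - Real.exp (-u)) ^ m := by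
      linarith
    have ihc := ih (c + 1) (by linarith)
    rw [ihc] at key
    have hprod : ∏ j ∈ Finset.range (m + 2), (c + (j:ℝ))
        = c * ∏ j ∈ Finset.range (m + 1), (c + 1 + (j:ℝ)) := by
      rw [Finset.prod_range_succ' (fun j => c + (j:ℝ))]
      simp only [Nat.cast_zero, add_zero, Nat.cast_add, Nat.cast_one]
      rw [mul_comm]
      congr 1
      exact Finset.prod_congr rfl (fun j _ => by ring)
    have hprodpos : (0:ℝ) < ∏ j ∈ Finset.range (m + 1), (c + 1 + (j:ℝ)) := by
      apply Finset.prod_pos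
      intro j _
      positivity
    rw [hprod, eq_div_iff (by positivity)]
    have hre : (∫ u in Set.Ioi (0:ℝ), Real.exp (-c * u) * (1 - Real.exp (-u)) ^ (m+1))
          * (c * ∏ j ∈ Finset.range (m + 1), (c + 1 + (j:ℝ)))
        = (c * ∫ u in Set.Ioi (0:ℝ), Real.exp (-c * u) * (1 - Real.exp (-u)) ^ (m+1))
          * ∏ j ∈ Finset.range (m + 1), (c + 1 + (j:ℝ)) := by ring
    rw [hre, key]
    rw [mul_assoc, div_mul_cancel₀ _ (ne_of_gt hprodpos)]
    push_cast [Nat.factorial_succ]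
    ring

lemma ys_ratio_exp (n : ℝ → ℝ) (hn : Assumption1 n) (δ : ℝ)
    (hδlim : Tendsto (fun t : ℝ => Real.log (n t) / t) atTop (𝓝 δ)) :
    ∀ x : ℝ, 0 ≤ x →
      Tendsto (fun t => n (t - x) / n t) atTop (𝓝 (Real.exp (-(δ * x)))) := by
  obtain ⟨hzero, hcont, hrc, hpos, hmono, hlim⟩ := hn
  set ℓ : ℝ → ℝ := fun x => limUnder atTop (fun t => n (t - x) / n t) with hℓdef
  have hten : ∀ x, 0 ≤ x → Tendsto (fun t => n (t - x) / n t) atTop (𝓝 (ℓ x)) := by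
    intro x hx
    obtain ⟨L, hL, hT⟩ := hlim x hx
    have : ℓ x = L := hT.limUnder_eq
    rw [this]; exact hT
  have hℓpos : ∀ x, 0 ≤ x → 0 < ℓ x := by
    intro x hx
    obtain ⟨L, hL, hT⟩ := hlim x hx
    have : ℓ x = L := hT.limUnder_eq
    rw [this]; exact hL
  have hone : ℓ 0 = 1 := by
    refine tendsto_nhds_unique (hten 0 le_rfl) ?_
    have hev : ∀ᶠ t : ℝ in atTop, (1:ℝ) = n (t - 0) / n t := by
      filter_upwards [eventually_gt_atTop (0:ℝ)] with t ht
      rw [sub_zero, div_self (ne_of_gt (hpos t ht))]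
    exact Tendsto.congr' hev tendsto_const_nhds
  have hmul : ∀ x, 0 ≤ x → ∀ y, 0 ≤ y → ℓ (x + y) = ℓ x * ℓ y := by
    intro x hx y hy
    have hsub : Tendsto (fun t : ℝ => t - y) atTop atTop :=
      tendsto_atTop_add_const_right atTop (-y) tendsto_id
    have h1 : Tendsto (fun t => n (t - y - x) / n (t - y)) atTop (𝓝 (ℓ x)) :=
      (hten x hx).comp hsub
    have h2 := h1.mul (hten y hy)
    refine tendsto_nhds_unique (hten (x + y) (by linarith)) (Tendsto.congr' ?_ h2)
    filter_upwards [eventually_gt_atTop y] with t ht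
    have hny : n (t - y) ≠ 0 := ne_of_gt (hpos _ (by linarith))
    show n (t - y - x) / n (t - y) * (n (t - y) / n t) = n (t - (x + y)) / n t
    rw [div_mul_div_cancel₀ hny]
    congr 2
    ring
  have hanti : ∀ x, 0 ≤ x → ∀ y, x ≤ y → ℓ y ≤ ℓ x := by
    intro x hx y hxy
    refine le_of_tendsto_of_tendsto (hten y (hx.trans hxy)) (hten x hx) ?_
    filter_upwards [eventually_gt_atTop y] with t ht
    have htpos : 0 < n t := hpos t (lt_of_le_of_lt (hx.trans hxy) ht)
    have hx' : x < t := lt_of_le_of_lt hxy ht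
    have hxy' : n (t - y) ≤ n (t - x) :=
      hmono (by simp only [Set.mem_Ioi]; linarith)
        (by simp only [Set.mem_Ioi]; linarith) (by linarith)
    exact div_le_div_of_nonneg_right hxy' htpos.le
  -- the logarithm of ℓ
  set φ : ℝ → ℝ := fun x => Real.log (ℓ x) with hφdef
  have hφ0 : φ 0 = 0 := by simp only [hφdef, hone, Real.log_one]
  have hφadd : ∀ x, 0 ≤ x → ∀ y, 0 ≤ y → φ (x + y) = φ x + φ y := by
    intro x hx y hy
    simp only [hφdef]
    rw [hmul x hx y hy, Real.log_mul (ne_of_gt (hℓpos x hx)) (ne_of_gt (hℓpos y hy))]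
  have hφanti : ∀ x, 0 ≤ x → ∀ y, x ≤ y → φ y ≤ φ x := by
    intro x hx y hxy
    exact Real.log_le_log (hℓpos y (hx.trans hxy)) (hanti x hx y hxy)
  have hφ1 : φ 1 ≤ 0 := by
    have := hφanti 0 le_rfl 1 zero_le_one
    rwa [hφ0] at this
  have hφnat : ∀ m : ℕ, ∀ x, 0 ≤ x → φ ((m:ℝ) * x) = (m:ℝ) * φ x := by
    intro m
    induction m with
    | zero => intro x hx; simp [hφ0]
    | succ m ih =>
      intro x hx
      have : ((m:ℝ) + 1) * x = (m:ℝ) * x + x := by ring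
      push_cast
      rw [this, hφadd _ (by positivity) _ hx, ih x hx]
      ring
  have hφrat : ∀ q : ℚ, 0 ≤ q → φ (q:ℝ) = (q:ℝ) * φ 1 := by
    intro q hq
    have hden : (0:ℝ) < (q.den : ℝ) := by exact_mod_cast q.den_pos
    have hnum : (0:ℝ) ≤ ((q.num.toNat : ℕ) : ℝ) := by positivity
    have hqcast : (q:ℝ) = ((q.num.toNat : ℕ) : ℝ) / (q.den : ℝ) := by
      rw [Rat.cast_def]
      congr 1
      have : (0:ℤ) ≤ q.num := Rat.num_nonneg.mpr hq
      exact_mod_cast (Int.toNat_of_nonneg this).symm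
    have hq0 : (0:ℝ) ≤ (q:ℝ) := by exact_mod_cast hq
    have h1 : (q.den : ℝ) * φ (q:ℝ) = φ ((q.den : ℝ) * (q:ℝ)) :=
      (hφnat q.den (q:ℝ) hq0).symm
    have h2 : (q.den : ℝ) * (q:ℝ) = ((q.num.toNat : ℕ) : ℝ) := by
      rw [hqcast]; field_simp
    have h3 : φ (((q.num.toNat : ℕ) : ℝ)) = ((q.num.toNat : ℕ) : ℝ) * φ 1 := by
      have := hφnat q.num.toNat 1 zero_le_one
      simpa using this
    have h4 : (q.den : ℝ) * φ (q:ℝ) = ((q.num.toNat : ℕ) : ℝ) * φ 1 := by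
      rw [h1, h2, h3]
    have : φ (q:ℝ) = (((q.num.toNat : ℕ) : ℝ) / (q.den : ℝ)) * φ 1 := by
      field_simp at h4 ⊢
      linarith [h4]
    rwa [← hqcast] at this
  -- linearity by squeeze
  have hφlin : ∀ x, 0 ≤ x → φ x = x * φ 1 := by
    intro x hx
    rcases eq_or_lt_of_le hx with rfl | hx0
    · simp [hφ0]
    by_contra hne
    rcases lt_or_gt_of_ne hne with hlt | hgt
    · -- φ x < x * φ 1 : pick rational q with x < q, q close
      set ε := x * φ 1 - φ x with hε
      have hεpos : 0 < ε := by simp only [hε]; linarith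
      have hs : φ 1 < 0 ∨ φ 1 = 0 := lt_or_eq_of_le hφ1
      rcases hs with hs | hs
      · set s := -φ 1 with hsdef
        have hspos : 0 < s := by simp only [hsdef]; linarith
        obtain ⟨q, hq1, hq2⟩ := exists_rat_btwn (show x < x + ε / s by linarith [div_pos hεpos hspos])
        have hq0 : (0:ℚ) ≤ q := by
          have : (0:ℝ) < (q:ℝ) := lt_trans hx0 hq1
          exact_mod_cast this.le
        have h5 : φ (q:ℝ) ≤ φ x := hφanti x hx (q:ℝ) hq1.le
        rw [hφrat q hq0] at h5
        -- (q:ℝ) * φ 1 ≤ φ x, q < x + ε/s, φ 1 = -s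
        have h6 : (q:ℝ) * φ 1 = -((q:ℝ) * s) := by simp only [hsdef]; ring
        have h7 : -((x + ε / s) * s) < -((q:ℝ) * s) := by
          have := mul_lt_mul_of_pos_right hq2 hspos
          linarith
        have h8 : -((x + ε / s) * s) = x * φ 1 - ε := by
          field_simp
          simp only [hsdef]
          ring
        -- so x * φ 1 - ε < φ x, but ε = x φ1 - φ x gives φ x < φ x
        rw [h6] at h5
        rw [h8] at h7
        simp only [hε] at h7 h5
        linarith
      · -- φ 1 = 0 : then all φ q = 0, and φ x ≥ φ q = 0 for q > x... need other side
        -- φ x < 0 here (since x φ1 = 0). But φ x ≥ φ q for q ≥ x rational: q ≥ x ⇒ φ q ≤ φ x? no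
        -- anti: x ≤ q ⇒ φ q ≤ φ x so φ x ≥ φ q = 0 contradiction with φ x < x φ 1 = 0
        obtain ⟨q, hq1, hq2⟩ := exists_rat_btwn (show x < x + 1 by linarith)
        have hq0 : (0:ℚ) ≤ q := by
          have : (0:ℝ) < (q:ℝ) := lt_trans hx0 hq1
          exact_mod_cast this.le
        have h5 : φ (q:ℝ) ≤ φ x := hφanti x hx (q:ℝ) hq1.le
        rw [hφrat q hq0, hs, mul_zero] at h5
        rw [hs, mul_zero] at hlt
        linarith
    · -- φ x > x * φ 1 : pick rational q with q < x
      set ε := φ x - x * φ 1 with hε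
      have hεpos : 0 < ε := by simp only [hε]; linarith
      have hs : φ 1 < 0 ∨ φ 1 = 0 := lt_or_eq_of_le hφ1
      rcases hs with hs | hs
      · set s := -φ 1 with hsdef
        have hspos : 0 < s := by simp only [hsdef]; linarith
        have hlb : max 0 (x - ε / s) < x := by
          apply max_lt hx0
          have : 0 < ε / s := by positivity
          linarith
        obtain ⟨q, hq1, hq2⟩ := exists_rat_btwn hlb
        have hq0 : (0:ℚ) ≤ q := by
          have : (0:ℝ) ≤ (q:ℝ) := le_of_lt (lt_of_le_of_lt (le_max_left 0 _) hq1)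
          exact_mod_cast this
        have h5 : φ x ≤ φ (q:ℝ) := by
          have hq0' : (0:ℝ) ≤ (q:ℝ) := by exact_mod_cast hq0
          exact hφanti (q:ℝ) hq0' x hq2.le
        rw [hφrat q hq0] at h5
        have hqlb : x - ε / s < (q:ℝ) := lt_of_le_of_lt (le_max_right 0 _) hq1
        have h7 : (q:ℝ) * φ 1 < x * φ 1 + ε := by
          have h9 : (q:ℝ) * φ 1 = -((q:ℝ) * s) := by simp only [hsdef]; ring
          have h10 := mul_lt_mul_of_pos_right hqlb hspos
          have h11 : x * φ 1 + ε = -((x - ε / s) * s) := by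
            field_simp
            simp only [hsdef]
            ring
          rw [h9, h11]
          linarith
        simp only [hε] at h7 h5
        linarith
      · obtain ⟨q, hq1, hq2⟩ := exists_rat_btwn hx0
        have hq0 : (0:ℚ) ≤ q := by exact_mod_cast hq1.le
        have h5 : φ x ≤ φ (q:ℝ) := hφanti (q:ℝ) (by exact_mod_cast hq1.le) x hq2.le
        rw [hφrat q hq0, hs, mul_zero] at h5
        rw [hs, mul_zero] at hgt
        linarith
  have hlog1 : Tendsto (fun t : ℝ => Real.log (n (t-1)) - Real.log (n t)) atTop (𝓝 (φ 1)) := by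
    have hcont1 : ContinuousAt Real.log (ℓ 1) :=
      Real.continuousAt_log (ne_of_gt (hℓpos 1 zero_le_one))
    have h := (hcont1.tendsto.comp (hten 1 zero_le_one))
    refine Tendsto.congr' ?_ h
    filter_upwards [eventually_gt_atTop (1:ℝ)] with t ht
    show Real.log (n (t-1) / n t) = _
    rw [Real.log_div (ne_of_gt (hpos _ (by linarith))) (ne_of_gt (hpos t (by linarith)))]
  have hnat2 : Tendsto (fun j : ℕ => ((j:ℝ) + 2)) atTop atTop :=
    tendsto_atTop_add_const_right atTop 2 tendsto_natCast_atTop_atTop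
  have hu : Tendsto (fun j : ℕ => Real.log (n ((j:ℝ)+2)) - Real.log (n ((j:ℝ)+1)))
      atTop (𝓝 (-φ 1)) := by
    have h := (hlog1.comp hnat2).neg
    refine Tendsto.congr' ?_ h
    refine Eventually.of_forall fun j => ?_
    show -(Real.log (n (((j:ℝ)+2) - 1)) - Real.log (n ((j:ℝ)+2))) = _
    rw [show ((j:ℝ)+2) - 1 = (j:ℝ)+1 by ring]
    ring
  have hces := hu.cesaro
  have htel : ∀ m : ℕ, ∑ i ∈ Finset.range m,
        (Real.log (n ((i:ℝ)+2)) - Real.log (n ((i:ℝ)+1)))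
      = Real.log (n ((m:ℝ)+1)) - Real.log (n 1) := by
    intro m
    have h := Finset.sum_range_sub (fun i : ℕ => Real.log (n ((i:ℝ)+1))) m
    simp only [Nat.cast_zero, zero_add] at h
    rw [← h]
    apply Finset.sum_congr rfl
    intro i _
    push_cast
    ring_nf
  have hces' : Tendsto (fun m : ℕ => ((m:ℝ))⁻¹ * (Real.log (n ((m:ℝ)+1)) - Real.log (n 1)))
      atTop (𝓝 (-φ 1)) := by
    refine Tendsto.congr' ?_ hces
    exact Eventually.of_forall fun m => by simp only []; rw [htel m]
  have hδ' : Tendsto (fun m : ℕ => ((m:ℝ))⁻¹ * (Real.log (n ((m:ℝ)+1)) - Real.log (n 1)))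
      atTop (𝓝 δ) := by
    have h_a : Tendsto (fun m : ℕ => Real.log (n ((m:ℝ)+1)) / ((m:ℝ)+1)) atTop (𝓝 δ) :=
      hδlim.comp (tendsto_atTop_add_const_right atTop 1 tendsto_natCast_atTop_atTop)
    have h_b : Tendsto (fun m : ℕ => ((m:ℝ)+1) / (m:ℝ)) atTop (𝓝 1) := by
      have h1 : Tendsto (fun m : ℕ => 1 + ((m:ℝ))⁻¹) atTop (𝓝 (1 + 0)) :=
        tendsto_const_nhds.add (tendsto_inv_atTop_zero.comp tendsto_natCast_atTop_atTop)
      rw [add_zero] at h1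
      refine Tendsto.congr' ?_ h1
      filter_upwards [eventually_ge_atTop 1] with m hm
      have hm0 : (0:ℝ) < (m:ℝ) := by exact_mod_cast hm
      field_simp
    have h_c : Tendsto (fun m : ℕ => Real.log (n 1) * ((m:ℝ))⁻¹) atTop
        (𝓝 (Real.log (n 1) * 0)) :=
      tendsto_const_nhds.mul (tendsto_inv_atTop_zero.comp tendsto_natCast_atTop_atTop)
    have h := (h_a.mul h_b).sub h_c
    rw [mul_one, mul_zero, sub_zero] at h
    refine Tendsto.congr' ?_ h
    filter_upwards [eventually_ge_atTop 1] with m hm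
    have hm0 : (0:ℝ) < (m:ℝ) := by exact_mod_cast hm
    have hm1 : ((m:ℝ)+1) ≠ 0 := by positivity
    field_simp
  have hφ1δ : φ 1 = -δ := by
    have := tendsto_nhds_unique hces' hδ'
    linarith
  intro x hx
  have hval : ℓ x = Real.exp (-(δ * x)) := by
    have h1 : Real.log (ℓ x) = x * φ 1 := hφlin x hx
    have h2 : ℓ x = Real.exp (Real.log (ℓ x)) := (Real.exp_log (hℓpos x hx)).symm
    rw [h2, h1, hφ1δ]
    ring_nf
  rw [← hval]
  exact hten x hx

lemma ys_n_nonneg (n : ℝ → ℝ) (hn : Assumption1 n) : ∀ τ, 0 ≤ n τ := by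
  obtain ⟨hzero, hcont, hrc, hpos, hmono, hlim⟩ := hn
  intro τ
  rcases lt_trichotomy τ 0 with h | h | h
  · rw [hzero τ h]
  · subst h
    refine ge_of_tendsto hrc ?_
    filter_upwards [self_mem_nhdsWithin] with s hs
    exact (hpos s hs).le
  · exact (hpos τ h).le

lemma ys_n_mono (n : ℝ → ℝ) (hn : Assumption1 n) :
    ∀ a b : ℝ, a ≤ b → 0 < b → n a ≤ n b := by
  obtain ⟨hzero, hcont, hrc, hpos, hmono, hlim⟩ := hn
  intro a b hab hb
  rcases lt_trichotomy a 0 with h | h | h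
  · rw [hzero a h]; exact (hpos b hb).le
  · subst h
    refine le_of_tendsto hrc ?_
    have hmem : Set.Ioo (0:ℝ) b ∈ nhdsWithin 0 (Set.Ioi 0) :=
      Ioo_mem_nhdsGT_of_mem ⟨le_rfl, hb⟩
    filter_upwards [hmem] with s hs
    exact hmono hs.1 hb hs.2.le
  · exact hmono h (lt_of_lt_of_le h hab) hab

lemma ys_n_measurable (n : ℝ → ℝ) (hn : Assumption1 n) : Measurable n := by
  have hmono' := ys_n_mono n hn
  obtain ⟨hzero, hcont, hrc, hpos, hmono, hlim⟩ := hn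
  have hN : Monotone (fun t : ℝ => n (max t 0)) := by
    intro s t hst
    rcases le_or_gt t 0 with h | h
    · simp only [max_eq_right h, max_eq_right (hst.trans h), le_refl]
    · simp only [max_eq_left h.le]
      exact hmono' _ _ (max_le hst h.le) h
  have heq : n = Set.indicator (Set.Ici 0) (fun t => n (max t 0)) := by
    funext τ
    rcases le_or_gt 0 τ with h | h
    · rw [Set.indicator_of_mem (Set.mem_Ici.mpr h), max_eq_left h]
    · rw [Set.indicator_of_notMem (by simpa using not_le.mpr h), hzero τ h]
  rw [heq]
  exact hN.measurable.indicator measurableSet_Ici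

lemma ys_prod_Icc (δ : ℝ) (k : ℕ) :
    ∏ j ∈ Finset.Icc 1 k, (δ + (j:ℝ)) = ∏ j ∈ Finset.range k, (δ + 1 + (j:ℝ)) := by
  induction k with
  | zero => simp
  | succ k ih =>
    rw [Finset.prod_Icc_succ_top (by omega : 1 ≤ k + 1), ih, Finset.prod_range_succ]
    push_cast
    ring

/-- For immortal mutants (`β = 0`, pure birth process with
`P(Z_u = k) = e^{−u}(1−e^{−u})^{k−1}`) and exponential-type wild-type growth (`δ* > 0`),
the clone size distribution converges to the Yule–Simon distribution with parameter `δ*`: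
`lim_{t→∞} (1/a_t)∫_0^t n_τ e^{−(t−τ)}(1−e^{−(t−τ)})^{k−1} dτ
  = δ* (k−1)! / ((δ*+1)(δ*+2)⋯(δ*+k))`. -/
theorem yule_simon_limit
    (n : ℝ → ℝ) (hn : Assumption1 n) (δ : ℝ)
    (hδlim : Filter.Tendsto (fun t : ℝ => Real.log (n t) / t) Filter.atTop (nhds δ))
    (hδpos : 0 < δ) :
    ∀ k : ℕ, 1 ≤ k →
      Filter.Tendsto
        (fun t : ℝ =>
          (1 / ∫ τ in (0:ℝ)..t, n τ) *
            ∫ τ in (0:ℝ)..t,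
              n τ * (Real.exp (-(t - τ)) * (1 - Real.exp (-(t - τ))) ^ (k - 1)))
        Filter.atTop
        (nhds (δ * (Nat.factorial (k - 1) : ℝ) / ∏ j ∈ Finset.Icc 1 k, (δ + (j : ℝ)))) := by
  intro k hk
  have hratio := ys_ratio_exp n hn δ hδlim
  have hnonneg := ys_n_nonneg n hn
  have hmono' := ys_n_mono n hn
  have hmeas := ys_n_measurable n hn
  obtain ⟨hzero, hcont, hrc, hpos, hmono, hlim⟩ := hn
  set ρ : ℝ := δ / 2 with hρdef
  have hρpos : 0 < ρ := by positivity
  set q : ℝ := Real.exp (-ρ) with hqdef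
  have hqpos : 0 < q := Real.exp_pos _
  have hev : ∀ᶠ t : ℝ in atTop, n (t - 1) / n t < q := by
    refine (hratio 1 zero_le_one).eventually_lt_const ?_
    rw [hqdef]
    apply Real.exp_lt_exp.mpr
    simp only [mul_one]
    linarith
  obtain ⟨T₀, hT₀⟩ := eventually_atTop.mp hev
  set T : ℝ := max T₀ 1 with hTdef
  have hT1 : (1:ℝ) ≤ T := le_max_right _ _
  have hTprop : ∀ t : ℝ, T ≤ t → n (t - 1) ≤ q * n t := by
    intro t ht
    have h := hT₀ t (le_trans (le_max_left _ _) ht)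
    have htpos : 0 < n t := hpos t (by linarith)
    calc n (t - 1) = n (t - 1) / n t * n t := by field_simp
      _ ≤ q * n t := mul_le_mul_of_nonneg_right h.le htpos.le
  have hiter : ∀ m : ℕ, ∀ t : ℝ, T + m ≤ t → n (t - m) ≤ q ^ m * n t := by
    intro m
    induction m with
    | zero => intro t ht; simp
    | succ m ih =>
      intro t ht
      push_cast at ht ⊢
      have hm0 : (0:ℝ) ≤ (m:ℝ) := Nat.cast_nonneg m
      have h2 : n (t - 1 - m) ≤ q ^ m * n (t - 1) := ih (t - 1) (by push_cast; linarith)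
      have h3 : n (t - 1) ≤ q * n t := hTprop t (by linarith)
      have h4 : q ^ m * n (t - 1) ≤ q ^ m * (q * n t) :=
        mul_le_mul_of_nonneg_left h3 (by positivity)
      calc n (t - ((m:ℝ) + 1)) = n (t - 1 - m) := by ring_nf
      _ ≤ q ^ m * n (t - 1) := h2
      _ ≤ q ^ m * (q * n t) := h4
      _ = q ^ (m + 1) * n t := by ring
  set C : ℝ := Real.exp (ρ * (T + 1)) with hCdef
  have hCpos : 0 < C := Real.exp_pos _
  have hqpow : ∀ m : ℕ, q ^ m = Real.exp (-(ρ * m)) := by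
    intro m
    rw [hqdef, ← Real.exp_nat_mul]
    congr 1; ring
  have hdom : ∀ t : ℝ, T ≤ t → ∀ u : ℝ, 0 ≤ u → u ≤ t →
      n (t - u) ≤ C * Real.exp (-(ρ * u)) * n t := by
    intro t ht u hu hut
    have htpos : 0 < t := lt_of_lt_of_le (by linarith) ht
    have hntpos : 0 < n t := hpos t htpos
    rcases le_or_gt u (t - T) with hcase | hcase
    · set m : ℕ := ⌊u⌋₊ with hmdef
      have hm1 : (m:ℝ) ≤ u := Nat.floor_le hu
      have hm2 : u < m + 1 := Nat.lt_floor_add_one u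
      have hTm : T + m ≤ t := by linarith
      have hstep1 : n (t - u) ≤ n (t - m) := hmono' _ _ (by linarith) (by linarith)
      have hstep2 : n (t - m) ≤ q ^ m * n t := hiter m t hTm
      have hstep3 : q ^ m ≤ Real.exp ρ * Real.exp (-(ρ * u)) := by
        rw [hqpow m, ← Real.exp_add]
        apply Real.exp_le_exp.mpr
        nlinarith
      have hCge : Real.exp ρ ≤ C := by
        rw [hCdef]
        apply Real.exp_le_exp.mpr
        nlinarith
      calc n (t - u) ≤ q ^ m * n t := le_trans hstep1 hstep2
        _ ≤ Real.exp ρ * Real.exp (-(ρ * u)) * n t :=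
            mul_le_mul_of_nonneg_right hstep3 hntpos.le
        _ ≤ C * Real.exp (-(ρ * u)) * n t := by
            gcongr
    · set m : ℕ := ⌊t - T⌋₊ with hmdef
      have htT : (0:ℝ) ≤ t - T := by linarith
      have hm1 : (m:ℝ) ≤ t - T := Nat.floor_le htT
      have hm2 : t - T < m + 1 := Nat.lt_floor_add_one _
      have hstep1 : n (t - u) ≤ n T := hmono' _ _ (by linarith) (by linarith)
      have hstep2 : n T ≤ n (t - m) := hmono' _ _ (by linarith) (by linarith)
      have hstep3 : n (t - m) ≤ q ^ m * n t := hiter m t (by linarith)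
      have hstep4 : q ^ m ≤ Real.exp (ρ * (T + 1)) * Real.exp (-(ρ * u)) := by
        rw [hqpow m, ← Real.exp_add]
        apply Real.exp_le_exp.mpr
        nlinarith
      calc n (t - u) ≤ q ^ m * n t := le_trans hstep1 (le_trans hstep2 hstep3)
        _ ≤ Real.exp (ρ * (T + 1)) * Real.exp (-(ρ * u)) * n t :=
            mul_le_mul_of_nonneg_right hstep4 hntpos.le
        _ = C * Real.exp (-(ρ * u)) * n t := by rw [hCdef]
  -- dominated convergence
  have hkey : ∀ f : ℝ → ℝ, Measurable f → (∀ u : ℝ, 0 ≤ u → |f u| ≤ 1) →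
      Tendsto (fun t : ℝ => (∫ u in Set.Ioc (0:ℝ) t, n (t - u) * f u) / n t) atTop
        (𝓝 (∫ u in Set.Ioi (0:ℝ), Real.exp (-(δ * u)) * f u)) := by
    intro f hfmeas hfbd
    set F : ℝ → ℝ → ℝ :=
      fun t => Set.indicator (Set.Ioc 0 t) (fun u => n (t - u) * f u / n t) with hFdef
    set flim : ℝ → ℝ :=
      Set.indicator (Set.Ioi 0) (fun u => Real.exp (-(δ * u)) * f u) with hflimdef
    set bound : ℝ → ℝ :=
      Set.indicator (Set.Ici 0) (fun u => C * Real.exp (-(ρ * u))) with hbdef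
    have hFint : ∀ t : ℝ, ∫ u, F t u
        = (∫ u in Set.Ioc (0:ℝ) t, n (t - u) * f u) / n t := by
      intro t
      rw [hFdef, MeasureTheory.integral_indicator measurableSet_Ioc,
        MeasureTheory.integral_div]
    have hmain : Tendsto (fun t : ℝ => ∫ u, F t u) atTop (𝓝 (∫ u, flim u)) := by
      apply MeasureTheory.tendsto_integral_filter_of_dominated_convergence bound
      · refine Eventually.of_forall fun t => Measurable.aestronglyMeasurable ?_
        refine Measurable.indicator ?_ measurableSet_Ioc
        exact ((hmeas.comp (measurable_const.sub measurable_id)).mul hfmeas).div_const _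
      · filter_upwards [eventually_ge_atTop T] with t ht
        refine ae_of_all _ fun u => ?_
        by_cases hu : u ∈ Set.Ioc (0:ℝ) t
        · rw [hFdef]
          simp only []
          rw [Set.indicator_of_mem hu, hbdef,
            Set.indicator_of_mem (Set.mem_Ici.mpr hu.1.le)]
          have hu0 : 0 < u := hu.1
          have hntpos : 0 < n t := hpos t (by linarith)
          rw [Real.norm_eq_abs, abs_div, abs_of_pos hntpos, abs_mul,
            abs_of_nonneg (hnonneg _)]
          have h1 : n (t - u) * |f u| ≤ n (t - u) * 1 :=
            mul_le_mul_of_nonneg_left (hfbd u hu0.le) (hnonneg _)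
          have h2 : n (t - u) ≤ C * Real.exp (-(ρ * u)) * n t := hdom t ht u hu0.le hu.2
          rw [div_le_iff₀ hntpos]
          nlinarith [hnonneg (t - u), abs_nonneg (f u)]
        · rw [hFdef]
          simp only []
          rw [Set.indicator_of_notMem hu]
          rw [norm_zero]
          refine Set.indicator_nonneg (fun u' _ => ?_) u
          positivity
      · rw [hbdef]
        refine MeasureTheory.IntegrableOn.integrable_indicator ?_ measurableSet_Ici
        rw [integrableOn_Ici_iff_integrableOn_Ioi]
        have h := (exp_neg_integrableOn_Ioi (0:ℝ) hρpos).const_mul C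
        simpa [neg_mul, IntegrableOn] using h
      · have hae : ({(0:ℝ)}ᶜ : Set ℝ) ∈ ae (volume : Measure ℝ) :=
          MeasureTheory.compl_mem_ae_iff.mpr Real.volume_singleton
        filter_upwards [hae] with u hu'
        have hu : u ≠ 0 := by simpa using hu'
        rcases lt_or_gt_of_ne hu with hneg | hposu
        · have h1 : ∀ t : ℝ, F t u = 0 := by
            intro t
            rw [hFdef]
            simp only []
            refine Set.indicator_of_notMem ?_ _
            simp only [Set.mem_Ioc, not_and_or]
            left; linarith
          have h2 : flim u = 0 := by
            rw [hflimdef]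
            refine Set.indicator_of_notMem ?_ _
            simp only [Set.mem_Ioi, not_lt]
            linarith
          simp only [h1, h2]
          exact tendsto_const_nhds
        · have h2 : flim u = Real.exp (-(δ * u)) * f u := by
            rw [hflimdef]
            exact Set.indicator_of_mem hposu _
          rw [h2]
          have h := (hratio u hposu.le).mul_const (f u)
          refine Tendsto.congr' ?_ h
          filter_upwards [eventually_ge_atTop u] with t htu
          rw [hFdef]
          simp only []
          rw [Set.indicator_of_mem (Set.mem_Ioc.mpr ⟨hposu, htu⟩)]
          ring
    have heq1 : (fun t : ℝ => (∫ u in Set.Ioc (0:ℝ) t, n (t - u) * f u) / n t)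
        = fun t => ∫ u, F t u := by
      funext t; rw [hFint t]
    have heq2 : (∫ u in Set.Ioi (0:ℝ), Real.exp (-(δ * u)) * f u) = ∫ u, flim u := by
      rw [hflimdef, MeasureTheory.integral_indicator measurableSet_Ioi]
    rw [heq1, heq2]
    exact hmain
  -- apply to f = 1 and f = f_k
  have hA : Tendsto (fun t : ℝ => (∫ u in Set.Ioc (0:ℝ) t, n (t - u) * 1) / n t) atTop
      (𝓝 (1 / δ)) := by
    have h := hkey (fun _ => 1) measurable_const (fun u _ => by norm_num)
    have hval : (∫ u in Set.Ioi (0:ℝ), Real.exp (-(δ * u)) * 1) = 1 / δ := by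
      have h2 := ys_integral_exp δ hδpos
      simp only [neg_mul] at h2
      simpa using h2
    rwa [hval] at h
  set fk : ℝ → ℝ := fun u => Real.exp (-u) * (1 - Real.exp (-u)) ^ (k - 1) with hfkdef
  have hfkmeas : Measurable fk := by
    apply Measurable.mul
    · exact (Real.continuous_exp.comp continuous_neg).measurable
    · exact ((continuous_const.sub (Real.continuous_exp.comp continuous_neg)).pow _).measurable
  have hfkbd : ∀ u : ℝ, 0 ≤ u → |fk u| ≤ 1 := by
    intro u hu
    have h1 : Real.exp (-u) ≤ 1 := Real.exp_le_one_iff.mpr (by linarith)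
    have h2 : 0 < Real.exp (-u) := Real.exp_pos _
    have h3 : 0 ≤ 1 - Real.exp (-u) := by linarith
    have h4 : 1 - Real.exp (-u) ≤ 1 := by linarith
    rw [hfkdef]
    simp only []
    rw [abs_mul, abs_of_pos h2, abs_of_nonneg (pow_nonneg h3 _)]
    calc Real.exp (-u) * (1 - Real.exp (-u)) ^ (k - 1)
        ≤ 1 * 1 := by
          apply mul_le_mul h1 (pow_le_one₀ h3 h4) (pow_nonneg h3 _) zero_le_one
      _ = 1 := by norm_num
  have hBval : (∫ u in Set.Ioi (0:ℝ), Real.exp (-(δ * u)) * fk u)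
      = (Nat.factorial (k - 1) : ℝ) / ∏ j ∈ Finset.range k, (δ + 1 + (j:ℝ)) := by
    have heqf : (fun u : ℝ => Real.exp (-(δ * u)) * fk u)
        = fun u : ℝ => Real.exp (-(δ + 1) * u) * (1 - Real.exp (-u)) ^ (k - 1) := by
      funext u
      rw [hfkdef]
      simp only []
      rw [← mul_assoc, ← Real.exp_add]
      congr 2
      ring
    rw [heqf, ys_beta (k - 1) (δ + 1) (by linarith)]
    congr 1
    rw [Nat.sub_add_cancel hk]
  have hB : Tendsto (fun t : ℝ => (∫ u in Set.Ioc (0:ℝ) t, n (t - u) * fk u) / n t) atTop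
      (𝓝 ((Nat.factorial (k - 1) : ℝ) / ∏ j ∈ Finset.range k, (δ + 1 + (j:ℝ)))) := by
    have h := hkey fk hfkmeas hfkbd
    rwa [hBval] at h
  -- combine
  have hAne : (1:ℝ) / δ ≠ 0 := by positivity
  have hDiv := hB.div hA hAne
  have hfin : ((Nat.factorial (k - 1) : ℝ) / ∏ j ∈ Finset.range k, (δ + 1 + (j:ℝ))) / (1 / δ)
      = δ * (Nat.factorial (k - 1) : ℝ) / ∏ j ∈ Finset.Icc 1 k, (δ + (j:ℝ)) := by
    have hPpos : 0 < ∏ j ∈ Finset.range k, (δ + 1 + (j:ℝ)) :=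
      Finset.prod_pos (fun j _ => by positivity)
    rw [ys_prod_Icc δ k]
    field_simp
  rw [hfin] at hDiv
  refine Tendsto.congr' ?_ hDiv
  filter_upwards [eventually_ge_atTop (max T 1)] with t ht
  have ht1 : (1:ℝ) ≤ t := le_trans (le_max_right _ _) ht
  have htpos : (0:ℝ) < t := by linarith
  have hntpos : 0 < n t := hpos t htpos
  -- rewrite the two interval integrals
  have ha : (∫ τ in (0:ℝ)..t, n τ) = ∫ u in Set.Ioc (0:ℝ) t, n (t - u) * 1 := by
    have h1 := intervalIntegral.integral_comp_sub_left (a := (0:ℝ)) (b := t) n t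
    simp only [sub_zero, sub_self] at h1
    rw [← h1]
    rw [intervalIntegral.integral_of_le htpos.le]
    simp only [mul_one]
  have hI : (∫ τ in (0:ℝ)..t,
        n τ * (Real.exp (-(t - τ)) * (1 - Real.exp (-(t - τ))) ^ (k - 1)))
      = ∫ u in Set.Ioc (0:ℝ) t, n (t - u) * fk u := by
    have h1 := intervalIntegral.integral_comp_sub_left (a := (0:ℝ)) (b := t)
      (fun τ => n τ * (Real.exp (-(t - τ)) * (1 - Real.exp (-(t - τ))) ^ (k - 1))) t
    simp only [sub_zero, sub_self] at h1
    rw [← h1]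
    rw [intervalIntegral.integral_of_le htpos.le]
    refine MeasureTheory.setIntegral_congr_fun measurableSet_Ioc fun u _ => ?_
    rw [hfkdef]
    simp only [sub_sub_cancel]
  rw [ha, hI]
  set I := ∫ u in Set.Ioc (0:ℝ) t, n (t - u) * fk u
  set a := ∫ u in Set.Ioc (0:ℝ) t, n (t - u) * 1
  show I / n t / (a / n t) = 1 / a * I
  by_cases ha0 : a = 0
  · simp [ha0]
  · field_simp
end

section
/- Let β ∈ [0,1), λ = 1−β, let n satisfy Assumption 1, and set γ* = δ*/λ. Suppose that for every integer k ≥ 1 the limit L_k = lim_{t→∞} (1/n_t)·∫_0^t n_τ·P(Z_{t−τ} = k) dτ exists. Then lim_{k→∞} k^{γ*+1}·L_k = Γ(1+γ*)/λ^{γ*}, where Γ is the Gamma function; i.e. the large-time clone size distribution has a power-law tail with exponent 1+γ*. -/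
open Filter Real intervalIntegral

section Auxiliary

open MeasureTheory

lemma pmf_eq (β : ℝ) (hβ0 : 0 ≤ β) (hβ1 : β < 1) (u : ℝ) (hu : 0 < u) (m : ℕ) :
    birthDeathPMF β u (m + 1) =
      (1 - β) ^ 2 * Real.exp (-(1 - β) * u) * (1 - Real.exp (-(1 - β) * u)) ^ m
        / (1 - β * Real.exp (-(1 - β) * u)) ^ (m + 2) := by
  set x := Real.exp (-(1 - β) * u) with hxdef
  have hx0 : 0 < x := Real.exp_pos _
  have hx1 : x < 1 := by
    rw [hxdef]
    have h : -(1 - β) * u < 0 := by nlinarith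
    calc Real.exp (-(1 - β) * u) < Real.exp 0 := Real.exp_lt_exp.2 h
    _ = 1 := Real.exp_zero
  have h1 : (1 : ℝ) - x ≠ 0 := by nlinarith
  have h2 : (1 : ℝ) - β * x ≠ 0 := by nlinarith
  unfold birthDeathPMF birthDeathS
  rw [← hxdef]
  have hS : (1 - β * x) / (1 - x) ≠ 0 := by
    apply div_ne_zero h2 h1
  rw [show ((1 - β * x) / (1 - x))⁻¹ = (1 - x) / (1 - β * x) by rw [inv_div]]
  rw [div_pow]
  field_simp
  ring

lemma n_contIci (n : ℝ → ℝ) (hn : Assumption1 n) : ContinuousOn n (Set.Ici 0) := by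
  obtain ⟨hneg, hcont, hrc, hpos, hmono, hlim⟩ := hn
  intro x hx
  rcases eq_or_lt_of_le (Set.mem_Ici.1 hx) with h | h
  · subst h
    unfold ContinuousWithinAt
    rw [← Set.Ioi_union_left, nhdsWithin_union]
    rw [tendsto_sup]
    refine ⟨?_, ?_⟩
    · exact hrc
    · rw [nhdsWithin_singleton]
      exact tendsto_pure_nhds n 0
  · exact ((hcont.continuousAt (Ioi_mem_nhds h)).continuousWithinAt)

set_option maxHeartbeats 2000000 in
lemma stepA (n : ℝ → ℝ) (hn : Assumption1 n) (δ : ℝ)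
    (hδlim : Tendsto (fun t : ℝ => Real.log (n t) / t) atTop (nhds δ)) :
    ∀ u : ℝ, 0 ≤ u →
      Tendsto (fun t => n (t - u) / n t) atTop (nhds (Real.exp (-δ * u))) := by
  obtain ⟨hneg, hcont, hrc, hpos, hmono, hlim⟩ := hn
  choose! g hgpos hgtend using hlim
  have hg0 : g 0 = 1 := by
    refine tendsto_nhds_unique (hgtend 0 le_rfl) ?_
    refine Tendsto.congr' ?_ tendsto_const_nhds
    filter_upwards [eventually_gt_atTop 0] with t ht
    rw [sub_zero, div_self (ne_of_gt (hpos t ht))]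
  have hmul : ∀ x, 0 ≤ x → ∀ y, 0 ≤ y → g (x + y) = g x * g y := by
    intro x hx y hy
    refine tendsto_nhds_unique (hgtend (x + y) (by linarith)) ?_
    have hty : Tendsto (fun t : ℝ => t + -y) atTop atTop :=
      tendsto_atTop_add_const_right atTop (-y) tendsto_id
    have h1 : Tendsto (fun t : ℝ => n (t + -y - x) / n (t + -y)) atTop (nhds (g x)) :=
      (hgtend x hx).comp hty
    have h2 : Tendsto (fun t : ℝ => n (t - y) / n t) atTop (nhds (g y)) := hgtend y hy
    refine Tendsto.congr' ?_ (h1.mul h2)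
    filter_upwards [eventually_gt_atTop y] with t ht
    have hb : n (t - y) ≠ 0 := ne_of_gt (hpos _ (by linarith))
    have : t + -y - x = t - (x + y) := by ring
    rw [this, show t + -y = t - y by ring]
    rw [div_mul_div_comm, mul_comm (n (t - y)) (n t), mul_div_mul_right _ _ hb]
  have hanti : ∀ x, 0 ≤ x → ∀ y, x ≤ y → g y ≤ g x := by
    intro x hx y hxy
    refine le_of_tendsto_of_tendsto (hgtend y (hx.trans hxy)) (hgtend x hx) ?_
    filter_upwards [eventually_gt_atTop (max y 0)] with t ht
    have h1 : 0 < t - y := by have := (max_lt_iff.1 (lt_of_le_of_lt (le_refl _) ht)).1; linarith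
    have h2 : 0 < t - x := by linarith
    have h0 : 0 < t := by have := (max_lt_iff.1 (lt_of_le_of_lt (le_refl _) ht)).2; linarith
    have hle : n (t - y) ≤ n (t - x) :=
      hmono (Set.mem_Ioi.2 h1) (Set.mem_Ioi.2 h2) (by linarith)
    exact (div_le_div_iff_of_pos_right (hpos t h0)).2 hle
  have hpow : ∀ (m : ℕ) (x : ℝ), 0 ≤ x → g ((m : ℝ) * x) = g x ^ m := by
    intro m
    induction m with
    | zero => intro x hx; simp [hg0]
    | succ m ih =>
      intro x hx
      have : ((m : ℝ) + 1) * x = (m : ℝ) * x + x := by ring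
      push_cast
      rw [this, hmul _ (by positivity) _ hx, ih x hx, pow_succ]
  set c : ℝ := Real.log (g 1) with hc
  have hg1pos : 0 < g 1 := hgpos 1 zero_le_one
  have hc0 : c ≤ 0 := by
    have hle : g 1 ≤ 1 := hg0 ▸ hanti 0 le_rfl 1 zero_le_one
    exact Real.log_nonpos hg1pos.le hle
  have hrat : ∀ q : ℚ, 0 ≤ q → Real.log (g (q : ℝ)) = c * (q : ℝ) := by
    intro q hq
    have hqR : (0 : ℝ) ≤ (q : ℝ) := by exact_mod_cast hq
    have hd : ((q.den : ℝ)) ≠ 0 := by positivity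
    have hnum : (0 : ℤ) ≤ q.num := Rat.num_nonneg.2 hq
    set p : ℕ := q.num.toNat with hp
    have hpq : ((p : ℝ)) = (q.num : ℝ) := by exact_mod_cast Int.toNat_of_nonneg hnum
    have hqd : ((q.den : ℝ)) * (q : ℝ) = (p : ℝ) := by
      rw [hpq, Rat.cast_def]; field_simp
    have e1 : g ((q.den : ℝ) * (q : ℝ)) = g (q : ℝ) ^ q.den := hpow q.den _ hqR
    have e2 : g ((p : ℝ) * 1) = g 1 ^ p := hpow p 1 zero_le_one
    rw [mul_one] at e2
    rw [hqd, e2] at e1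
    have := congrArg Real.log e1
    rw [Real.log_pow, Real.log_pow] at this
    have hgq : Real.log (g (q : ℝ)) = ((p : ℝ) / (q.den : ℝ)) * c := by
      field_simp at this ⊢
      linarith [this]
    rw [hgq, hpq, Rat.cast_def]; ring
  have hlog : ∀ x : ℝ, 0 ≤ x → Real.log (g x) = c * x := by
    intro x hx
    rcases eq_or_lt_of_le hx with h | hxpos
    · rw [← h, hg0, Real.log_one, mul_zero]
    have hmono' : ∀ a b : ℝ, 0 ≤ a → a ≤ b → Real.log (g b) ≤ Real.log (g a) := by
      intro a b ha hab
      exact Real.log_le_log (hgpos b (ha.trans hab)) (hanti a ha b hab)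
    have hcpos : (0:ℝ) < 1 - c := by linarith
    refine le_antisymm ?_ ?_
    · refine le_of_forall_pos_le_add ?_
      intro ε hε
      have hlt : x - min x (ε / (1 - c)) < x := by
        have : 0 < min x (ε / (1 - c)) := lt_min hxpos (by positivity)
        linarith
      obtain ⟨q, hq1, hq2⟩ := exists_rat_btwn hlt
      have hq0 : (0:ℝ) ≤ (q:ℝ) := by
        have : x - min x (ε / (1 - c)) ≥ 0 := by
          have := min_le_left x (ε / (1 - c)); linarith
        linarith
      have h1 : Real.log (g x) ≤ Real.log (g (q:ℝ)) := hmono' _ _ hq0 hq2.le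
      rw [hrat q (by exact_mod_cast hq0)] at h1
      have h2 : x - (q:ℝ) < ε / (1 - c) := by
        have := min_le_right x (ε / (1 - c)); linarith
      have hd : (ε / (1 - c)) * (1 - c) = ε := div_mul_cancel₀ _ (ne_of_gt hcpos)
      have hd0 : 0 ≤ ε / (1 - c) := le_of_lt (div_pos hε hcpos)
      have key : (-c) * (x - (q:ℝ)) ≤ (-c) * (ε / (1 - c)) :=
        mul_le_mul_of_nonneg_left h2.le (neg_nonneg.2 hc0)
      nlinarith [key, hd, hd0]
    · refine le_of_forall_pos_le_add ?_
      intro ε hε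
      have hd0 : 0 < ε / (1 - c) := div_pos hε hcpos
      obtain ⟨q, hq1, hq2⟩ := exists_rat_btwn (show x < x + ε / (1 - c) by linarith)
      have hq0 : (0:ℝ) ≤ (q:ℝ) := le_of_lt (lt_of_le_of_lt hx hq1)
      have h1 : Real.log (g (q:ℝ)) ≤ Real.log (g x) := hmono' _ _ hx hq1.le
      rw [hrat q (by exact_mod_cast hq0)] at h1
      have h2 : (q:ℝ) - x < ε / (1 - c) := by linarith
      have hd : (ε / (1 - c)) * (1 - c) = ε := div_mul_cancel₀ _ (ne_of_gt hcpos)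
      have key : (-c) * ((q:ℝ) - x) ≤ (-c) * (ε / (1 - c)) :=
        mul_le_mul_of_nonneg_left h2.le (neg_nonneg.2 hc0)
      nlinarith [key, hd, hd0.le]
  have hgexp : ∀ x : ℝ, 0 ≤ x → g x = Real.exp (c * x) := by
    intro x hx
    rw [← hlog x hx, Real.exp_log (hgpos x hx)]
  -- identify c with -δ
  have hg1exp : g 1 = Real.exp c := by
    rw [hc, Real.exp_log hg1pos]
  have h1 : Tendsto (fun t : ℝ => n (t - 1) / n t) atTop (nhds (Real.exp c)) := by
    rw [← hg1exp]; exact hgtend 1 zero_le_one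
  have hlogratio : Tendsto (fun t : ℝ => Real.log (n t) - Real.log (n (t - 1)))
      atTop (nhds (-c)) := by
    have hcont_log : Tendsto (fun t : ℝ => Real.log (n (t - 1) / n t)) atTop (nhds c) := by
      have := (Real.continuousAt_log (ne_of_gt (Real.exp_pos c))).tendsto.comp h1
      simpa [Real.log_exp, Function.comp_def] using this
    have := hcont_log.neg
    rw [show -c = -c by rfl] at this
    refine Tendsto.congr' ?_ this
    filter_upwards [eventually_gt_atTop 1] with t ht
    rw [Real.log_div (ne_of_gt (hpos _ (by linarith))) (ne_of_gt (hpos _ (by linarith)))]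
    ring
  have hcompN : Tendsto (fun i : ℕ => (i : ℝ) + 2) atTop atTop :=
    tendsto_atTop_add_const_right atTop 2 tendsto_natCast_atTop_atTop
  set a : ℕ → ℝ := fun i => Real.log (n ((i : ℝ) + 2)) - Real.log (n ((i : ℝ) + 1)) with ha
  have hatend : Tendsto a atTop (nhds (-c)) := by
    have := hlogratio.comp hcompN
    refine Tendsto.congr' ?_ this
    filter_upwards with i
    simp only [Function.comp]
    rw [show (i : ℝ) + 2 - 1 = (i : ℝ) + 1 by ring]
  have hces : Tendsto (fun N : ℕ => (N : ℝ)⁻¹ * ∑ i ∈ Finset.range N, a i)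
      atTop (nhds (-c)) := hatend.cesaro
  have htel : ∀ N : ℕ, ∑ i ∈ Finset.range N, a i
      = Real.log (n ((N : ℝ) + 1)) - Real.log (n 1) := by
    intro N
    have h := Finset.sum_range_sub (fun i : ℕ => Real.log (n ((i : ℝ) + 1))) N
    rw [show ((0:ℕ):ℝ) + 1 = (1:ℝ) by norm_num] at h
    rw [← h]
    apply Finset.sum_congr rfl
    intro i _
    rw [show (((i+1:ℕ)):ℝ) + 1 = (i:ℝ) + 2 by push_cast; ring]
  have hces2 : Tendsto (fun N : ℕ => (N : ℝ)⁻¹ * Real.log (n ((N : ℝ) + 1)))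
      atTop (nhds (-c)) := by
    have hN0 : Tendsto (fun N : ℕ => ((N : ℝ))⁻¹) atTop (nhds 0) :=
      tendsto_inv_atTop_zero.comp tendsto_natCast_atTop_atTop
    have h0 : Tendsto (fun N : ℕ => (N : ℝ)⁻¹ * Real.log (n 1)) atTop (nhds 0) := by
      simpa using hN0.mul_const (Real.log (n 1))
    have h1' : Tendsto (fun N : ℕ => (N : ℝ)⁻¹ * (Real.log (n ((N : ℝ) + 1)) - Real.log (n 1)))
        atTop (nhds (-c)) := hces.congr (fun N => by rw [htel N])
    have h2' := h1'.add h0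
    rw [add_zero] at h2'
    refine Tendsto.congr ?_ h2'
    intro N; ring
  have hδN : Tendsto (fun N : ℕ => Real.log (n ((N : ℝ) + 1)) / ((N : ℝ) + 1))
      atTop (nhds δ) := by
    have hcomp1 : Tendsto (fun i : ℕ => (i : ℝ) + 1) atTop atTop :=
      tendsto_atTop_add_const_right atTop 1 tendsto_natCast_atTop_atTop
    exact hδlim.comp hcomp1
  have hfrac : Tendsto (fun N : ℕ => ((N : ℝ) + 1) * (N : ℝ)⁻¹) atTop (nhds 1) := by
    have h0 : Tendsto (fun N : ℕ => 1 + (N : ℝ)⁻¹) atTop (nhds 1) := by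
      have := (tendsto_inv_atTop_zero.comp tendsto_natCast_atTop_atTop).const_add (1:ℝ)
      simpa using this
    refine Tendsto.congr' ?_ h0
    filter_upwards [eventually_ge_atTop 1] with N hN
    have : (N : ℝ) ≠ 0 := by
      have : (1:ℝ) ≤ (N:ℝ) := by exact_mod_cast hN
      linarith
    field_simp
  have hmain : Tendsto (fun N : ℕ => (N : ℝ)⁻¹ * Real.log (n ((N : ℝ) + 1)))
      atTop (nhds (δ * 1)) := by
    have := hδN.mul hfrac
    refine Tendsto.congr' ?_ this
    filter_upwards [eventually_ge_atTop 1] with N hN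
    have hN0 : (N : ℝ) ≠ 0 := by
      have : (1:ℝ) ≤ (N:ℝ) := by exact_mod_cast hN
      linarith
    have hN1 : (N : ℝ) + 1 ≠ 0 := by positivity
    field_simp
  have hcδ : -c = δ := by
    have := tendsto_nhds_unique hces2 hmain
    rw [mul_one] at this
    exact this
  intro u hu
  have := hgtend u hu
  rw [hgexp u hu] at this
  rw [show -δ * u = c * u by rw [← hcδ]; ring]
  exact this

lemma delta_nonneg (n : ℝ → ℝ) (hn : Assumption1 n) (δ : ℝ)
    (hδlim : Tendsto (fun t : ℝ => Real.log (n t) / t) atTop (nhds δ)) : 0 ≤ δ := by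
  obtain ⟨hneg, hcont, hrc, hpos, hmono, hlim⟩ := hn
  have h0 : Tendsto (fun t : ℝ => Real.log (n 1) / t) atTop (nhds 0) :=
    tendsto_const_nhds.div_atTop tendsto_id
  refine le_of_tendsto_of_tendsto h0 hδlim ?_
  filter_upwards [eventually_gt_atTop 1] with t ht
  have h1 : n 1 ≤ n t := hmono (Set.mem_Ioi.2 one_pos) (Set.mem_Ioi.2 (by linarith)) ht.le
  have h2 : Real.log (n 1) ≤ Real.log (n t) := Real.log_le_log (hpos 1 one_pos) h1
  exact (div_le_div_iff_of_pos_right (by linarith : (0:ℝ) < t)).2 h2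

set_option maxHeartbeats 2000000 in
lemma stepC (β : ℝ) (hβ0 : 0 ≤ β) (hβ1 : β < 1)
    (n : ℝ → ℝ) (hn : Assumption1 n) (δ : ℝ) (hδ0 : 0 ≤ δ)
    (hA : ∀ u : ℝ, 0 ≤ u →
      Tendsto (fun t => n (t - u) / n t) atTop (nhds (Real.exp (-δ * u))))
    (k : ℕ) :
    Tendsto
      (fun t : ℝ => (1 / n t) * ∫ τ in (0:ℝ)..t, n τ * birthDeathPMF β (t - τ) (k + 1))
      atTop
      (nhds (∫ x in Set.Ioo (0:ℝ) 1,
        x ^ (δ / (1 - β)) * ((1 - β) * ((1 - x) ^ k / (1 - β * x) ^ (k + 2))))) := by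
  obtain ⟨hneg, hcont, hrc, hpos, hmono, hlim⟩ := hn
  have hIci : ContinuousOn n (Set.Ici 0) := n_contIci n ⟨hneg, hcont, hrc, hpos, hmono, hlim⟩
  set lam : ℝ := 1 - β with hlamdef
  have hlam0 : 0 < lam := by rw [hlamdef]; linarith
  set R : ℝ → ℝ := fun x => lam * ((1 - x) ^ k / (1 - β * x) ^ (k + 2)) with hRdef
  set H : ℝ → ℝ → ℝ := fun t x => (n (t + Real.log x / lam) / n t) * R x with hHdef
  set μ : Measure ℝ := volume.restrict (Set.Ioo (0:ℝ) 1) with hμdef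
  set Qc : ℝ → ℝ := fun u => (1 - β) ^ 2 * Real.exp (-(1 - β) * u) *
      (1 - Real.exp (-(1 - β) * u)) ^ k / (1 - β * Real.exp (-(1 - β) * u)) ^ (k + 2)
    with hQcdef
  -- continuity facts
  have hQccont : ContinuousOn Qc (Set.Ici 0) := by
    apply ContinuousOn.div
    · fun_prop
    · fun_prop
    · intro u hu
      simp only [Set.mem_Ici] at hu
      have h1 : Real.exp (-(1 - β) * u) ≤ Real.exp 0 := Real.exp_le_exp.2 (by nlinarith)
      rw [Real.exp_zero] at h1
      have h2 : β * Real.exp (-(1 - β) * u) ≤ β := by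
        nlinarith [Real.exp_pos (-(1 - β) * u)]
      have h3 : (0:ℝ) < 1 - β * Real.exp (-(1 - β) * u) := by linarith
      positivity
  -- the key pointwise identity for each t > 0
  have hkey : ∀ t : ℝ, 0 < t →
      (1 / n t) * ∫ τ in (0:ℝ)..t, n τ * birthDeathPMF β (t - τ) (k + 1)
        = ∫ x, (Set.Ioi (Real.exp (-lam * t))).indicator (H t) x ∂μ := by
    intro t ht
    set a : ℝ := Real.exp (-lam * t) with hadef
    have ha0 : 0 < a := Real.exp_pos _
    have ha1 : a < 1 := by
      rw [hadef, show (1:ℝ) = Real.exp 0 from (Real.exp_zero).symm]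
      exact Real.exp_lt_exp.2 (by nlinarith)
    -- (i) reflect
    have e1 : (∫ τ in (0:ℝ)..t, n τ * birthDeathPMF β (t - τ) (k + 1))
        = ∫ u in (0:ℝ)..t, n (t - u) * birthDeathPMF β u (k + 1) := by
      have h := intervalIntegral.integral_comp_sub_left
        (fun u => n (t - u) * birthDeathPMF β u (k + 1)) t (a := 0) (b := t)
      simp only [sub_self, sub_zero] at h
      rw [← h]
      apply intervalIntegral.integral_congr
      intro τ _
      simp [sub_sub_cancel]
    -- (ii) replace the PMF by its closed form
    have e2 : (∫ u in (0:ℝ)..t, n (t - u) * birthDeathPMF β u (k + 1))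
        = ∫ u in (0:ℝ)..t, n (t - u) * Qc u := by
      rw [intervalIntegral.integral_of_le ht.le, intervalIntegral.integral_of_le ht.le]
      apply MeasureTheory.setIntegral_congr_fun measurableSet_Ioc
      intro u hu
      show n (t - u) * birthDeathPMF β u (k + 1) = n (t - u) * Qc u
      rw [pmf_eq β hβ0 hβ1 u hu.1 k, hQcdef]
    -- (iii) substitution x = exp(-lam u)
    set φ : ℝ → ℝ := fun x => -Real.log x / lam with hφdef
    set φ' : ℝ → ℝ := fun x => -x⁻¹ / lam with hφ'def
    set gbar : ℝ → ℝ := fun u => n (t - u) * Qc u with hgbardef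
    have hφa : φ a = t := by
      rw [hφdef]; simp only [hadef, Real.log_exp]
      field_simp
    have hφ1 : φ 1 = 0 := by rw [hφdef]; simp
    have huIcc : Set.uIcc a 1 = Set.Icc a 1 := Set.uIcc_of_le ha1.le
    have hsub0 : Set.Icc a 1 ⊆ {x : ℝ | x ≠ 0} := by
      intro x hx; exact ne_of_gt (lt_of_lt_of_le ha0 hx.1)
    have hφcont : ContinuousOn φ (Set.uIcc a 1) := by
      rw [huIcc, hφdef]
      exact ((Real.continuousOn_log.mono (by simpa using ha0)).neg).div_const lam
    have hφ'cont : ContinuousOn φ' (Set.uIcc a 1) := by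
      rw [huIcc, hφ'def]
      exact (((continuousOn_id.inv₀ (fun x hx => hsub0 hx)).neg).div_const lam)
    have hφderiv : ∀ x ∈ Set.Ioo (min a 1) (max a 1), HasDerivWithinAt φ (φ' x) (Set.Ioi x) x := by
      intro x hx
      rw [min_eq_left ha1.le, max_eq_right ha1.le] at hx
      have hx0 : x ≠ 0 := ne_of_gt (lt_trans ha0 hx.1)
      have : HasDerivAt φ (φ' x) x := by
        rw [hφdef, hφ'def]
        simpa using ((Real.hasDerivAt_log hx0).neg).div_const lam
      exact this.hasDerivWithinAt
    have himg : φ '' (Set.uIcc a 1) ⊆ Set.Icc 0 t := by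
      rw [huIcc]
      rintro y ⟨x, hx, rfl⟩
      have hx0 : 0 < x := lt_of_lt_of_le ha0 hx.1
      constructor
      · rw [hφdef]
        simp only
        apply div_nonneg _ hlam0.le
        simp only [neg_nonneg]
        exact Real.log_nonpos hx0.le hx.2
      · rw [hφdef]
        simp only
        rw [div_le_iff₀ hlam0]
        have := Real.log_le_log ha0 hx.1
        rw [hadef, Real.log_exp] at this
        nlinarith
    have hgbarcont : ContinuousOn gbar (φ '' Set.uIcc a 1) := by
      apply ContinuousOn.mono _ himg
      rw [hgbardef]
      apply ContinuousOn.mul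
      · apply hIci.comp (continuous_const.sub continuous_id).continuousOn
        intro u hu
        exact Set.mem_Ici.2 (by simp only [Set.mem_Icc] at hu; simp; linarith [hu.2])
      · exact hQccont.mono (fun u hu => Set.mem_Ici.2 hu.1)
    have hsub := intervalIntegral.integral_comp_mul_deriv'' hφcont hφderiv hφ'cont hgbarcont
    rw [hφa, hφ1] at hsub
    -- hsub : ∫ x in a..1, (gbar ∘ φ) x * φ' x = ∫ u in t..0, gbar u
    have e3 : (∫ u in (0:ℝ)..t, gbar u) = ∫ x in a..1, (gbar ∘ φ) x * (x⁻¹ / lam) := by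
      have h1 : (∫ x in a..1, (gbar ∘ φ) x * φ' x)
          = ∫ x in a..1, -((gbar ∘ φ) x * (x⁻¹ / lam)) := by
        apply intervalIntegral.integral_congr
        intro x _
        rw [hφ'def]
        ring
      rw [h1, intervalIntegral.integral_neg, intervalIntegral.integral_symm 0 t] at hsub
      linarith [hsub]
    -- (iv) identify with H t
    have e4 : (1 / n t) * (∫ x in a..1, (gbar ∘ φ) x * (x⁻¹ / lam))
        = ∫ x in a..1, H t x := by
      rw [← intervalIntegral.integral_const_mul]
      rw [intervalIntegral.integral_of_le ha1.le, intervalIntegral.integral_of_le ha1.le]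
      apply MeasureTheory.setIntegral_congr_fun measurableSet_Ioc
      intro x hx
      have hx0 : 0 < x := lt_trans ha0 hx.1
      have hexp : Real.exp (-(1 - β) * φ x) = x := by
        rw [hφdef]
        simp only
        rw [show -(1 - β) * (-Real.log x / lam) = Real.log x by rw [hlamdef]; field_simp [show (1:ℝ) - β ≠ 0 by linarith]]
        exact Real.exp_log hx0
      have harg : t - φ x = t + Real.log x / lam := by
        rw [hφdef]; ring
      simp only [Function.comp, hgbardef, hQcdef, hexp, harg, hHdef, hRdef]
      have hnt : n t ≠ 0 := ne_of_gt (hpos t ht)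
      have hden : (1 - β * x) ^ (k + 2) ≠ 0 := by
        have : 0 < 1 - β * x := by nlinarith [hx.2]
        positivity
      rw [hlamdef]
      field_simp
    -- (v) as an integral against μ
    have e5 : (∫ x in a..1, H t x) = ∫ x, (Set.Ioi a).indicator (H t) x ∂μ := by
      rw [MeasureTheory.integral_indicator measurableSet_Ioi]
      rw [hμdef, Measure.restrict_restrict measurableSet_Ioi]
      rw [show Set.Ioi a ∩ Set.Ioo 0 1 = Set.Ioo a 1 by
        ext y
        simp only [Set.mem_inter_iff, Set.mem_Ioi, Set.mem_Ioo]
        constructor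
        · rintro ⟨h1, _, h3⟩; exact ⟨h1, h3⟩
        · rintro ⟨h1, h2⟩; exact ⟨h1, lt_trans ha0 h1, h2⟩]
      rw [intervalIntegral.integral_of_le ha1.le, MeasureTheory.integral_Ioc_eq_integral_Ioo]
    rw [e1, e2, e3, e4, e5]
  set lfun : ℝ → ℝ := fun x => x ^ (δ / (1 - β)) * R x with hldef
  have hDCT : Tendsto (fun t : ℝ => ∫ x, (Set.Ioi (Real.exp (-lam * t))).indicator (H t) x ∂μ)
      atTop (nhds (∫ x, lfun x ∂μ)) := by
    apply MeasureTheory.tendsto_integral_filter_of_dominated_convergence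
      (bound := fun _ => lam * (1 / lam ^ (k + 2)))
    · -- a.e. strong measurability
      filter_upwards [eventually_gt_atTop (0:ℝ)] with t ht
      set a : ℝ := Real.exp (-lam * t) with hadef
      have ha0 : 0 < a := Real.exp_pos _
      have ha1 : a < 1 := by
        rw [hadef, show (1:ℝ) = Real.exp 0 from (Real.exp_zero).symm]
        exact Real.exp_lt_exp.2 (by nlinarith)
      apply (aestronglyMeasurable_indicator_iff measurableSet_Ioi).2
      have hHcont : ContinuousOn (H t) (Set.Ioo a 1) := by
        rw [hHdef]
        apply ContinuousOn.mul
        · apply ContinuousOn.div_const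
          apply hcont.comp
          · apply ContinuousOn.add continuousOn_const
            apply ContinuousOn.div_const
            apply Real.continuousOn_log.mono
            intro x hx
            simp only [Set.mem_compl_iff, Set.mem_singleton_iff]
            exact ne_of_gt (lt_trans ha0 hx.1)
          · intro x hx
            have hlog : Real.log a < Real.log x := Real.log_lt_log ha0 hx.1
            rw [hadef, Real.log_exp] at hlog
            rw [Set.mem_Ioi]
            have : -t < Real.log x / lam := by
              rw [lt_div_iff₀ hlam0]
              nlinarith
            linarith
        · apply ContinuousOn.mul continuousOn_const
          apply ContinuousOn.div
          · fun_prop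
          · fun_prop
          · intro x hx
            have : 0 < 1 - β * x := by nlinarith [hx.2, lt_trans ha0 hx.1]
            positivity
      have hmeq : μ.restrict (Set.Ioi a) = volume.restrict (Set.Ioo a 1) := by
        rw [hμdef, Measure.restrict_restrict measurableSet_Ioi]
        congr 1
        ext y
        simp only [Set.mem_inter_iff, Set.mem_Ioi, Set.mem_Ioo]
        constructor
        · rintro ⟨h1, _, h3⟩; exact ⟨h1, h3⟩
        · rintro ⟨h1, h2⟩; exact ⟨h1, lt_trans ha0 h1, h2⟩
      rw [hmeq]
      exact hHcont.aestronglyMeasurable measurableSet_Ioo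
    · -- a.e. bound
      filter_upwards [eventually_gt_atTop (0:ℝ)] with t ht
      rw [hμdef]
      filter_upwards [MeasureTheory.ae_restrict_mem measurableSet_Ioo] with x hx
      set a : ℝ := Real.exp (-lam * t) with hadef
      by_cases hxa : x ∈ Set.Ioi a
      · rw [Set.indicator_of_mem hxa]
        have hx0 : 0 < x := hx.1
        have hx1 : x < 1 := hx.2
        have hθ0 : 0 < t + Real.log x / lam := by
          have hlog : Real.log a < Real.log x := Real.log_lt_log (Real.exp_pos _) hxa
          rw [hadef, Real.log_exp] at hlog
          have : -t < Real.log x / lam := by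
            rw [lt_div_iff₀ hlam0]; nlinarith
          linarith
        have hθt : t + Real.log x / lam ≤ t := by
          have : Real.log x ≤ 0 := Real.log_nonpos hx0.le hx1.le
          have : Real.log x / lam ≤ 0 := div_nonpos_of_nonpos_of_nonneg this hlam0.le
          linarith
        have hrat0 : 0 ≤ n (t + Real.log x / lam) / n t :=
          div_nonneg (hpos _ hθ0).le (hpos t ht).le
        have hrat1 : n (t + Real.log x / lam) / n t ≤ 1 := by
          rw [div_le_one (hpos t ht)]
          exact hmono (Set.mem_Ioi.2 hθ0) (Set.mem_Ioi.2 ht) hθt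
        have hR0 : 0 ≤ R x := by
          rw [hRdef]
          have h1 : (0:ℝ) ≤ 1 - x := by linarith
          have h2 : (0:ℝ) < 1 - β * x := by nlinarith
          positivity
        have hRle : R x ≤ lam * (1 / lam ^ (k + 2)) := by
          rw [hRdef]
          apply mul_le_mul_of_nonneg_left _ hlam0.le
          apply div_le_div₀ zero_le_one
          · exact pow_le_one₀ (by linarith) (by linarith)
          · positivity
          · apply pow_le_pow_left₀ hlam0.le
            rw [hlamdef]
            nlinarith
        rw [hHdef]
        rw [Real.norm_eq_abs, abs_of_nonneg (mul_nonneg hrat0 hR0)]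
        calc n (t + Real.log x / lam) / n t * R x ≤ 1 * R x :=
              mul_le_mul_of_nonneg_right hrat1 hR0
          _ = R x := one_mul _
          _ ≤ lam * (1 / lam ^ (k + 2)) := hRle
      · rw [Set.indicator_of_notMem hxa]
        simp only [norm_zero]
        positivity
    · -- integrable bound
      rw [hμdef]
      exact MeasureTheory.integrableOn_const measure_Ioo_lt_top.ne
    · -- a.e. pointwise convergence
      rw [hμdef]
      filter_upwards [MeasureTheory.ae_restrict_mem measurableSet_Ioo] with x hx
      have hx0 : 0 < x := hx.1
      have hx1 : x < 1 := hx.2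
      set u : ℝ := -Real.log x / lam with hudef
      have hu0 : 0 ≤ u := by
        rw [hudef]
        apply div_nonneg _ hlam0.le
        simp only [neg_nonneg]
        exact Real.log_nonpos hx0.le hx1.le
      have hlim' := (hA u hu0).mul_const (R x)
      have hval : Real.exp (-δ * u) * R x = lfun x := by
        rw [hldef]
        simp only
        congr 1
        rw [Real.rpow_def_of_pos hx0, hudef]
        congr 1
        rw [hlamdef]
        field_simp
      rw [hval] at hlim'
      refine Tendsto.congr' ?_ hlim'
      filter_upwards [eventually_gt_atTop u] with t htu
      have hmem : x ∈ Set.Ioi (Real.exp (-lam * t)) := by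
        rw [Set.mem_Ioi, show x = Real.exp (Real.log x) from (Real.exp_log hx0).symm]
        apply Real.exp_lt_exp.2
        rw [hudef] at htu
        have : -Real.log x / lam < t := htu
        rw [div_lt_iff₀ hlam0] at this
        nlinarith
      rw [Set.indicator_of_mem hmem, hHdef]
      simp only
      congr 2
      rw [hudef]
      field_simp
      ring_nf
  have hfinal := hDCT
  refine Tendsto.congr' ?_ hfinal
  filter_upwards [eventually_gt_atTop (0:ℝ)] with t ht
  exact (hkey t ht).symm

set_option maxHeartbeats 2000000 in
lemma stepD (β : ℝ) (hβ0 : 0 ≤ β) (hβ1 : β < 1) (γ : ℝ) (hγ0 : 0 ≤ γ) :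
    Tendsto (fun j : ℕ => ((j : ℝ) + 1) ^ (γ + 1) *
        ∫ x in Set.Ioo (0:ℝ) 1, x ^ γ * ((1 - β) * ((1 - x) ^ j / (1 - β * x) ^ (j + 2))))
      atTop (nhds (Real.Gamma (1 + γ) / (1 - β) ^ γ)) := by
  set lam : ℝ := 1 - β with hlamdef
  have hlam0 : 0 < lam := by rw [hlamdef]; linarith
  set fj : ℕ → ℝ → ℝ := fun j s => s ^ γ *
      (1 - s / ((j : ℝ) + 1)) ^ j / (1 - β * (s / ((j : ℝ) + 1))) ^ (j + 2) with hfjdef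
  set Fj : ℕ → ℝ → ℝ := fun j => (Set.Ioo (0:ℝ) ((j : ℝ) + 1)).indicator (fj j) with hFjdef
  set linf : ℝ → ℝ := (Set.Ioi (0:ℝ)).indicator (fun s => s ^ γ * Real.exp (-(lam * s)))
    with hlinfdef
  -- Step 1 : algebraic identity
  have hid : ∀ j : ℕ, ((j : ℝ) + 1) ^ (γ + 1) *
      ∫ x in Set.Ioo (0:ℝ) 1, x ^ γ * (lam * ((1 - x) ^ j / (1 - β * x) ^ (j + 2)))
      = lam * ∫ s, Fj j s := by
    intro j
    set m : ℝ := (j : ℝ) + 1 with hmdef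
    have hm0 : 0 < m := by positivity
    set w : ℝ → ℝ := fun x => x ^ γ * ((1 - x) ^ j / (1 - β * x) ^ (j + 2)) with hwdef
    have e0 : (∫ x in Set.Ioo (0:ℝ) 1, x ^ γ * (lam * ((1 - x) ^ j / (1 - β * x) ^ (j + 2))))
        = lam * ∫ x in Set.Ioo (0:ℝ) 1, w x := by
      rw [show (fun x : ℝ => x ^ γ * (lam * ((1 - x) ^ j / (1 - β * x) ^ (j + 2))))
          = fun x : ℝ => lam * w x from funext fun x => by rw [hwdef]; ring]
      exact MeasureTheory.integral_const_mul lam w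
    have e1 : (∫ x in Set.Ioo (0:ℝ) 1, w x) = ∫ x in (0:ℝ)..1, w x := by
      rw [intervalIntegral.integral_of_le zero_le_one,
        MeasureTheory.integral_Ioc_eq_integral_Ioo]
    have icd := intervalIntegral.integral_comp_div (a := 0) (b := m) (c := m) w
      (ne_of_gt hm0)
    rw [zero_div, div_self (ne_of_gt hm0), smul_eq_mul] at icd
    have e2 : (∫ s in (0:ℝ)..m, w (s / m)) = (m ^ γ)⁻¹ * ∫ s in (0:ℝ)..m, fj j s := by
      rw [← intervalIntegral.integral_const_mul]
      rw [intervalIntegral.integral_of_le hm0.le, intervalIntegral.integral_of_le hm0.le]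
      apply MeasureTheory.setIntegral_congr_fun measurableSet_Ioc
      intro s hs
      show w (s / m) = (m ^ γ)⁻¹ * fj j s
      rw [hwdef, hfjdef]
      simp only
      rw [Real.div_rpow hs.1.le hm0.le, ← hmdef]
      have hmγ : (0:ℝ) < m ^ γ := Real.rpow_pos_of_pos hm0 γ
      field_simp
    have e3 : (∫ s in (0:ℝ)..m, fj j s) = ∫ s, Fj j s := by
      rw [hFjdef]
      simp only
      rw [MeasureTheory.integral_indicator measurableSet_Ioo, ← hmdef]
      rw [intervalIntegral.integral_of_le hm0.le, MeasureTheory.integral_Ioc_eq_integral_Ioo]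
    have hmg : (0:ℝ) < m ^ γ := Real.rpow_pos_of_pos hm0 γ
    have hmsplit : m ^ (γ + 1) = m ^ γ * m := Real.rpow_add_one (ne_of_gt hm0) γ
    have hI1 : (∫ x in (0:ℝ)..1, w x) = m⁻¹ * ((m ^ γ)⁻¹ * ∫ s in (0:ℝ)..m, fj j s) := by
      rw [← e2, icd]
      field_simp
    rw [e0, e1, hI1, e3, hmsplit]
    field_simp
  -- Step 2 : dominated convergence
  have hDCT : Tendsto (fun j : ℕ => ∫ s, Fj j s) atTop (nhds (∫ s, linf s)) := by
    apply MeasureTheory.tendsto_integral_filter_of_dominated_convergence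
      (bound := (Set.Ioi (0:ℝ)).indicator
        (fun s => s ^ γ * (Real.exp (-(lam / 2) * s) / lam ^ 2)))
    · filter_upwards with j
      rw [hFjdef]
      apply (aestronglyMeasurable_indicator_iff measurableSet_Ioo).2
      apply ContinuousOn.aestronglyMeasurable _ measurableSet_Ioo
      rw [hfjdef]
      apply ContinuousOn.div
      · apply ContinuousOn.mul
        · exact continuousOn_id.rpow_const (fun x hx => Or.inl (ne_of_gt hx.1))
        · fun_prop
      · fun_prop
      · intro s hs
        have hsm : s / ((j : ℝ) + 1) < 1 := by
          rw [div_lt_one (by positivity)]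
          exact hs.2
        have hsm0 : 0 ≤ s / ((j : ℝ) + 1) := div_nonneg hs.1.le (by positivity)
        have h' : β * (s / ((j : ℝ) + 1)) < 1 := by nlinarith
        have h'' : (0:ℝ) < 1 - β * (s / ((j : ℝ) + 1)) := by linarith
        positivity
    · filter_upwards [eventually_ge_atTop 1] with j hj
      filter_upwards with s
      rw [hFjdef]
      simp only
      by_cases hs : s ∈ Set.Ioo (0:ℝ) ((j : ℝ) + 1)
      · rw [Set.indicator_of_mem hs]
        set m : ℝ := (j : ℝ) + 1 with hmdef
        have hm0 : (0:ℝ) < m := by positivity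
        set y : ℝ := s / m with hydef
        have hy0 : 0 < y := div_pos hs.1 hm0
        have hy1 : y < 1 := by rw [hydef, div_lt_one hm0]; exact hs.2
        have hby : β * y ≤ β := mul_le_of_le_one_right hβ0 hy1.le
        have hbypos : 0 < 1 - β * y := by nlinarith
        have h1y : 0 ≤ 1 - y := by linarith
        have hlamy : lam ≤ 1 - β * y := by rw [hlamdef]; linarith
        -- core exponential bound
        have hcore : 1 - y ≤ Real.exp (-lam * y) * (1 - β * y) := by
          have h1 : -lam * y + 1 ≤ Real.exp (-lam * y) := Real.add_one_le_exp _
          have h2 : (-lam * y + 1) * (1 - β * y) ≤ Real.exp (-lam * y) * (1 - β * y) :=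
            mul_le_mul_of_nonneg_right h1 hbypos.le
          have h3 : 1 - y ≤ (-lam * y + 1) * (1 - β * y) := by
            rw [hlamdef]
            nlinarith [mul_nonneg (mul_nonneg hβ0 (by linarith : (0:ℝ) ≤ 1 - β)) (sq_nonneg y)]
          linarith
        have hrpow : (1 - y) ^ j ≤ (Real.exp (-lam * y)) ^ j * (1 - β * y) ^ j := by
          rw [← mul_pow]
          exact pow_le_pow_left₀ h1y hcore j
        have hsplit : (1 - β * y) ^ (j + 2) = (1 - β * y) ^ j * (1 - β * y) ^ 2 := by
          rw [← pow_add]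
        have hstep1 : (1 - y) ^ j / (1 - β * y) ^ (j + 2)
            ≤ (Real.exp (-lam * y)) ^ j / (1 - β * y) ^ 2 := by
          rw [hsplit]
          rw [div_le_div_iff₀ (by positivity) (by positivity)]
          calc (1 - y) ^ j * (1 - β * y) ^ 2
              ≤ ((Real.exp (-lam * y)) ^ j * (1 - β * y) ^ j) * (1 - β * y) ^ 2 := by
                apply mul_le_mul_of_nonneg_right hrpow (by positivity)
            _ = Real.exp (-lam * y) ^ j * ((1 - β * y) ^ j * (1 - β * y) ^ 2) := by ring
        have hexpj : (Real.exp (-lam * y)) ^ j = Real.exp ((j : ℝ) * (-lam * y)) :=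
          (Real.exp_nat_mul _ j).symm
        have hexple : Real.exp ((j : ℝ) * (-lam * y)) ≤ Real.exp (-(lam / 2) * s) := by
          apply Real.exp_le_exp.2
          have hjm : (1:ℝ)/2 ≤ (j:ℝ) / m := by
            rw [le_div_iff₀ hm0, hmdef]
            have : (1:ℝ) ≤ (j:ℝ) := by exact_mod_cast hj
            linarith
          have hls : 0 ≤ lam * s := mul_nonneg hlam0.le hs.1.le
          have hmul := mul_le_mul_of_nonneg_left hjm hls
          calc (j:ℝ) * (-lam * y) = -(lam * s * ((j:ℝ)/m)) := by rw [hydef]; ring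
            _ ≤ -(lam * s * (1/2)) := by linarith
            _ = -(lam/2) * s := by ring
        have hfj0 : 0 ≤ s ^ γ * (1 - y) ^ j / (1 - β * y) ^ (j + 2) :=
          div_nonneg (mul_nonneg (Real.rpow_nonneg hs.1.le γ) (pow_nonneg h1y j))
            (pow_nonneg hbypos.le _)
        have hfinal' : s ^ γ * (1 - y) ^ j / (1 - β * y) ^ (j + 2)
            ≤ s ^ γ * (Real.exp (-(lam / 2) * s) / lam ^ 2) := by
          rw [mul_div_assoc]
          apply mul_le_mul_of_nonneg_left _ (Real.rpow_nonneg hs.1.le γ)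
          calc (1 - y) ^ j / (1 - β * y) ^ (j + 2)
              ≤ (Real.exp (-lam * y)) ^ j / (1 - β * y) ^ 2 := hstep1
            _ ≤ Real.exp (-(lam / 2) * s) / lam ^ 2 := by
                apply div_le_div₀ (Real.exp_pos _).le _ (by positivity)
                  (pow_le_pow_left₀ hlam0.le hlamy 2)
                rw [hexpj]
                exact hexple
        rw [Set.indicator_of_mem (Set.mem_Ioi.2 hs.1)]
        rw [Real.norm_eq_abs, abs_of_nonneg hfj0]
        exact hfinal'
      · rw [Set.indicator_of_notMem hs]
        simp only [norm_zero]
        apply Set.indicator_nonneg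
        intro s hs'
        have : 0 < s := hs'
        positivity
    · -- integrability of the bound
      rw [MeasureTheory.integrable_indicator_iff measurableSet_Ioi]
      have hbase : IntegrableOn (fun s : ℝ => s ^ γ * Real.exp (-(lam / 2) * s ^ (1:ℝ)))
          (Set.Ioi 0) :=
        integrableOn_rpow_mul_exp_neg_mul_rpow (by linarith) zero_lt_one (half_pos hlam0)
      have hbase2 : IntegrableOn (fun s : ℝ => s ^ γ * Real.exp (-(lam / 2) * s))
          (Set.Ioi 0) := by
        apply hbase.congr_fun _ measurableSet_Ioi
        intro x hx
        show x ^ γ * Real.exp (-(lam / 2) * x ^ (1:ℝ)) = x ^ γ * Real.exp (-(lam / 2) * x)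
        rw [Real.rpow_one]
      have h2 : IntegrableOn (fun s : ℝ => s ^ γ * Real.exp (-(lam / 2) * s) * (lam ^ 2)⁻¹)
          (Set.Ioi 0) := hbase2.mul_const ((lam ^ 2)⁻¹)
      apply h2.congr_fun _ measurableSet_Ioi
      intro x hx
      show x ^ γ * Real.exp (-(lam / 2) * x) * (lam ^ 2)⁻¹
          = x ^ γ * (Real.exp (-(lam / 2) * x) / lam ^ 2)
      rw [div_eq_mul_inv, mul_assoc]
      try ring
    · -- pointwise convergence
      filter_upwards with s
      rcases le_or_gt s 0 with hs | hs
      · have hFz : ∀ j : ℕ, Fj j s = 0 := by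
          intro j
          rw [hFjdef]
          apply Set.indicator_of_notMem
          intro hmem
          exact absurd hmem.1 (not_lt.2 hs)
        have hlz : linf s = 0 := by
          rw [hlinfdef]
          apply Set.indicator_of_notMem
          exact not_lt.2 hs
        rw [hlz]
        exact Tendsto.congr (fun j => (hFz j).symm) tendsto_const_nhds
      · have hinv : Tendsto (fun j : ℕ => ((j : ℝ) + 1)⁻¹) atTop (nhds 0) :=
          tendsto_inv_atTop_zero.comp
            (tendsto_atTop_add_const_right atTop 1 tendsto_natCast_atTop_atTop)
        have hbase1 : ∀ c : ℝ, Tendsto (fun j : ℕ => 1 + c / ((j : ℝ) + 1)) atTop (nhds 1) := by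
          intro c
          have := (hinv.const_mul c).const_add (1:ℝ)
          simpa [div_eq_mul_inv] using this
        have hpow1 : ∀ c : ℝ,
            Tendsto (fun j : ℕ => (1 + c / ((j : ℝ) + 1)) ^ (j + 1)) atTop
              (nhds (Real.exp c)) := by
          intro c
          have h := Real.tendsto_one_add_div_pow_exp c
          rw [← tendsto_add_atTop_iff_nat 1] at h
          refine h.congr fun j => ?_
          push_cast
          ring_nf
        have hA : Tendsto (fun j : ℕ => (1 - s / ((j : ℝ) + 1)) ^ j) atTop
            (nhds (Real.exp (-s))) := by
          have hdiv := (hpow1 (-s)).div (hbase1 (-s)) (by norm_num)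
          rw [div_one] at hdiv
          refine Tendsto.congr' ?_ hdiv
          filter_upwards [(tendsto_atTop_add_const_right atTop 1
            tendsto_natCast_atTop_atTop).eventually_gt_atTop s] with j hj
          have hne : 1 + (-s) / ((j : ℝ) + 1) ≠ 0 := by
            have hm0 : (0:ℝ) < (j : ℝ) + 1 := by positivity
            have : s / ((j : ℝ) + 1) < 1 := by rw [div_lt_one hm0]; exact hj
            have : 0 < 1 + (-s) / ((j : ℝ) + 1) := by
              rw [neg_div, ← sub_eq_add_neg]; linarith
            linarith
          simp only [Pi.div_apply]
          rw [pow_succ, mul_div_assoc, div_self hne, mul_one]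
          congr 1
          rw [neg_div, ← sub_eq_add_neg]
        have hB : Tendsto (fun j : ℕ => (1 - β * (s / ((j : ℝ) + 1))) ^ (j + 2)) atTop
            (nhds (Real.exp (-(β * s)))) := by
          have h2 := (hpow1 (-(β * s))).mul (hbase1 (-(β * s)))
          rw [mul_one] at h2
          refine h2.congr fun j => ?_
          have hbb : 1 - β * (s / ((j : ℝ) + 1)) = 1 + (-(β * s)) / ((j : ℝ) + 1) := by ring
          rw [hbb, ← pow_succ]
        have hfin : Tendsto (fun j : ℕ => fj j s) atTop (nhds (linf s)) := by
          rw [hfjdef, hlinfdef]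
          simp only
          have h3 := ((tendsto_const_nhds (x := s ^ γ)).mul hA).div hB
            (ne_of_gt (Real.exp_pos _))
          rw [Set.indicator_of_mem (Set.mem_Ioi.2 hs)]
          have hval : s ^ γ * Real.exp (-s) / Real.exp (-(β * s))
              = s ^ γ * Real.exp (-(lam * s)) := by
            rw [mul_div_assoc, ← Real.exp_sub]
            congr 2
            rw [hlamdef]; ring
          rw [← hval]
          exact h3
        refine Tendsto.congr' ?_ hfin
        filter_upwards [(tendsto_atTop_add_const_right atTop 1
          tendsto_natCast_atTop_atTop).eventually_gt_atTop s] with j hj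
        rw [hFjdef]
        simp only
        rw [Set.indicator_of_mem (Set.mem_Ioo.2 ⟨hs, hj⟩)]
  -- evaluate the limit integral
  have hval : (∫ s, linf s) = (1 / lam) ^ (γ + 1) * Real.Gamma (γ + 1) := by
    rw [hlinfdef, MeasureTheory.integral_indicator measurableSet_Ioi]
    rw [← Real.integral_rpow_mul_exp_neg_mul_Ioi (by linarith : (0:ℝ) < γ + 1) hlam0]
    apply MeasureTheory.setIntegral_congr_fun measurableSet_Ioi
    intro s hs
    rw [show γ + 1 - 1 = γ by ring]
  have hgoal : lam * ((1 / lam) ^ (γ + 1) * Real.Gamma (γ + 1))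
      = Real.Gamma (1 + γ) / (1 - β) ^ γ := by
    rw [one_div, Real.inv_rpow hlam0.le, Real.rpow_add_one (ne_of_gt hlam0)]
    have hγpos : (0:ℝ) < lam ^ γ := Real.rpow_pos_of_pos hlam0 γ
    rw [add_comm 1 γ, ← hlamdef]
    field_simp
  have := hDCT.const_mul lam
  rw [hval, hgoal] at this
  refine Tendsto.congr ?_ this
  intro j
  rw [← hid j]


end Auxiliary

/-- Power-law tail of the large-time clone size distribution: if the limits
`L_k = lim_{t→∞} (1/n_t)∫_0^t n_τ P(Z_{t−τ}=k) dτ` exist, then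
`lim_{k→∞} k^{γ*+1} L_k = Γ(1+γ*)/λ^{γ*}` with `λ = 1−β`, `γ* = δ*/λ`. -/
theorem clone_size_power_law_tail
    (β : ℝ) (hβ : β ∈ Set.Ico (0 : ℝ) 1) (lam : ℝ) (hlam : lam = 1 - β)
    (n : ℝ → ℝ) (hn : Assumption1 n) (δ : ℝ)
    (hδlim : Filter.Tendsto (fun t : ℝ => Real.log (n t) / t) Filter.atTop (nhds δ))
    (γ : ℝ) (hγ : γ = δ / lam)
    (L : ℕ → ℝ)
    (hL : ∀ k : ℕ, 1 ≤ k →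
      Filter.Tendsto
        (fun t : ℝ => (1 / n t) * ∫ τ in (0:ℝ)..t, n τ * birthDeathPMF β (t - τ) k)
        Filter.atTop (nhds (L k))) :
    Filter.Tendsto (fun k : ℕ => (k : ℝ) ^ (γ + 1) * L k) Filter.atTop
      (nhds (Real.Gamma (1 + γ) / lam ^ γ)) := by
  obtain ⟨hβ0, hβ1⟩ := hβ
  subst hγ
  subst hlam
  have hδ0 : 0 ≤ δ := delta_nonneg n hn δ hδlim
  have hA := stepA n hn δ hδlim
  have hγ0 : 0 ≤ δ / (1 - β) := div_nonneg hδ0 (by linarith)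
  have hLval : ∀ j : ℕ, L (j + 1) = ∫ x in Set.Ioo (0:ℝ) 1,
      x ^ (δ / (1 - β)) * ((1 - β) * ((1 - x) ^ j / (1 - β * x) ^ (j + 2))) := fun j =>
    tendsto_nhds_unique (hL (j + 1) (Nat.le_add_left 1 j))
      (stepC β hβ0 hβ1 n hn δ hδ0 hA j)
  have hD := stepD β hβ0 hβ1 (δ / (1 - β)) hγ0
  rw [← tendsto_add_atTop_iff_nat 1]
  refine Tendsto.congr ?_ hD
  intro j
  rw [hLval j]
  congr 2
  push_cast
  ring
end

section
/- Let β ∈ [0,1), λ = 1−β, let n satisfy Assumption 1 with γ* = δ*/λ, let θ > 0, and let s be real with |s| < 1 such that ξ = (β−s)/(1−s) satisfies |ξ| < 1. In the large-population–small-mutation limit (mutation rate μ = θ/n_t held so that θ = μ n_t is constant), the generating function of the total number of mutants, ℬ_t(s) = exp(θ·(a_t/n_t)·(𝒴_t(s) − 1)), satisfies lim_{t→∞} ℬ_t(s)·exp(θ λ a_t/n_t) = exp(−θ·Σ_{k=1}^∞ ξ^k/(γ*+k)). -/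
open Filter Real intervalIntegral

open MeasureTheory Set in
lemma step_limit_eq {f : ℝ → ℝ} {δ c x : ℝ} (hx : 0 < x)
    (hf : Tendsto (fun t => Real.log (f t) / t) atTop (nhds δ))
    (hc : Tendsto (fun t => Real.log (f t) - Real.log (f (t - x))) atTop (nhds c)) :
    c = δ * x := by
  set g : ℝ → ℝ := fun t => Real.log (f t) with hg
  have h1 : Tendsto (fun m : ℕ => (m : ℝ) * x) atTop atTop :=
    tendsto_natCast_atTop_atTop.atTop_mul_const hx
  have h1' : Tendsto (fun m : ℕ => (m : ℝ) * x + x) atTop atTop :=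
    h1.atTop_add tendsto_const_nhds
  have h2 : Tendsto (fun m : ℕ => g ((m : ℝ) * x + x) - g ((m : ℝ) * x)) atTop (nhds c) := by
    have := hc.comp h1'
    refine this.congr fun m => ?_
    simp [Function.comp, hg, add_sub_cancel_right]
  have h3 : ∀ m : ℕ, ∑ i ∈ Finset.range m, (g ((i : ℝ) * x + x) - g ((i : ℝ) * x))
      = g ((m : ℝ) * x) - g 0 := by
    intro m
    have h := Finset.sum_range_sub (fun i : ℕ => g ((i : ℝ) * x)) m
    have : ∀ i : ℕ, g ((i : ℝ) * x + x) - g ((i : ℝ) * x)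
        = (fun i : ℕ => g ((i : ℝ) * x)) (i + 1) - (fun i : ℕ => g ((i : ℝ) * x)) i := by
      intro i; push_cast; ring_nf
    rw [Finset.sum_congr rfl (fun i _ => this i), h]
    norm_num
  have h4 : Tendsto (fun m : ℕ => (m : ℝ)⁻¹ * (g ((m : ℝ) * x) - g 0)) atTop (nhds c) := by
    have := h2.cesaro
    simpa [h3] using this
  have h5 : Tendsto (fun m : ℕ => g ((m : ℝ) * x) / (m : ℝ)) atTop (nhds c) := by
    have hz : Tendsto (fun m : ℕ => g 0 / (m : ℝ)) atTop (nhds 0) :=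
      tendsto_const_nhds.div_atTop tendsto_natCast_atTop_atTop
    have := h4.add hz
    rw [add_zero] at this
    refine this.congr fun m => ?_
    ring
  have h6 : Tendsto (fun m : ℕ => g ((m : ℝ) * x) / ((m : ℝ) * x) * x) atTop (nhds (δ * x)) :=
    (hf.comp h1).mul_const x
  have h7 : Tendsto (fun m : ℕ => g ((m : ℝ) * x) / (m : ℝ)) atTop (nhds (δ * x)) := by
    refine h6.congr' ?_
    filter_upwards [eventually_ge_atTop 1] with m hm
    have hm' : (m : ℝ) ≠ 0 := by positivity
    field_simp
  exact tendsto_nhds_unique h5 h7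

lemma ratio_limit {n : ℝ → ℝ} (hn : Assumption1 n) {δ : ℝ}
    (hδlim : Tendsto (fun t : ℝ => Real.log (n t) / t) atTop (nhds δ)) :
    ∀ x : ℝ, 0 ≤ x →
      Tendsto (fun t : ℝ => n (t - x) / n t) atTop (nhds (Real.exp (-δ * x))) := by
  intro x hx
  obtain ⟨L, hL, hLt⟩ := hn.2.2.2.2.2 x hx
  have hnpos := hn.2.2.2.1
  suffices hLe : L = Real.exp (-δ * x) by rwa [hLe] at hLt
  rcases eq_or_lt_of_le hx with h0 | h0
  · -- x = 0
    have : Tendsto (fun t : ℝ => n (t - x) / n t) atTop (nhds 1) := by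
      refine tendsto_const_nhds.congr' ?_
      filter_upwards [eventually_gt_atTop (0:ℝ)] with t ht
      rw [← h0, sub_zero, div_self (hnpos t ht).ne']
    have := tendsto_nhds_unique hLt this
    rw [this, ← h0]
    simp
  · -- x > 0
    have hlog : Tendsto (fun t : ℝ => Real.log (n (t - x) / n t)) atTop (nhds (Real.log L)) :=
      ((Real.continuousAt_log hL.ne').tendsto).comp hLt
    have heq : Tendsto (fun t : ℝ => Real.log (n t) - Real.log (n (t - x))) atTop
        (nhds (-Real.log L)) := by
      have := hlog.neg
      refine this.congr' ?_
      filter_upwards [eventually_gt_atTop (x + 0)] with t ht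
      have htx : 0 < t - x := by linarith
      have ht' : 0 < t := by linarith
      rw [Real.log_div (hnpos _ htx).ne' (hnpos _ ht').ne']
      ring
    have := step_limit_eq h0 hδlim heq
    have hL' : Real.log L = -(δ * x) := by linarith
    rw [← Real.exp_log hL, hL']
    ring_nf

open MeasureTheory Set in
lemma integral_exp_neg_mul_Ioi_zero {c : ℝ} (hc : 0 < c) :
    ∫ u in Ioi (0:ℝ), Real.exp (-c * u) = 1 / c := by
  have h := integral_comp_mul_left_Ioi (fun y => Real.exp (-y)) 0 hc
  simp only [mul_zero, integral_exp_neg_Ioi, neg_zero, Real.exp_zero, smul_eq_mul,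
    mul_one] at h
  rw [show (fun u : ℝ => Real.exp (-c * u)) = fun u : ℝ => Real.exp (-(c * u)) by
    funext u; rw [neg_mul]] at *
  simpa [one_div] using h

open MeasureTheory Set in
lemma series_integral {lam δ ξ γ : ℝ} (hlam : 0 < lam) (hδ : 0 ≤ δ) (hξ : |ξ| < 1)
    (hγ : γ = δ / lam) :
    ∫ u in Ioi (0:ℝ),
        Real.exp (-δ * u) *
          (lam * (ξ * Real.exp (-lam * u)) / (1 - ξ * Real.exp (-lam * u)))
      = ∑' k : ℕ, ξ ^ (k + 1) / (γ + (k + 1)) := by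
  have hγ0 : 0 ≤ γ := by rw [hγ]; positivity
  set F : ℕ → ℝ → ℝ := fun k u => (lam * ξ ^ (k + 1)) * Real.exp (-(δ + (k + 1) * lam) * u)
    with hFdef
  have hck : ∀ k : ℕ, 0 < δ + ((k:ℝ) + 1) * lam := by
    intro k
    have : (0:ℝ) < ((k:ℝ) + 1) * lam := by positivity
    linarith
  have hint : ∀ k : ℕ, Integrable (F k) (volume.restrict (Ioi (0:ℝ))) := by
    intro k
    exact (exp_neg_integrableOn_Ioi 0 (hck k)).const_mul (lam * ξ ^ (k + 1))
  have hintval : ∀ k : ℕ, ∫ u in Ioi (0:ℝ), F k u = ξ ^ (k + 1) / (γ + ((k:ℝ) + 1)) := by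
    intro k
    rw [hFdef]
    simp only
    rw [MeasureTheory.integral_const_mul, integral_exp_neg_mul_Ioi_zero (hck k)]
    have hδeq : δ = γ * lam := by rw [hγ]; field_simp
    have hpos : 0 < γ + ((k:ℝ) + 1) := by positivity
    rw [hδeq]
    field_simp
  have hnormval : ∀ k : ℕ, ∫ u in Ioi (0:ℝ), ‖F k u‖ = (lam * |ξ| ^ (k + 1)) *
      (1 / (δ + ((k:ℝ) + 1) * lam)) := by
    intro k
    rw [← integral_exp_neg_mul_Ioi_zero (hck k), ← MeasureTheory.integral_const_mul]
    congr 1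
    funext u
    rw [hFdef]
    simp only [Real.norm_eq_abs, abs_mul, abs_pow, Real.abs_exp, abs_mul, abs_of_pos hlam]
  have hsum : Summable fun k : ℕ => ∫ u in Ioi (0:ℝ), ‖F k u‖ := by
    have hg : Summable fun k : ℕ => |ξ| ^ (k + 1) := by
      refine Summable.congr (((summable_geometric_of_lt_one (abs_nonneg ξ) hξ)).mul_left |ξ|)
        fun k => ?_
      rw [← pow_succ']
    refine Summable.of_nonneg_of_le (fun k => ?_) (fun k => ?_) hg
    · rw [hnormval k]; positivity
    · rw [hnormval k]
      have h1 : lam * (1 / (δ + ((k:ℝ) + 1) * lam)) ≤ 1 := by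
        rw [mul_one_div, div_le_one (hck k)]
        nlinarith [hck k, (Nat.cast_nonneg k : (0:ℝ) ≤ k)]
      calc lam * |ξ| ^ (k + 1) * (1 / (δ + ((k:ℝ) + 1) * lam))
          = |ξ| ^ (k + 1) * (lam * (1 / (δ + ((k:ℝ) + 1) * lam))) := by ring
        _ ≤ |ξ| ^ (k + 1) * 1 := by
            exact mul_le_mul_of_nonneg_left h1 (by positivity)
        _ = |ξ| ^ (k + 1) := mul_one _
  have hswap := MeasureTheory.integral_tsum_of_summable_integral_norm hint hsum
  have hpt : ∀ u ∈ Ioi (0:ℝ), (∑' k : ℕ, F k u)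
      = Real.exp (-δ * u) *
          (lam * (ξ * Real.exp (-lam * u)) / (1 - ξ * Real.exp (-lam * u))) := by
    intro u hu
    have hu0 : (0:ℝ) ≤ u := le_of_lt hu
    set q : ℝ := ξ * Real.exp (-lam * u) with hq
    have hqabs : |q| < 1 := by
      rw [hq, abs_mul, Real.abs_exp]
      calc |ξ| * Real.exp (-lam * u) ≤ |ξ| * 1 := by
            refine mul_le_mul_of_nonneg_left ?_ (abs_nonneg ξ)
            rw [Real.exp_le_one_iff]
            nlinarith
        _ = |ξ| := mul_one _
        _ < 1 := hξ
    have hterm : ∀ k : ℕ, F k u = (lam * Real.exp (-δ * u)) * q ^ (k + 1) := by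
      intro k
      rw [hFdef]
      simp only
      rw [show -(δ + ((k:ℝ) + 1) * lam) * u = -δ * u + ((k:ℝ) + 1) * (-lam * u) by ring]
      rw [Real.exp_add, show ((k:ℝ) + 1) = ((k + 1 : ℕ) : ℝ) by push_cast; ring,
        Real.exp_nat_mul]
      rw [hq, mul_pow]
      ring
    have hgeo : ∑' k : ℕ, q ^ (k + 1) = q / (1 - q) := by
      have h0 : ∑' k : ℕ, q * q ^ k = q * (1 - q)⁻¹ := by
        rw [tsum_mul_left, tsum_geometric_of_norm_lt_one (by rwa [Real.norm_eq_abs])]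
      rw [div_eq_mul_inv, ← h0]
      exact tsum_congr fun k => pow_succ' q k
    calc (∑' k : ℕ, F k u) = ∑' k : ℕ, (lam * Real.exp (-δ * u)) * q ^ (k + 1) :=
          tsum_congr hterm
      _ = (lam * Real.exp (-δ * u)) * (q / (1 - q)) := by rw [tsum_mul_left, hgeo]
      _ = Real.exp (-δ * u) * (lam * q / (1 - q)) := by ring
  calc ∫ u in Ioi (0:ℝ), Real.exp (-δ * u) *
          (lam * (ξ * Real.exp (-lam * u)) / (1 - ξ * Real.exp (-lam * u)))
      = ∫ u in Ioi (0:ℝ), (∑' k : ℕ, F k u) := by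
        refine setIntegral_congr_fun measurableSet_Ioi fun u hu => ?_
        exact (hpt u hu).symm
    _ = ∑' k : ℕ, ∫ u in Ioi (0:ℝ), F k u := hswap.symm
    _ = ∑' k : ℕ, ξ ^ (k + 1) / (γ + ((k:ℝ) + 1)) := tsum_congr hintval

/-- Large-population–small-mutation limit of the generating function of the total number
of mutants: with `ℬ_t(s) = exp(θ (a_t/n_t)(𝒴_t(s) − 1))` and `θ = μ n_t` constant,
`lim_{t→∞} ℬ_t(s) exp(θ λ a_t/n_t) = exp(−θ Σ_{k≥1} ξ^k/(γ*+k))`, where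
`𝒴_t(s) = (1/a_t)∫_0^t n_τ Z_{t−τ}(s) dτ`, `Z_u(s) = 1 − λ/(1 − ξ e^{−λu})`,
`ξ = (β−s)/(1−s)`, `λ = 1−β`, `γ* = δ*/λ`. -/
theorem total_mutants_large_pop_small_mutation_limit
    (β : ℝ) (hβ : β ∈ Set.Ico (0 : ℝ) 1) (lam : ℝ) (hlam : lam = 1 - β)
    (n : ℝ → ℝ) (hn : Assumption1 n) (δ : ℝ)
    (hδlim : Filter.Tendsto (fun t : ℝ => Real.log (n t) / t) Filter.atTop (nhds δ))
    (γ : ℝ) (hγ : γ = δ / lam) (θ : ℝ) (hθ : 0 < θ)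
    (s ξ : ℝ) (hs : |s| < 1) (hξdef : ξ = (β - s) / (1 - s)) (hξ : |ξ| < 1)
    (a Y B : ℝ → ℝ)
    (ha : ∀ t : ℝ, a t = ∫ τ in (0:ℝ)..t, n τ)
    (hY : ∀ t : ℝ,
      Y t = (1 / a t) *
        ∫ τ in (0:ℝ)..t, n τ * (1 - lam / (1 - ξ * Real.exp (-lam * (t - τ)))))
    (hB : ∀ t : ℝ, B t = Real.exp (θ * (a t / n t) * (Y t - 1))) :
    Filter.Tendsto (fun t : ℝ => B t * Real.exp (θ * lam * a t / n t))
      Filter.atTop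
      (nhds (Real.exp (-θ * ∑' k : ℕ, ξ ^ (k + 1) / (γ + (k + 1))))) := by
  obtain ⟨hzero, hcont, hright, hnpos, hmono, hexist⟩ := hn
  have hn' : Assumption1 n := ⟨hzero, hcont, hright, hnpos, hmono, hexist⟩
  have hlam_pos : 0 < lam := by rw [hlam]; linarith [hβ.2]
  have hξ1 : 0 < 1 - |ξ| := by linarith [hξ]
  -- basic facts about n
  have hn0 : 0 ≤ n 0 := by
    refine ge_of_tendsto hright ?_
    filter_upwards [self_mem_nhdsWithin] with σ hσ
    exact (hnpos σ hσ).le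
  have hn0le : ∀ τ : ℝ, 0 < τ → n 0 ≤ n τ := by
    intro τ hτ
    refine le_of_tendsto hright ?_
    have h1 : ∀ᶠ σ : ℝ in nhdsWithin 0 (Set.Ioi 0), σ < τ :=
      nhdsWithin_le_nhds (eventually_lt_nhds hτ)
    filter_upwards [self_mem_nhdsWithin, h1] with σ hσ hστ
    exact hmono hσ hτ hστ.le
  have hmono' : MonotoneOn n (Set.Ici 0) := by
    intro x hx y hy hxy
    rcases eq_or_lt_of_le (Set.mem_Ici.mp hx : (0:ℝ) ≤ x) with h | h
    · rcases eq_or_lt_of_le (Set.mem_Ici.mp hy : (0:ℝ) ≤ y) with h' | h'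
      · rw [← h, ← h']
      · rw [← h]; exact hn0le y h'
    · exact hmono h (lt_of_lt_of_le h hxy) hxy
  have hnnonneg : ∀ τ : ℝ, 0 ≤ n τ := by
    intro τ
    rcases lt_trichotomy τ 0 with h | h | h
    · rw [hzero τ h]
    · rw [h]; exact hn0
    · exact (hnpos τ h).le
  have hnle : ∀ t u : ℝ, 0 < t → 0 < u → n (t - u) ≤ n t := by
    intro t u ht hu
    rcases le_or_gt (t - u) 0 with h | h
    · rcases lt_or_eq_of_le h with h' | h'
      · rw [hzero _ h']; exact hnnonneg t
      · rw [h']; exact hn0le t ht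
    · exact hmono' h.le ht.le (by linarith)
  -- measurability of n
  have hnm : AEMeasurable n MeasureTheory.volume := by
    have hind : AEMeasurable (Set.indicator (Set.Ioi 0) n) MeasureTheory.volume :=
      (aemeasurable_indicator_iff measurableSet_Ioi).2
        (hcont.aemeasurable measurableSet_Ioi)
    refine hind.congr ?_
    rw [Filter.EventuallyEq, MeasureTheory.ae_iff]
    refine MeasureTheory.measure_mono_null (t := {(0:ℝ)}) (fun x hx => ?_)
      Real.volume_singleton
    simp only [Set.mem_setOf_eq] at hx
    simp only [Set.mem_singleton_iff]
    by_contra hx0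
    rcases lt_or_gt_of_ne hx0 with h | h
    · exact hx (by rw [Set.indicator_of_notMem (by simpa using h.le), hzero x h])
    · exact hx (Set.indicator_of_mem h n)
  -- δ ≥ 0
  have hδ0 : 0 ≤ δ := by
    have h1 := ratio_limit hn' hδlim 1 zero_le_one
    have h2 : Real.exp (-δ * 1) ≤ 1 := by
      refine le_of_tendsto h1 ?_
      filter_upwards [eventually_ge_atTop (2:ℝ)] with t ht
      have ht0 : 0 < t := by linarith
      rw [div_le_one (hnpos t ht0)]
      exact hnle t 1 ht0 one_pos
    rw [Real.exp_le_one_iff] at h2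
    nlinarith
  -- the kernel h
  set h : ℝ → ℝ :=
    fun u => lam * (ξ * Real.exp (-lam * u)) / (1 - ξ * Real.exp (-lam * u)) with hhdef
  set C : ℝ := lam * |ξ| / (1 - |ξ|) with hCdef
  have hden : ∀ u : ℝ, 0 ≤ u → 1 - |ξ| ≤ 1 - ξ * Real.exp (-lam * u) := by
    intro u hu
    have h1 : ξ * Real.exp (-lam * u) ≤ |ξ| := by
      calc ξ * Real.exp (-lam * u) ≤ |ξ * Real.exp (-lam * u)| := le_abs_self _
        _ = |ξ| * Real.exp (-lam * u) := by rw [abs_mul, Real.abs_exp]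
        _ ≤ |ξ| * 1 := by
            refine mul_le_mul_of_nonneg_left ?_ (abs_nonneg ξ)
            rw [Real.exp_le_one_iff]; nlinarith
        _ = |ξ| := mul_one _
    linarith
  have hdenpos : ∀ u : ℝ, 0 ≤ u → 0 < 1 - ξ * Real.exp (-lam * u) := by
    intro u hu; linarith [hden u hu]
  have habs : ∀ u : ℝ, 0 ≤ u → |h u| ≤ C * Real.exp (-lam * u) := by
    intro u hu
    rw [hhdef]
    simp only
    rw [abs_div, abs_of_pos (hdenpos u hu), abs_mul, abs_mul, Real.abs_exp,
      abs_of_pos hlam_pos]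
    rw [hCdef, div_mul_eq_mul_div, ← mul_assoc]
    exact div_le_div_of_nonneg_left (by positivity) hξ1 (hden u hu)
  -- continuity of h on [0, ∞)
  have hh_cont : ContinuousOn h (Set.Ici 0) := by
    rw [hhdef]
    refine ContinuousOn.div ?_ ?_ ?_
    · exact (continuous_const.mul (continuous_const.mul
        ((continuous_const.mul continuous_id).rexp))).continuousOn
    · exact (continuous_const.sub (continuous_const.mul
        ((continuous_const.mul continuous_id).rexp))).continuousOn
    · intro u hu
      exact (hdenpos u hu).ne'
  -- measurability of the integrand
  have hF_meas : ∀ t : ℝ, MeasureTheory.AEStronglyMeasurable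
      (fun u : ℝ => n (t - u) / n t * h u)
      (MeasureTheory.volume.restrict (Set.Ioi 0)) := by
    intro t
    have h1 : AEMeasurable (fun u : ℝ => n (t - u)) MeasureTheory.volume :=
      hnm.comp_quasiMeasurePreserving
        (MeasureTheory.Measure.measurePreserving_sub_left MeasureTheory.volume t).quasiMeasurePreserving
    have h2 : AEMeasurable h (MeasureTheory.volume.restrict (Set.Ioi 0)) :=
      (hh_cont.mono Set.Ioi_subset_Ici_self).aemeasurable measurableSet_Ioi
    exact ((h1.restrict.div_const (n t)).mul h2).aestronglyMeasurable
  -- dominated convergence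
  have hI : Tendsto (fun t : ℝ => ∫ u in Set.Ioi (0:ℝ), n (t - u) / n t * h u)
      atTop (nhds (∫ u in Set.Ioi (0:ℝ), Real.exp (-δ * u) * h u)) := by
    refine MeasureTheory.tendsto_integral_filter_of_dominated_convergence
      (fun u => C * Real.exp (-lam * u)) (Filter.Eventually.of_forall hF_meas) ?_ ?_ ?_
    · filter_upwards [eventually_ge_atTop (1:ℝ)] with t ht
      rw [MeasureTheory.ae_restrict_iff' measurableSet_Ioi]
      refine Filter.Eventually.of_forall fun u hu => ?_
      have ht0 : 0 < t := by linarith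
      have hu0 : 0 < u := hu
      have hr1 : n (t - u) / n t ≤ 1 := by
        rw [div_le_one (hnpos t ht0)]
        exact hnle t u ht0 hu0
      have hr0 : 0 ≤ n (t - u) / n t := div_nonneg (hnnonneg _) (hnnonneg _)
      calc ‖n (t - u) / n t * h u‖ = (n (t - u) / n t) * |h u| := by
            rw [norm_mul, Real.norm_eq_abs, Real.norm_eq_abs, abs_of_nonneg hr0]
        _ ≤ 1 * (C * Real.exp (-lam * u)) := by
            exact mul_le_mul hr1 (habs u hu0.le) (abs_nonneg _) one_pos.le
        _ = C * Real.exp (-lam * u) := one_mul _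
    · exact (exp_neg_integrableOn_Ioi 0 hlam_pos).const_mul C
    · rw [MeasureTheory.ae_restrict_iff' measurableSet_Ioi]
      refine Filter.Eventually.of_forall fun u hu => ?_
      exact (ratio_limit hn' hδlim u (le_of_lt hu)).mul_const (h u)
  -- integrability of n on [0,t]
  have hnint : ∀ t : ℝ, 0 ≤ t → IntervalIntegrable n MeasureTheory.volume 0 t := by
    intro t ht
    refine (hmono'.mono ?_).intervalIntegrable
    rw [Set.uIcc_of_le ht]
    exact Set.Icc_subset_Ici_self
  have hapos : ∀ t : ℝ, 0 < t → 0 < a t := by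
    intro t ht
    rw [ha t]
    exact intervalIntegral.intervalIntegral_pos_of_pos_on (hnint t ht.le)
      (fun τ hτ => hnpos τ hτ.1) ht
  -- key identity
  have hEq : ∀ t : ℝ, 1 ≤ t →
      θ * (a t / n t) * (Y t - 1) + θ * lam * a t / n t
        = -θ * ∫ u in Set.Ioi (0:ℝ), n (t - u) / n t * h u := by
    intro t ht1
    have ht : 0 < t := by linarith
    have hnt : 0 < n t := hnpos t ht
    have hat : 0 < a t := hapos t ht
    have hwcont : ContinuousOn
        (fun τ : ℝ => 1 - lam / (1 - ξ * Real.exp (-lam * (t - τ)))) (Set.uIcc 0 t) := by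
      refine ContinuousOn.sub continuousOn_const (ContinuousOn.div continuousOn_const ?_ ?_)
      · exact (continuous_const.sub (continuous_const.mul
          ((continuous_const.mul (continuous_const.sub continuous_id)).rexp))).continuousOn
      · intro τ hτ
        rw [Set.uIcc_of_le ht.le] at hτ
        exact (hdenpos (t - τ) (by simp only [Set.mem_Icc] at hτ; linarith [hτ.2])).ne'
    have hI1 : IntervalIntegrable
        (fun τ : ℝ => n τ * (1 - lam / (1 - ξ * Real.exp (-lam * (t - τ)))))
        MeasureTheory.volume 0 t := (hnint t ht.le).mul_continuousOn hwcont
    have hhtcont : ContinuousOn (fun τ : ℝ => h (t - τ)) (Set.uIcc 0 t) := by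
      refine hh_cont.comp ((continuous_const.sub continuous_id).continuousOn) ?_
      intro τ hτ
      rw [Set.uIcc_of_le ht.le] at hτ
      simp only [Set.mem_Icc] at hτ
      simp only [Set.mem_Ici, id_eq]
      linarith [hτ.2]
    have hI2 : IntervalIntegrable (fun τ : ℝ => n τ * h (t - τ))
        MeasureTheory.volume 0 t := (hnint t ht.le).mul_continuousOn hhtcont
    have hYt : a t * Y t
        = ∫ τ in (0:ℝ)..t, n τ * (1 - lam / (1 - ξ * Real.exp (-lam * (t - τ)))) := by
      rw [hY t]; field_simp
    -- combination of the integrals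
    have hsplit : Set.EqOn
        (fun τ : ℝ => n τ * (1 - lam / (1 - ξ * Real.exp (-lam * (t - τ)))) - n τ
          + lam * n τ)
        (fun τ : ℝ => -(n τ * h (t - τ))) (Set.uIcc 0 t) := by
      intro τ hτ
      rw [Set.uIcc_of_le ht.le] at hτ
      simp only [Set.mem_Icc] at hτ
      simp only [hhdef]
      set E : ℝ := Real.exp (-lam * (t - τ)) with hE
      have hD : 0 < 1 - ξ * E := hdenpos (t - τ) (by linarith [hτ.2])
      field_simp
      ring
    have hcomb : (∫ τ in (0:ℝ)..t, n τ * (1 - lam / (1 - ξ * Real.exp (-lam * (t - τ)))))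
        - a t + lam * a t = -∫ τ in (0:ℝ)..t, n τ * h (t - τ) := by
      rw [ha t]
      rw [← intervalIntegral.integral_const_mul lam n, ← intervalIntegral.integral_sub hI1 (hnint t ht.le),
        ← intervalIntegral.integral_add (hI1.sub (hnint t ht.le)) ((hnint t ht.le).const_mul lam),
        ← intervalIntegral.integral_neg]
      exact intervalIntegral.integral_congr hsplit
    -- change of variables
    have hcv : ∫ u in (0:ℝ)..t, n (t - u) * h u = ∫ τ in (0:ℝ)..t, n τ * h (t - τ) := by
      have hc := intervalIntegral.integral_comp_sub_left (a := 0) (b := t)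
        (fun τ : ℝ => n τ * h (t - τ)) t
      simp only [sub_sub_cancel, sub_zero, sub_self] at hc
      exact hc
    -- from Ioi to the interval
    have hIoi : (∫ u in Set.Ioi (0:ℝ), n (t - u) / n t * h u)
        = ∫ u in (0:ℝ)..t, n (t - u) / n t * h u := by
      have hvan : ∀ u ∈ Set.Ioi (0:ℝ), n (t - u) / n t * h u
          = Set.indicator (Set.Ioc 0 t) (fun u => n (t - u) / n t * h u) u := by
        intro u hu
        by_cases hut : u ≤ t
        · rw [Set.indicator_of_mem (Set.mem_Ioc.mpr ⟨hu, hut⟩)]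
        · push_neg at hut
          rw [Set.indicator_of_notMem (fun hmem => (not_le.2 hut) hmem.2),
            hzero (t - u) (by linarith), zero_div, zero_mul]
      rw [MeasureTheory.setIntegral_congr_fun measurableSet_Ioi hvan,
        MeasureTheory.integral_indicator measurableSet_Ioc,
        MeasureTheory.Measure.restrict_restrict measurableSet_Ioc,
        Set.inter_eq_self_of_subset_left Set.Ioc_subset_Ioi_self,
        intervalIntegral.integral_of_le ht.le]
    have hconst : ∫ u in (0:ℝ)..t, n (t - u) / n t * h u
        = (1 / n t) * ∫ u in (0:ℝ)..t, n (t - u) * h u := by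
      rw [← intervalIntegral.integral_const_mul]
      refine intervalIntegral.integral_congr fun u _ => ?_
      ring
    calc θ * (a t / n t) * (Y t - 1) + θ * lam * a t / n t
        = (θ / n t) * ((a t * Y t) - a t + lam * a t) := by ring
      _ = (θ / n t) * (-∫ τ in (0:ℝ)..t, n τ * h (t - τ)) := by rw [hYt, hcomb]
      _ = -θ * ((1 / n t) * ∫ u in (0:ℝ)..t, n (t - u) * h u) := by rw [hcv]; ring
      _ = -θ * ∫ u in Set.Ioi (0:ℝ), n (t - u) / n t * h u := by rw [hIoi, hconst]
  -- final assembly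
  have hlimexp : Tendsto (fun t : ℝ => θ * (a t / n t) * (Y t - 1) + θ * lam * a t / n t)
      atTop (nhds (-θ * ∑' k : ℕ, ξ ^ (k + 1) / (γ + (k + 1)))) := by
    have h1 := hI.const_mul (-θ)
    have h2 : (∫ u in Set.Ioi (0:ℝ), Real.exp (-δ * u) * h u)
        = ∑' k : ℕ, ξ ^ (k + 1) / (γ + (k + 1)) := by
      simp only [hhdef]
      exact series_integral hlam_pos hδ0 hξ hγ
    rw [h2] at h1
    refine h1.congr' ?_
    filter_upwards [eventually_ge_atTop (1:ℝ)] with t ht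
    exact (hEq t ht).symm
  have hfin := (Real.continuous_exp.tendsto _).comp hlimexp
  refine hfin.congr fun t => ?_
  simp only [Function.comp]
  rw [hB t, ← Real.exp_add]
end

section
/- Let β ∈ [0,1), λ = 1−β, let m ≥ 2 be an integer, and let n satisfy Assumption 1 with δ* < (m−1)λ. Define M^stoch(t) = (1/a_t)∫_0^t n_τ·μ_m(t−τ) dτ, where μ_m(u) = (1−β S_u^{−1})(S_u−1)·Σ_{j=1}^∞ j^m S_u^{−j} is the m-th moment of the birth–death process, and the deterministic approximation M^det(t) = (1/a_t)∫_0^t n_τ·e^{mλ(t−τ)} dτ. Then M^stoch(t)/M^det(t) − m!/λ^{m−1} = O(e^{−λt}) as t → ∞. -/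
open Filter Real intervalIntegral Asymptotics

/-- The `m`-th moment of the birth–death process:
`E(Z_u^m) = (1 − β S_u⁻¹)(S_u − 1) Σ_{j≥1} j^m S_u^{−j}`. -/
noncomputable def birthDeathMoment (β : ℝ) (m : ℕ) (u : ℝ) : ℝ :=
  (1 - β * (birthDeathS β u)⁻¹) * (birthDeathS β u - 1) *
    ∑' j : ℕ, (j : ℝ) ^ m * ((birthDeathS β u)⁻¹) ^ j


open MeasureTheory

set_option maxHeartbeats 1000000

lemma aux_pow_le_descFactorial (i : ℕ) : ∀ m : ℕ, (i+1)^m ≤ (i+m).descFactorial m := by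
  intro m
  induction m with
  | zero => simp
  | succ m ih =>
    have h1 : (i + (m+1)).descFactorial (m+1) = (i+1) * (i+m+1).descFactorial m := by
      rw [Nat.descFactorial_succ]
      congr 1
      omega
    rw [h1, pow_succ, mul_comm]
    exact Nat.mul_le_mul le_rfl (le_trans ih (Nat.descFactorial_le m (by omega)))

lemma tsum_pow_mul_geom_upper {x : ℝ} (hx0 : 0 ≤ x) (hx1 : x < 1) (m : ℕ) (hm : 1 ≤ m) :
    ∑' j : ℕ, (j:ℝ)^m * x^j ≤ (Nat.factorial m : ℝ) * x / (1-x)^(m+1) := by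
  have hxn : ‖x‖ < 1 := by rwa [Real.norm_eq_abs, abs_of_nonneg hx0]
  have hsum : Summable (fun j : ℕ => (j:ℝ)^m * x^j) :=
    summable_pow_mul_geometric_of_norm_lt_one m hxn
  have hsum2 : Summable (fun i : ℕ => ((i+m).choose m : ℝ) * x^i) :=
    summable_choose_mul_geometric_of_norm_lt_one m hxn
  rw [Summable.tsum_eq_zero_add hsum]
  have h0 : ((0:ℕ):ℝ)^m * x^0 = 0 := by
    simp [zero_pow (by omega : m ≠ 0)]
  rw [h0, zero_add]
  have key : ∀ i : ℕ, ((i+1 : ℕ):ℝ)^m * x^(i+1) ≤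
      ((Nat.factorial m : ℝ) * ((i+m).choose m : ℝ) * x) * x^i := by
    intro i
    have h1 : ((i+1 : ℕ):ℝ)^m ≤ (Nat.factorial m : ℝ) * ((i+m).choose m : ℝ) := by
      have := aux_pow_le_descFactorial i m
      rw [Nat.descFactorial_eq_factorial_mul_choose] at this
      calc ((i+1 : ℕ):ℝ)^m = (((i+1)^m : ℕ) : ℝ) := by push_cast; ring
        _ ≤ ((Nat.factorial m * (i+m).choose m : ℕ) : ℝ) := by exact_mod_cast Nat.cast_le.2 this
        _ = (Nat.factorial m : ℝ) * ((i+m).choose m : ℝ) := by push_cast; ring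
    calc ((i+1 : ℕ):ℝ)^m * x^(i+1) ≤ ((Nat.factorial m : ℝ) * ((i+m).choose m : ℝ)) * x^(i+1) := by
          apply mul_le_mul_of_nonneg_right h1 (pow_nonneg hx0 _)
      _ = ((Nat.factorial m : ℝ) * ((i+m).choose m : ℝ) * x) * x^i := by ring
  have hsum3 : Summable (fun i : ℕ => ((Nat.factorial m : ℝ) * ((i+m).choose m : ℝ) * x) * x^i) := by
    have := (hsum2.mul_left ((Nat.factorial m : ℝ))).mul_left x
    refine this.congr fun i => ?_
    ring
  calc (∑' i : ℕ, ((i+1 : ℕ):ℝ)^m * x^(i+1))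
      ≤ ∑' i : ℕ, ((Nat.factorial m : ℝ) * ((i+m).choose m : ℝ) * x) * x^i := by
        apply Summable.tsum_le_tsum key ?_ hsum3
        · exact (summable_nat_add_iff 1).2 hsum
    _ = (Nat.factorial m : ℝ) * x * ∑' i : ℕ, ((i+m).choose m : ℝ) * x^i := by
        rw [← tsum_mul_left]
        congr 1 with i
        ring
    _ = (Nat.factorial m : ℝ) * x / (1-x)^(m+1) := by
        rw [tsum_choose_mul_geometric_of_norm_lt_one m hxn]
        ring

lemma tsum_pow_mul_geom_lower {x : ℝ} (hx0 : 0 ≤ x) (hx1 : x < 1) (m : ℕ) :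
    (Nat.factorial m : ℝ) * x^m / (1-x)^(m+1) ≤ ∑' j : ℕ, (j:ℝ)^m * x^j := by
  have hxn : ‖x‖ < 1 := by rwa [Real.norm_eq_abs, abs_of_nonneg hx0]
  have hsumg : Summable (fun j : ℕ => (j:ℝ)^m * x^j) :=
    summable_pow_mul_geometric_of_norm_lt_one m hxn
  have hsumc : Summable (fun i : ℕ => ((i+m).choose m : ℝ) * x^i) :=
    summable_choose_mul_geometric_of_norm_lt_one m hxn
  have hsumf : Summable (fun i : ℕ => ((Nat.factorial m : ℝ) * ((i+m).choose m : ℝ) * x^m) * x^i) := by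
    have := (hsumc.mul_left ((Nat.factorial m : ℝ))).mul_left (x^m)
    refine this.congr fun i => ?_; ring
  have heq : (Nat.factorial m : ℝ) * x^m / (1-x)^(m+1)
      = ∑' i : ℕ, ((Nat.factorial m : ℝ) * ((i+m).choose m : ℝ) * x^m) * x^i := by
    have h1 : ∑' i : ℕ, ((Nat.factorial m : ℝ) * ((i+m).choose m : ℝ) * x^m) * x^i
        = ((Nat.factorial m : ℝ) * x^m) * ∑' i : ℕ, ((i+m).choose m : ℝ) * x^i := by
      rw [← tsum_mul_left]
      congr 1 with i; ring
    rw [h1, tsum_choose_mul_geometric_of_norm_lt_one m hxn]; ring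
  rw [heq]
  apply Summable.tsum_le_tsum_of_inj (fun i : ℕ => i + m) (add_left_injective m)
    (fun c _ => mul_nonneg (pow_nonneg (Nat.cast_nonneg c) m) (pow_nonneg hx0 c))
    ?_ hsumf hsumg
  intro i
  have h1 : (Nat.factorial m : ℝ) * ((i+m).choose m : ℝ) = ((i+m).descFactorial m : ℝ) := by
    rw [Nat.descFactorial_eq_factorial_mul_choose]; push_cast; ring
  have h2 : ((i+m).descFactorial m : ℝ) ≤ ((i+m):ℝ)^m := by
    exact_mod_cast Nat.cast_le.2 (Nat.descFactorial_le_pow (i+m) m)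
  calc (Nat.factorial m : ℝ) * ((i+m).choose m : ℝ) * x^m * x^i
      = ((i+m).descFactorial m : ℝ) * x^(i+m) := by rw [h1, mul_assoc, ← pow_add, Nat.add_comm m i]
    _ ≤ ((i+m):ℝ)^m * x^(i+m) := by
        apply mul_le_mul_of_nonneg_right h2 (pow_nonneg hx0 _)
    _ = ((i+m : ℕ):ℝ)^m * x^(i+m) := by push_cast; ring

lemma birthDeathMoment_zero (β : ℝ) (m : ℕ) (hm : 2 ≤ m) : birthDeathMoment β m 0 = 0 := by
  have hS : birthDeathS β 0 = 0 := by simp [birthDeathS]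
  rw [birthDeathMoment, hS]
  have : ∀ j : ℕ, (j : ℝ)^m * ((0:ℝ)⁻¹)^j = 0 := by
    intro j
    rw [inv_zero]
    cases j with
    | zero => simp [zero_pow (by omega : m ≠ 0)]
    | succ k => simp
  rw [tsum_congr this]
  simp

lemma birthDeathMoment_bounds (β : ℝ) (hβ0 : 0 ≤ β) (hβ1 : β < 1) (m : ℕ) (hm : 2 ≤ m)
    (u : ℝ) (hu : 0 ≤ u) :
    0 ≤ birthDeathMoment β m u ∧
    birthDeathMoment β m u ≤ (Nat.factorial m : ℝ)/(1-β)^(m-1) * Real.exp ((m:ℝ)*(1-β)*u) ∧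
    (Nat.factorial m : ℝ)/(1-β)^(m-1) * Real.exp ((m:ℝ)*(1-β)*u) - birthDeathMoment β m u
      ≤ (Nat.factorial m : ℝ)/(1-β)^(m-1) * ((m:ℝ)-1) * Real.exp (((m:ℝ)-1)*(1-β)*u) := by
  have hlam0 : 0 < 1 - β := by linarith
  have hD0 : 0 ≤ (Nat.factorial m : ℝ)/(1-β)^(m-1) :=
    div_nonneg (Nat.cast_nonneg _) (pow_nonneg hlam0.le _)
  obtain (rfl | hu') : u = 0 ∨ 0 < u := hu.eq_or_lt.imp Eq.symm id
  · rw [birthDeathMoment_zero β m hm]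
    have h1 : Real.exp ((m:ℝ)*(1-β)*0) = 1 := by simp
    have h2 : Real.exp (((m:ℝ)-1)*(1-β)*0) = 1 := by simp
    rw [h1, h2]
    refine ⟨le_rfl, by simpa using hD0, ?_⟩
    have hm2 : (1:ℝ) ≤ (m:ℝ) - 1 := by
      have : (2:ℝ) ≤ (m:ℝ) := by exact_mod_cast hm
      linarith
    nlinarith
  -- main case u > 0
  set q : ℝ := Real.exp (-(1-β) * u) with hq
  have hq0 : 0 < q := Real.exp_pos _
  have hq1 : q < 1 := by
    rw [hq]; apply Real.exp_lt_one_iff.2; nlinarith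
  have hd1 : 0 < 1 - q := by linarith
  have hd2 : 0 < 1 - β * q := by nlinarith
  have hSval : birthDeathS β u = (1 - β * q) / (1 - q) := by rw [birthDeathS]
  set x : ℝ := (1 - q) / (1 - β * q) with hxdef
  have hxinv : (birthDeathS β u)⁻¹ = x := by rw [hSval, hxdef, inv_div]
  have hx0 : 0 < x := div_pos hd1 hd2
  have hx1 : x < 1 := by
    rw [hxdef, div_lt_one hd2]; nlinarith
  have hP1 : 1 - β * x = (1-β) / (1 - β * q) := by
    rw [hxdef]; field_simp; ring
  have hP2 : birthDeathS β u - 1 = (1-β) * q / (1 - q) := by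
    rw [hSval]; field_simp; ring
  have h1x : 1 - x = (1-β) * q / (1 - β * q) := by
    rw [hxdef, one_sub_div hd2.ne']; ring
  set T : ℝ := ∑' j : ℕ, (j : ℝ)^m * x^j with hT
  have hmoment : birthDeathMoment β m u = ((1-β) / (1 - β * q)) * ((1-β) * q / (1 - q)) * T := by
    rw [birthDeathMoment, hxinv, hP1, hP2]
  have hT0 : 0 ≤ T := tsum_nonneg fun j =>
    mul_nonneg (pow_nonneg (Nat.cast_nonneg _) _) (pow_nonneg hx0.le _)
  have hpre0 : 0 ≤ ((1-β) / (1 - β * q)) * ((1-β) * q / (1 - q)) :=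
    mul_nonneg (div_nonneg hlam0.le hd2.le) (div_nonneg (by positivity) hd1.le)
  have hEm : Real.exp ((m:ℝ)*(1-β)*u) = (q⁻¹)^m := by
    rw [hq, ← Real.exp_neg, ← Real.exp_nat_mul]; ring_nf
  have hEm1 : Real.exp (((m:ℝ)-1)*(1-β)*u) = (q⁻¹)^(m-1) := by
    rw [hq, ← Real.exp_neg, ← Real.exp_nat_mul]
    congr 1
    have h1 : ((m-1 : ℕ):ℝ) = (m:ℝ) - 1 := by
      have : 1 ≤ m := by omega
      push_cast [this]; ring
    rw [h1]; ring
  obtain ⟨k, rfl⟩ : ∃ k, m = k + 2 := ⟨m - 2, by omega⟩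
  have hmsub : (k + 2) - 1 = k + 1 := rfl
  have hpowx : (1 - x)^(k+2+1) = (1-β)^(k+3) * q^(k+3) / (1-β*q)^(k+3) := by
    rw [h1x, div_pow, mul_pow]
  constructor
  · rw [hmoment]; exact mul_nonneg hpre0 hT0
  constructor
  · -- upper bound
    have hTu := tsum_pow_mul_geom_upper hx0.le hx1 (k+2) (by omega)
    rw [← hT] at hTu
    have step1 : birthDeathMoment β (k+2) u ≤
        ((1-β) / (1 - β * q)) * ((1-β) * q / (1 - q)) *
          ((Nat.factorial (k+2) : ℝ) * x / (1-x)^(k+2+1)) := by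
      rw [hmoment]
      exact mul_le_mul_of_nonneg_left hTu hpre0
    refine step1.trans ?_
    have hval : ((1-β) / (1 - β * q)) * ((1-β) * q / (1 - q)) *
          ((Nat.factorial (k+2) : ℝ) * x / (1-x)^(k+2+1))
        = ((Nat.factorial (k+2) : ℝ)/(1-β)^(k+1) * (q⁻¹)^(k+2)) * (1-β*q)^(k+1) := by
      rw [hpowx, hxdef, inv_pow]
      field_simp
      ring
    rw [hval, hEm, hmsub]
    have hle1 : (1-β*q)^(k+1) ≤ 1 := by
      apply pow_le_one₀ hd2.le; nlinarith
    have hA0 : 0 ≤ (Nat.factorial (k+2) : ℝ)/(1-β)^(k+1) * (q⁻¹)^(k+2) :=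
      mul_nonneg hD0 (pow_nonneg (inv_nonneg.2 hq0.le) _)
    exact mul_le_of_le_one_right hA0 hle1
  · -- error bound
    have hTl := tsum_pow_mul_geom_lower hx0.le hx1 (k+2)
    rw [← hT] at hTl
    have step1 : ((1-β) / (1 - β * q)) * ((1-β) * q / (1 - q)) *
          ((Nat.factorial (k+2) : ℝ) * x^(k+2) / (1-x)^(k+2+1))
        ≤ birthDeathMoment β (k+2) u := by
      rw [hmoment]
      exact mul_le_mul_of_nonneg_left hTl hpre0
    have hval : ((1-β) / (1 - β * q)) * ((1-β) * q / (1 - q)) *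
          ((Nat.factorial (k+2) : ℝ) * x^(k+2) / (1-x)^(k+2+1))
        = ((Nat.factorial (k+2) : ℝ)/(1-β)^(k+1) * (q⁻¹)^(k+2)) * (1-q)^(k+1) := by
      rw [hpowx, hxdef, div_pow, inv_pow]
      field_simp
      ring
    rw [hval] at step1
    have hbern : 1 - ((k:ℝ)+1) * q ≤ (1-q)^(k+1) := by
      have h := one_add_mul_le_pow (a := -q) (by linarith) (k+1)
      push_cast at h ⊢
      calc (1:ℝ) - ((k:ℝ)+1)*q = 1 + ((k:ℝ)+1)*(-q) := by ring
        _ ≤ (1 + -q)^(k+1) := h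
        _ = (1-q)^(k+1) := by ring_nf
    set A : ℝ := (Nat.factorial (k+2) : ℝ)/(1-β)^(k+1) * (q⁻¹)^(k+2) with hA
    have hA0 : 0 ≤ A :=
      mul_nonneg hD0 (pow_nonneg (inv_nonneg.2 hq0.le) _)
    have step2 : A * (1 - ((k:ℝ)+1)*q) ≤ birthDeathMoment β (k+2) u :=
      le_trans (mul_le_mul_of_nonneg_left hbern hA0) step1
    have hqE : (q⁻¹)^(k+2) * q = (q⁻¹)^(k+1) := by
      rw [pow_succ, mul_assoc, inv_mul_cancel₀ hq0.ne', mul_one]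
    rw [hEm, hEm1, hmsub]
    have hkey : (Nat.factorial (k+2) : ℝ)/(1-β)^(k+1) * (q⁻¹)^(k+2)
        - birthDeathMoment β (k+2) u ≤ A * (((k:ℝ)+1)*q) := by
      have : A * (1 - ((k:ℝ)+1)*q) = A - A * (((k:ℝ)+1)*q) := by ring
      rw [this] at step2
      rw [hA] at step2 ⊢
      linarith
    refine hkey.trans ?_
    have : A * (((k:ℝ)+1)*q) = (Nat.factorial (k+2) : ℝ)/(1-β)^(k+1) * ((k:ℝ)+1)
        * ((q⁻¹)^(k+2) * q) := by rw [hA]; ring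
    rw [this, hqE]
    have hc : ((k+2:ℕ):ℝ) - 1 = (k:ℝ)+1 := by push_cast; ring
    rw [hc]

-- continuity of y ↦ ∑' j, j^m y^j on (-1,1)
lemma contAt_tsum_pow_mul_geom (m : ℕ) {y : ℝ} (hy : |y| < 1) :
    ContinuousAt (fun y : ℝ => ∑' j : ℕ, (j:ℝ)^m * y^j) y := by
  set r : ℝ := (1 + |y|)/2 with hr
  have hy0 : 0 ≤ |y| := abs_nonneg y
  have hr1 : r < 1 := by rw [hr]; linarith
  have hyr : |y| < r := by rw [hr]; linarith
  have hr0 : 0 ≤ r := by rw [hr]; linarith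
  have hsum : Summable (fun j : ℕ => (j:ℝ)^m * r^j) :=
    summable_pow_mul_geometric_of_norm_lt_one m (by rwa [Real.norm_eq_abs, abs_of_nonneg hr0])
  have hcont : ContinuousOn (fun z : ℝ => ∑' j : ℕ, (j:ℝ)^m * z^j) (Set.Ioo (-r) r) := by
    apply continuousOn_tsum (fun j => (Continuous.continuousOn (by continuity))) hsum
    intro j z hz
    rw [Real.norm_eq_abs, abs_mul, abs_pow, abs_pow]
    have hz1 : |z| ≤ r := by
      rw [abs_le]; exact ⟨(hz.1).le, hz.2.le⟩
    have : |(j:ℝ)| = (j:ℝ) := abs_of_nonneg (Nat.cast_nonneg j)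
    rw [this]
    exact mul_le_mul_of_nonneg_left (pow_le_pow_left₀ (abs_nonneg z) hz1 j)
      (pow_nonneg (Nat.cast_nonneg j) m)
  apply hcont.continuousAt
  apply Ioo_mem_nhds
  · cases abs_lt.1 hyr with | intro h1 h2 => exact h1
  · exact (abs_lt.1 hyr).2

lemma birthDeathS_cont (β : ℝ) (hβ0 : 0 ≤ β) (hβ1 : β < 1) :
    ContinuousOn (birthDeathS β) (Set.Ioi 0) := by
  apply ContinuousOn.div
  · exact (by continuity : Continuous fun u : ℝ => 1 - β * Real.exp (-(1-β)*u)).continuousOn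
  · exact (by continuity : Continuous fun u : ℝ => 1 - Real.exp (-(1-β)*u)).continuousOn
  · intro u hu
    have : Real.exp (-(1-β)*u) < 1 := by
      apply Real.exp_lt_one_iff.2
      have : (0:ℝ) < u := hu
      nlinarith
    linarith

lemma birthDeathS_inv_mem (β : ℝ) (hβ0 : 0 ≤ β) (hβ1 : β < 1) {u : ℝ} (hu : 0 < u) :
    (birthDeathS β u)⁻¹ ∈ Set.Ioo (0:ℝ) 1 := by
  have hq0 : 0 < Real.exp (-(1-β)*u) := Real.exp_pos _
  have hq1 : Real.exp (-(1-β)*u) < 1 := by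
    apply Real.exp_lt_one_iff.2; nlinarith
  set q := Real.exp (-(1-β)*u)
  have hd1 : 0 < 1 - q := by linarith
  have hd2 : 0 < 1 - β * q := by nlinarith
  have hSval : birthDeathS β u = (1 - β * q) / (1 - q) := rfl
  rw [hSval, inv_div]
  constructor
  · exact div_pos hd1 hd2
  · rw [div_lt_one hd2]; nlinarith

lemma birthDeathMoment_contOn (β : ℝ) (hβ0 : 0 ≤ β) (hβ1 : β < 1) (m : ℕ) :
    ContinuousOn (birthDeathMoment β m) (Set.Ioi 0) := by
  have hS := birthDeathS_cont β hβ0 hβ1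
  have hSne : ∀ u ∈ Set.Ioi (0:ℝ), birthDeathS β u ≠ 0 := by
    intro u hu
    have := birthDeathS_inv_mem β hβ0 hβ1 (Set.mem_Ioi.1 hu)
    intro h
    rw [h, inv_zero] at this
    exact lt_irrefl 0 this.1
  have hxc : ContinuousOn (fun u => (birthDeathS β u)⁻¹) (Set.Ioi 0) := hS.inv₀ hSne
  apply ContinuousOn.mul
  · apply ContinuousOn.mul
    · exact (continuousOn_const.sub (continuousOn_const.mul hxc))
    · exact hS.sub continuousOn_const
  · intro u hu
    have hmem := birthDeathS_inv_mem β hβ0 hβ1 (Set.mem_Ioi.1 hu)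
    have habs : |(birthDeathS β u)⁻¹| < 1 := by
      rw [abs_of_nonneg hmem.1.le]; exact hmem.2
    have h2 : ContinuousWithinAt ((fun y : ℝ => ∑' j : ℕ, (j:ℝ)^m * y^j) ∘
        (fun u => (birthDeathS β u)⁻¹)) (Set.Ioi 0) u :=
      ContinuousAt.comp_continuousWithinAt (contAt_tsum_pow_mul_geom m habs)
        (hxc.continuousWithinAt hu)
    exact h2

lemma integral_exp_neg_mul (c T t : ℝ) (hc : c ≠ 0) :
    ∫ τ in T..t, Real.exp (-c*τ) = (Real.exp (-c*T) - Real.exp (-c*t))/c := by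
  have hd : ∀ x ∈ Set.uIcc T t, HasDerivAt (fun τ => -Real.exp (-c*τ)/c) (Real.exp (-c*x)) x := by
    intro x _
    have h1 : HasDerivAt (fun τ : ℝ => -c*τ) (-c) x := by
      simpa using (hasDerivAt_id x).const_mul (-c)
    have h2 : HasDerivAt (fun τ : ℝ => Real.exp (-c*τ)) (Real.exp (-c*x) * (-c)) x :=
      (Real.hasDerivAt_exp _).comp x h1
    have h3 := (h2.neg).div_const c
    refine h3.congr_deriv ?_
    field_simp
  rw [intervalIntegral.integral_eq_sub_of_hasDerivAt hd
    ((Real.continuous_exp.comp (by continuity)).intervalIntegrable T t)]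
  ring


lemma moment_integrand_intInt (β : ℝ) (hβ0 : 0 ≤ β) (hβ1 : β < 1) (m : ℕ) (hm : 2 ≤ m)
    (n : ℝ → ℝ) (hcont : ContinuousOn n (Set.Ici 0))
    (hnn : ∀ τ : ℝ, 0 ≤ τ → 0 ≤ n τ)
    (hmono : ∀ ⦃s τ : ℝ⦄, 0 ≤ s → s ≤ τ → n s ≤ n τ)
    (t : ℝ) (ht : 0 ≤ t) :
    IntervalIntegrable (fun τ => n τ * birthDeathMoment β m (t - τ)) volume 0 t := by
  rw [intervalIntegrable_iff, Set.uIoc_of_le ht, integrableOn_Ioc_iff_integrableOn_Ioo]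
  have hgc : ContinuousOn (fun τ => n τ * birthDeathMoment β m (t - τ)) (Set.Ioo 0 t) := by
    apply ContinuousOn.mul
    · exact hcont.mono (fun x hx => le_of_lt hx.1)
    · have hsub : ContinuousOn (fun τ : ℝ => t - τ) (Set.Ioo 0 t) :=
        (continuous_const.sub continuous_id).continuousOn
      apply ContinuousOn.comp (birthDeathMoment_contOn β hβ0 hβ1 m) hsub
      intro τ hτ
      simp only [Set.mem_Ioo] at hτ
      simpa using (by linarith [hτ.2] : (0:ℝ) < t - τ)
  set B : ℝ := n t * ((Nat.factorial m : ℝ)/(1-β)^(m-1) * Real.exp ((m:ℝ)*(1-β)*t)) with hB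
  apply MeasureTheory.Integrable.mono' (g := fun _ => B)
    (MeasureTheory.integrableOn_const measure_Ioo_lt_top.ne)
    (hgc.aestronglyMeasurable measurableSet_Ioo)
  filter_upwards [MeasureTheory.ae_restrict_mem measurableSet_Ioo] with τ hτ
  obtain ⟨hμ0, hμu, -⟩ := birthDeathMoment_bounds β hβ0 hβ1 m hm (t - τ) (by linarith [hτ.2])
  have hn0 : 0 ≤ n τ := hnn τ hτ.1.le
  have hprod : 0 ≤ n τ * birthDeathMoment β m (t - τ) := mul_nonneg hn0 hμ0
  rw [Real.norm_eq_abs, abs_of_nonneg hprod, hB]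
  have hD0 : 0 ≤ (Nat.factorial m : ℝ)/(1-β)^(m-1) :=
    div_nonneg (Nat.cast_nonneg _) (pow_nonneg (by linarith) _)
  have hexp : Real.exp ((m:ℝ)*(1-β)*(t-τ)) ≤ Real.exp ((m:ℝ)*(1-β)*t) := by
    apply Real.exp_le_exp.2
    have hml : 0 ≤ (m:ℝ)*(1-β) := mul_nonneg (Nat.cast_nonneg _) (by linarith)
    nlinarith [hτ.1]
  apply mul_le_mul (hmono hτ.1.le hτ.2.le)
    (hμu.trans (mul_le_mul_of_nonneg_left hexp hD0)) hμ0 (hnn t ht)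

/-- Error of the deterministic approximation for the `m`-th moment of the clone size:
if `δ* < (m−1)λ`, then `M^stoch(t)/M^det(t) − m!/λ^{m−1} = O(e^{−λt})` as `t → ∞`. -/
theorem stochastic_vs_deterministic_moments
    (β : ℝ) (hβ : β ∈ Set.Ico (0 : ℝ) 1) (lam : ℝ) (hlam : lam = 1 - β)
    (m : ℕ) (hm : 2 ≤ m)
    (n : ℝ → ℝ) (hn : Assumption1 n) (δ : ℝ)
    (hδlim : Filter.Tendsto (fun t : ℝ => Real.log (n t) / t) Filter.atTop (nhds δ))
    (hδ : δ < (m - 1 : ℝ) * lam)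
    (a Mstoch Mdet : ℝ → ℝ)
    (ha : ∀ t : ℝ, a t = ∫ τ in (0:ℝ)..t, n τ)
    (hMstoch : ∀ t : ℝ,
      Mstoch t = (1 / a t) * ∫ τ in (0:ℝ)..t, n τ * birthDeathMoment β m (t - τ))
    (hMdet : ∀ t : ℝ,
      Mdet t = (1 / a t) * ∫ τ in (0:ℝ)..t, n τ * Real.exp ((m : ℝ) * lam * (t - τ))) :
    (fun t : ℝ => Mstoch t / Mdet t - (Nat.factorial m : ℝ) / lam ^ (m - 1))
      =O[Filter.atTop] (fun t : ℝ => Real.exp (-lam * t)) := by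
  obtain ⟨hβ0, hβ1⟩ := hβ
  subst hlam
  obtain ⟨hzero, hcont0, hrc, hpos, hmono0, -⟩ := hn
  have hlam0 : (0:ℝ) < 1 - β := by linarith
  set D : ℝ := (Nat.factorial m : ℝ) / (1-β)^(m-1) with hD
  have hD0 : 0 ≤ D := div_nonneg (Nat.cast_nonneg _) (pow_nonneg hlam0.le _)
  have hm1 : (1:ℝ) ≤ (m:ℝ) - 1 := by
    have : (2:ℝ) ≤ (m:ℝ) := by exact_mod_cast hm
    linarith
  -- continuity of n on Ici 0
  have hcont : ContinuousOn n (Set.Ici 0) := by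
    intro x hx
    rcases eq_or_lt_of_le (Set.mem_Ici.1 hx) with h | h
    · subst h
      have hIci : Set.Ici (0:ℝ) = insert 0 (Set.Ioi 0) := Set.Ioi_insert.symm
      rw [ContinuousWithinAt, hIci, nhdsWithin_insert]
      exact Filter.Tendsto.sup (tendsto_pure_nhds n 0) hrc
    · exact (hcont0.continuousAt (Ioi_mem_nhds h)).continuousWithinAt
  have hn00 : 0 ≤ n 0 :=
    ge_of_tendsto hrc (eventually_nhdsWithin_of_forall fun τ hτ => (hpos τ hτ).le)
  have hmonol : ∀ τ : ℝ, 0 < τ → n 0 ≤ n τ := by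
    intro τ hτ
    apply le_of_tendsto hrc
    filter_upwards [Ioo_mem_nhdsGT hτ] with x hx
    exact hmono0 (Set.mem_Ioi.2 hx.1) (Set.mem_Ioi.2 hτ) hx.2.le
  have hmono : ∀ ⦃s τ : ℝ⦄, 0 ≤ s → s ≤ τ → n s ≤ n τ := by
    intro s τ hs hst
    rcases eq_or_lt_of_le hs with h | h
    · subst h
      rcases eq_or_lt_of_le hst with h2 | h2
      · rw [← h2]
      · exact hmonol τ h2
    · exact hmono0 (Set.mem_Ioi.2 h) (Set.mem_Ioi.2 (lt_of_lt_of_le h hst)) hst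
  have hnn : ∀ τ : ℝ, 0 ≤ τ → 0 ≤ n τ := fun τ hτ => le_trans hn00 (hmono le_rfl hτ)
  -- growth bound
  set ρ : ℝ := (δ + ((m:ℝ)-1)*(1-β))/2 with hρ
  have hρ1 : δ < ρ := by rw [hρ]; linarith
  have hρ2 : ρ < ((m:ℝ)-1)*(1-β) := by rw [hρ]; linarith
  set c₀ : ℝ := ((m:ℝ)-1)*(1-β) - ρ with hc₀def
  have hc₀ : 0 < c₀ := by rw [hc₀def]; linarith
  obtain ⟨T₀, hT₀⟩ := eventually_atTop.1 (hδlim.eventually_lt_const hρ1)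
  set T₁ : ℝ := max T₀ 1 with hT₁def
  have hT₁1 : (1:ℝ) ≤ T₁ := le_max_right _ _
  have hT₁0 : (0:ℝ) ≤ T₁ := by linarith
  have hnρ : ∀ τ, T₁ ≤ τ → n τ ≤ Real.exp (ρ*τ) := by
    intro τ hτ
    have hτ0 : 0 < τ := by linarith
    have h2 : Real.log (n τ) < ρ * τ :=
      (div_lt_iff₀ hτ0).1 (hT₀ τ (le_trans (le_max_left _ _) hτ))
    calc n τ = Real.exp (Real.log (n τ)) := (Real.exp_log (hpos τ hτ0)).symm
      _ ≤ Real.exp (ρ*τ) := Real.exp_le_exp.2 h2.le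
  -- integrability helpers
  have hIexp : ∀ (c al bl : ℝ), 0 ≤ al → 0 ≤ bl →
      IntervalIntegrable (fun τ => n τ * Real.exp (c*τ)) volume al bl := by
    intro c al bl h1 h2
    apply ContinuousOn.intervalIntegrable
    have hsub : Set.uIcc al bl ⊆ Set.Ici 0 := by
      intro x hx
      rw [Set.uIcc] at hx
      exact Set.mem_Ici.2 (le_trans (le_inf h1 h2) hx.1)
    exact (hcont.mono hsub).mul (Real.continuous_exp.comp (by continuity)).continuousOn
  have hIn : ∀ (al bl : ℝ), 0 ≤ al → 0 ≤ bl → IntervalIntegrable n volume al bl := by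
    intro al bl h1 h2
    apply ContinuousOn.intervalIntegrable
    apply hcont.mono
    intro x hx
    rw [Set.uIcc] at hx
    exact Set.mem_Ici.2 (le_trans (le_inf h1 h2) hx.1)
  -- kernel constant K
  set A : ℝ := ∫ τ in (0:ℝ)..T₁, n τ with hA
  have hA0 : 0 ≤ A := by
    rw [hA]
    apply intervalIntegral.integral_nonneg hT₁0
    intro x hx
    exact hnn x hx.1
  set K : ℝ := A + Real.exp (-c₀*T₁)/c₀ with hK
  have hK0 : 0 ≤ K := by
    rw [hK]
    have := Real.exp_pos (-c₀*T₁)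
    have := div_pos this hc₀
    linarith
  have hKb : ∀ t, T₁ ≤ t →
      (∫ τ in (0:ℝ)..t, n τ * Real.exp (-(((m:ℝ)-1)*(1-β))*τ)) ≤ K := by
    intro t ht
    have ht0 : (0:ℝ) ≤ t := le_trans hT₁0 ht
    have hc0 : (0:ℝ) < ((m:ℝ)-1)*(1-β) := by nlinarith
    have i1 := hIexp (-(((m:ℝ)-1)*(1-β))) 0 T₁ le_rfl hT₁0
    have i2 := hIexp (-(((m:ℝ)-1)*(1-β))) T₁ t hT₁0 ht0
    rw [← intervalIntegral.integral_add_adjacent_intervals i1 i2]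
    have b1 : (∫ τ in (0:ℝ)..T₁, n τ * Real.exp (-(((m:ℝ)-1)*(1-β))*τ)) ≤ A := by
      rw [hA]
      apply intervalIntegral.integral_mono_on hT₁0 i1 (hIn 0 T₁ le_rfl hT₁0)
      intro x hx
      have he : Real.exp (-(((m:ℝ)-1)*(1-β))*x) ≤ 1 :=
        Real.exp_le_one_iff.2 (by nlinarith [hx.1])
      have := hnn x hx.1
      nlinarith
    have b2 : (∫ τ in T₁..t, n τ * Real.exp (-(((m:ℝ)-1)*(1-β))*τ))
        ≤ Real.exp (-c₀*T₁)/c₀ := by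
      have hpt : ∀ x ∈ Set.Icc T₁ t,
          n x * Real.exp (-(((m:ℝ)-1)*(1-β))*x) ≤ Real.exp (-c₀*x) := by
        intro x hx
        calc n x * Real.exp (-(((m:ℝ)-1)*(1-β))*x)
            ≤ Real.exp (ρ*x) * Real.exp (-(((m:ℝ)-1)*(1-β))*x) :=
              mul_le_mul_of_nonneg_right (hnρ x hx.1) (Real.exp_pos _).le
          _ = Real.exp (-c₀*x) := by
              rw [← Real.exp_add]
              congr 1
              rw [hc₀def]; ring
      calc (∫ τ in T₁..t, n τ * Real.exp (-(((m:ℝ)-1)*(1-β))*τ))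
          ≤ ∫ τ in T₁..t, Real.exp (-c₀*τ) := by
            apply intervalIntegral.integral_mono_on ht i2 ?_ hpt
            exact (Real.continuous_exp.comp (by continuity)).intervalIntegrable _ _
        _ = (Real.exp (-c₀*T₁) - Real.exp (-c₀*t))/c₀ := integral_exp_neg_mul c₀ T₁ t hc₀.ne'
        _ ≤ Real.exp (-c₀*T₁)/c₀ :=
            (div_le_div_iff_of_pos_right hc₀).2 (by linarith [Real.exp_pos (-c₀*t)])
    rw [hK]
    exact add_le_add b1 b2
  -- denominator constant
  set cden : ℝ := ∫ τ in (0:ℝ)..1, n τ * Real.exp (-((m:ℝ)*(1-β))*τ) with hcden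
  have hcden0 : 0 < cden := by
    rw [hcden]
    apply intervalIntegral_pos_of_pos_on (hIexp _ 0 1 le_rfl zero_le_one)
    · intro x hx
      exact mul_pos (hpos x hx.1) (Real.exp_pos _)
    · norm_num
  -- main eventual bound
  rw [Asymptotics.isBigO_iff]
  refine ⟨D*((m:ℝ)-1)*K/cden, ?_⟩
  filter_upwards [eventually_ge_atTop T₁] with t ht
  have ht0 : (0:ℝ) < t := by linarith
  have h1t : (1:ℝ) ≤ t := le_trans hT₁1 ht
  -- integrals
  have hfacd : (fun τ => n τ * Real.exp ((m:ℝ)*(1-β)*(t-τ)))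
      = fun τ => Real.exp ((m:ℝ)*(1-β)*t) * (n τ * Real.exp (-((m:ℝ)*(1-β))*τ)) := by
    funext τ
    rw [show (m:ℝ)*(1-β)*(t-τ) = (m:ℝ)*(1-β)*t + (-((m:ℝ)*(1-β))*τ) by ring, Real.exp_add]
    ring
  set Nd' : ℝ := ∫ τ in (0:ℝ)..t, n τ * Real.exp (-((m:ℝ)*(1-β))*τ) with hNd'
  have hNdeq : (∫ τ in (0:ℝ)..t, n τ * Real.exp ((m:ℝ)*(1-β)*(t-τ)))
      = Real.exp ((m:ℝ)*(1-β)*t) * Nd' := by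
    rw [hNd', ← intervalIntegral.integral_const_mul, hfacd]
  have Id : IntervalIntegrable (fun τ => n τ * Real.exp ((m:ℝ)*(1-β)*(t-τ))) volume 0 t := by
    rw [hfacd]
    exact (hIexp (-((m:ℝ)*(1-β))) 0 t le_rfl ht0.le).const_mul _
  have Is : IntervalIntegrable (fun τ => n τ * birthDeathMoment β m (t-τ)) volume 0 t :=
    moment_integrand_intInt β hβ0 hβ1 m hm n hcont hnn hmono t ht0.le
  set Ns : ℝ := ∫ τ in (0:ℝ)..t, n τ * birthDeathMoment β m (t-τ) with hNs
  -- lower bound for Nd'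
  have hNd'low : cden ≤ Nd' := by
    rw [hNd', hcden]
    have i01 := hIexp (-((m:ℝ)*(1-β))) 0 1 le_rfl zero_le_one
    have i1t := hIexp (-((m:ℝ)*(1-β))) 1 t zero_le_one ht0.le
    rw [← intervalIntegral.integral_add_adjacent_intervals i01 i1t]
    have h2 : 0 ≤ ∫ τ in (1:ℝ)..t, n τ * Real.exp (-((m:ℝ)*(1-β))*τ) := by
      apply intervalIntegral.integral_nonneg h1t
      intro x hx
      exact mul_nonneg (hnn x (by linarith [hx.1])) (Real.exp_pos _).le
    linarith
  have hNd'0 : 0 < Nd' := lt_of_lt_of_le hcden0 hNd'low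
  have hNd0 : 0 < Real.exp ((m:ℝ)*(1-β)*t) * Nd' := mul_pos (Real.exp_pos _) hNd'0
  -- moment comparison integrals
  have IDd : IntervalIntegrable (fun τ => n τ * (D * Real.exp ((m:ℝ)*(1-β)*(t-τ)))) volume 0 t := by
    have h := Id.const_mul D
    apply h.congr ?_
    intro τ _
    ring
  have hfac2 : (fun τ => n τ * (D*((m:ℝ)-1) * Real.exp (((m:ℝ)-1)*(1-β)*(t-τ))))
      = fun τ => (D*((m:ℝ)-1) * Real.exp (((m:ℝ)-1)*(1-β)*t))
          * (n τ * Real.exp (-(((m:ℝ)-1)*(1-β))*τ)) := by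
    funext τ
    rw [show ((m:ℝ)-1)*(1-β)*(t-τ) = ((m:ℝ)-1)*(1-β)*t + (-(((m:ℝ)-1)*(1-β))*τ) by ring,
      Real.exp_add]
    ring
  have Ie : IntervalIntegrable
      (fun τ => n τ * (D*((m:ℝ)-1) * Real.exp (((m:ℝ)-1)*(1-β)*(t-τ)))) volume 0 t := by
    rw [hfac2]
    exact (hIexp (-(((m:ℝ)-1)*(1-β))) 0 t le_rfl ht0.le).const_mul _
  -- Ns ≤ D * Nd
  have hNs_le : Ns ≤ D * (Real.exp ((m:ℝ)*(1-β)*t) * Nd') := by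
    rw [hNs]
    calc (∫ τ in (0:ℝ)..t, n τ * birthDeathMoment β m (t-τ))
        ≤ ∫ τ in (0:ℝ)..t, n τ * (D * Real.exp ((m:ℝ)*(1-β)*(t-τ))) := by
          apply intervalIntegral.integral_mono_on ht0.le Is IDd
          intro x hx
          have hmb := birthDeathMoment_bounds β hβ0 hβ1 m hm (t-x) (by linarith [hx.2])
          exact mul_le_mul_of_nonneg_left hmb.2.1 (hnn x hx.1)
      _ = D * (Real.exp ((m:ℝ)*(1-β)*t) * Nd') := by
          rw [← hNdeq, ← intervalIntegral.integral_const_mul]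
          apply intervalIntegral.integral_congr
          intro τ _
          ring
  -- error bound
  have herr : D * (Real.exp ((m:ℝ)*(1-β)*t) * Nd') - Ns
      ≤ D*((m:ℝ)-1) * Real.exp (((m:ℝ)-1)*(1-β)*t) * K := by
    have hDNd : D * (Real.exp ((m:ℝ)*(1-β)*t) * Nd')
        = ∫ τ in (0:ℝ)..t, n τ * (D * Real.exp ((m:ℝ)*(1-β)*(t-τ))) := by
      rw [← hNdeq, ← intervalIntegral.integral_const_mul]
      apply intervalIntegral.integral_congr
      intro τ _
      ring
    rw [hDNd, hNs, ← intervalIntegral.integral_sub IDd Is]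
    calc (∫ τ in (0:ℝ)..t,
          (n τ * (D * Real.exp ((m:ℝ)*(1-β)*(t-τ))) - n τ * birthDeathMoment β m (t-τ)))
        ≤ ∫ τ in (0:ℝ)..t, n τ * (D*((m:ℝ)-1) * Real.exp (((m:ℝ)-1)*(1-β)*(t-τ))) := by
          apply intervalIntegral.integral_mono_on ht0.le (IDd.sub Is) Ie
          intro x hx
          have hmb := birthDeathMoment_bounds β hβ0 hβ1 m hm (t-x) (by linarith [hx.2])
          have h3 := mul_le_mul_of_nonneg_left hmb.2.2 (hnn x hx.1)
          rw [← hD] at h3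
          calc n x * (D * Real.exp ((m:ℝ)*(1-β)*(t-x))) - n x * birthDeathMoment β m (t-x)
              = n x * (D * Real.exp ((m:ℝ)*(1-β)*(t-x)) - birthDeathMoment β m (t-x)) := by ring
            _ ≤ n x * (D * ((m:ℝ)-1) * Real.exp (((m:ℝ)-1)*(1-β)*(t-x))) := h3
            _ = n x * (D*((m:ℝ)-1) * Real.exp (((m:ℝ)-1)*(1-β)*(t-x))) := by ring
      _ = (D*((m:ℝ)-1) * Real.exp (((m:ℝ)-1)*(1-β)*t))
            * ∫ τ in (0:ℝ)..t, n τ * Real.exp (-(((m:ℝ)-1)*(1-β))*τ) := by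
          rw [← intervalIntegral.integral_const_mul, hfac2]
      _ ≤ D*((m:ℝ)-1) * Real.exp (((m:ℝ)-1)*(1-β)*t) * K := by
          apply mul_le_mul_of_nonneg_left (hKb t ht)
          exact mul_nonneg (mul_nonneg hD0 (by linarith)) (Real.exp_pos _).le
  -- ratio
  have hat : 0 < a t := by
    rw [ha t]
    apply intervalIntegral_pos_of_pos_on (hIn 0 t le_rfl ht0.le)
    · intro x hx
      exact hpos x hx.1
    · exact ht0
  have hratio : Mstoch t / Mdet t = Ns / (Real.exp ((m:ℝ)*(1-β)*t) * Nd') := by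
    rw [hMstoch t, hMdet t, hNdeq, ← hNs]
    exact mul_div_mul_left _ _ (by positivity)
  -- final computation
  rw [Real.norm_eq_abs, Real.norm_eq_abs, abs_of_pos (Real.exp_pos _), hratio]
  set Nd : ℝ := Real.exp ((m:ℝ)*(1-β)*t) * Nd' with hNdd
  have hle0 : Ns / Nd - D ≤ 0 := by
    rw [sub_nonpos, div_le_iff₀ hNd0]
    linarith [hNs_le]
  rw [abs_of_nonpos hle0]
  have heq2 : -(Ns / Nd - D) = (D * Nd - Ns)/Nd := by
    field_simp
    ring
  rw [heq2]
  calc (D * Nd - Ns)/Nd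
      ≤ (D*((m:ℝ)-1) * Real.exp (((m:ℝ)-1)*(1-β)*t) * K)
          / (Real.exp ((m:ℝ)*(1-β)*t) * cden) := by
        apply div_le_div₀ ?_ herr (mul_pos (Real.exp_pos _) hcden0) ?_
        · exact mul_nonneg (mul_nonneg (mul_nonneg hD0 (by linarith)) (Real.exp_pos _).le) hK0
        · rw [hNdd]
          exact mul_le_mul_of_nonneg_left hNd'low (Real.exp_pos _).le
    _ = D*((m:ℝ)-1)*K/cden * Real.exp (-(1-β)*t) := by
        rw [show ((m:ℝ)-1)*(1-β)*t = (m:ℝ)*(1-β)*t + (-(1-β)*t) by ring, Real.exp_add]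
        have h1 := (Real.exp_pos ((m:ℝ)*(1-β)*t)).ne'
        field_simp
end
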